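/- arXiv:2404.17868 — 6 statements merged into one kernel-verified Lean document; each statement's English description precedes it below -/
import Mathlib

section
/- Let (Ω, μ) be a probability space, A an invertible N×N real matrix with largest and smallest singular values ρ_max and ρ_min and condition number κ(A) = ρ_max/ρ_min, F : Ω → R^N Bochner integrable, and α* := ω ↦ A⁻¹F(ω). Let S be a nonempty set of Bochner-integrable functions Ω → R^N, let α̂_L ∈ S be a minimizer over S of the population loss L(α) = ∫_Ω |Aα(ω) − F(ω)|₂ dμ(ω), and let α̂_H ∈ S be a minimizer over S of the normal-equation loss H(α) = ∫_Ω |AᵀAα(ω) − AᵀF(ω)|₂ dμ(ω). Then ‖α* − α̂_L‖_{L¹(Ω)} ≤ 3 κ(A)² · inf_{α ∈ S} ‖α − α*‖_{L¹(Ω)}. -/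
open MeasureTheory Matrix

/-- The Euclidean norm on `ℝ^N`. -/
noncomputable def euclNorm {N : ℕ} (x : Fin N → ℝ) : ℝ := Real.sqrt (∑ i, x i ^ 2)

lemma euclNorm_nonneg {N : ℕ} (x : Fin N → ℝ) : 0 ≤ euclNorm x := Real.sqrt_nonneg _

lemma euclNorm_neg {N : ℕ} (x : Fin N → ℝ) : euclNorm (-x) = euclNorm x := by
  simp [euclNorm]

lemma mulVec_dot {N : ℕ} (M : Matrix (Fin N) (Fin N) ℝ) (x : Fin N → ℝ) :
    (M.mulVec x) ⬝ᵥ (M.mulVec x) = x ⬝ᵥ (Mᵀ * M).mulVec x := by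
  conv_rhs => rw [← Matrix.mulVec_mulVec, Matrix.dotProduct_mulVec, Matrix.vecMul_transpose]

lemma sum_sq_eq_dot {N : ℕ} (x : Fin N → ℝ) : ∑ i, x i ^ 2 = x ⬝ᵥ x := by
  simp [dotProduct, sq]

lemma key_quad {N : ℕ} (A : Matrix (Fin N) (Fin N) ℝ) (hAA : (Aᵀ * A).IsHermitian)
    (x : Fin N → ℝ) (lo hi : ℝ) (hlo : ∀ i, lo ≤ hAA.eigenvalues i)
    (hhi : ∀ i, hAA.eigenvalues i ≤ hi) :
    lo * ∑ i, x i ^ 2 ≤ ∑ i, (A.mulVec x) i ^ 2 ∧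
      ∑ i, (A.mulVec x) i ^ 2 ≤ hi * ∑ i, x i ^ 2 := by
  classical
  set U : Matrix (Fin N) (Fin N) ℝ := (hAA.eigenvectorUnitary : Matrix (Fin N) (Fin N) ℝ) with hU
  have hstar : star U = Uᵀ := by
    ext i j; simp [Matrix.star_apply]
  have hUU : U * star U = 1 := (Matrix.mem_unitaryGroup_iff).mp hAA.eigenvectorUnitary.2
  set y : Fin N → ℝ := (star U).mulVec x with hy
  have hyx : ∑ i, y i ^ 2 = ∑ i, x i ^ 2 := by
    rw [sum_sq_eq_dot, sum_sq_eq_dot, hy, mulVec_dot]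
    rw [hstar, Matrix.transpose_transpose, ← hstar, hUU, Matrix.one_mulVec]
  have hAx : ∑ i, (A.mulVec x) i ^ 2 = ∑ i, hAA.eigenvalues i * y i ^ 2 := by
    rw [sum_sq_eq_dot, mulVec_dot]
    conv_lhs => rw [hAA.spectral_theorem, Unitary.conjStarAlgAut_apply]
    rw [← Matrix.mulVec_mulVec, ← Matrix.mulVec_mulVec, Matrix.dotProduct_mulVec,
      ← Matrix.mulVec_transpose, ← hstar, ← hy]
    simp [Matrix.mulVec_diagonal, dotProduct, sq]
    ring_nf
    congr 1; ext i; ring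
  constructor
  · rw [hAx, ← hyx, Finset.mul_sum]
    exact Finset.sum_le_sum fun i _ => mul_le_mul_of_nonneg_right (hlo i) (sq_nonneg _)
  · rw [hAx, ← hyx, Finset.mul_sum]
    exact Finset.sum_le_sum fun i _ => mul_le_mul_of_nonneg_right (hhi i) (sq_nonneg _)

lemma euclNorm_bounds {N : ℕ} (A : Matrix (Fin N) (Fin N) ℝ) (hAA : (Aᵀ * A).IsHermitian)
    (x : Fin N → ℝ) (ρmin ρmax : ℝ) (h0 : 0 ≤ ρmin) (hρmax0 : 0 ≤ ρmax)
    (hlo : ∀ i, ρmin ≤ Real.sqrt (hAA.eigenvalues i))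
    (hhi : ∀ i, Real.sqrt (hAA.eigenvalues i) ≤ ρmax) :
    ρmin * euclNorm x ≤ euclNorm (A.mulVec x) ∧
      euclNorm (A.mulVec x) ≤ ρmax * euclNorm x := by
  have heig : ∀ i, 0 ≤ hAA.eigenvalues i := by
    intro i
    have h1 : (Aᵀ * A).PosSemidef := by
      have := Matrix.posSemidef_conjTranspose_mul_self A
      simpa using this
    exact h1.eigenvalues_nonneg i
  have hlo' : ∀ i, ρmin ^ 2 ≤ hAA.eigenvalues i := fun i => by
    calc ρmin ^ 2 ≤ Real.sqrt (hAA.eigenvalues i) ^ 2 := by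
          exact pow_le_pow_left₀ h0 (hlo i) 2
      _ = hAA.eigenvalues i := Real.sq_sqrt (heig i)
  have hhi' : ∀ i, hAA.eigenvalues i ≤ ρmax ^ 2 := fun i => by
    calc hAA.eigenvalues i = Real.sqrt (hAA.eigenvalues i) ^ 2 := (Real.sq_sqrt (heig i)).symm
      _ ≤ ρmax ^ 2 := pow_le_pow_left₀ (Real.sqrt_nonneg _) (hhi i) 2
  obtain ⟨k1, k2⟩ := key_quad A hAA x (ρmin ^ 2) (ρmax ^ 2) hlo' hhi'
  constructor
  · have := Real.sqrt_le_sqrt k1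
    rwa [Real.sqrt_mul (sq_nonneg _), Real.sqrt_sq h0] at this
  · have := Real.sqrt_le_sqrt k2
    rwa [Real.sqrt_mul (sq_nonneg _), Real.sqrt_sq hρmax0] at this

lemma integrable_euclNorm_comp {Ω : Type*} [MeasurableSpace Ω] {μ : Measure Ω} {N : ℕ}
    {g : Ω → Fin N → ℝ} (hg : Integrable g μ) :
    Integrable (fun ω => euclNorm (g ω)) μ := by
  have e := (PiLp.continuousLinearEquiv 2 ℝ (fun _ : Fin N => ℝ)).symm
  have h1 : Integrable (fun ω => (PiLp.continuousLinearEquiv 2 ℝ (fun _ : Fin N => ℝ)).symm (g ω)) μ :=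
    ((PiLp.continuousLinearEquiv 2 ℝ (fun _ : Fin N => ℝ)).symm :
      (Fin N → ℝ) →L[ℝ] EuclideanSpace ℝ (Fin N)).integrable_comp hg
  have h2 := h1.norm
  convert h2 using 2 with ω
  rw [EuclideanSpace.norm_eq]
  simp [euclNorm, sq_abs]

lemma integrable_mulVec_comp {Ω : Type*} [MeasurableSpace Ω] {μ : Measure Ω} {N : ℕ}
    (M : Matrix (Fin N) (Fin N) ℝ) {g : Ω → Fin N → ℝ} (hg : Integrable g μ) :
    Integrable (fun ω => M.mulVec (g ω)) μ :=
  (LinearMap.toContinuousLinearMap M.mulVecLin).integrable_comp hg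

/-- Let `(Ω, μ)` be a probability space, `A` an invertible `N×N` real matrix with largest and
smallest singular values `ρmax` and `ρmin` (the square roots of the eigenvalues of `AᵀA`),
`F : Ω → ℝ^N` Bochner integrable, and `α* = A⁻¹ F`. Let `S` be a nonempty set of integrable
functions `Ω → ℝ^N`, `αL ∈ S` a minimizer over `S` of the population loss
`L(α) = ∫ |Aα(ω) − F(ω)|₂ dμ`, and `αH ∈ S` a minimizer over `S` of the normal-equation loss
`H(α) = ∫ |AᵀAα(ω) − AᵀF(ω)|₂ dμ`. Then
`‖α* − αL‖_{L¹(Ω)} ≤ 3 κ(A)² inf_{α ∈ S} ‖α − α*‖_{L¹(Ω)}` where `κ(A) = ρmax / ρmin`. -/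
theorem stmt3 {Ω : Type*} [MeasurableSpace Ω] (μ : Measure Ω) [IsProbabilityMeasure μ]
    {N : ℕ} (A : Matrix (Fin N) (Fin N) ℝ) (hAinv : IsUnit A)
    (hAA : (Aᵀ * A).IsHermitian) (ρmax ρmin : ℝ)
    (hρmax : IsGreatest (Set.range fun i => Real.sqrt (hAA.eigenvalues i)) ρmax)
    (hρmin : IsLeast (Set.range fun i => Real.sqrt (hAA.eigenvalues i)) ρmin)
    (F : Ω → Fin N → ℝ) (hF : Integrable F μ)
    (αstar : Ω → Fin N → ℝ) (hαstar : αstar = fun ω => A⁻¹.mulVec (F ω))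
    (S : Set (Ω → Fin N → ℝ)) (hSne : S.Nonempty) (hSint : ∀ α ∈ S, Integrable α μ)
    (αL : Ω → Fin N → ℝ) (hαLmem : αL ∈ S)
    (hαLmin : ∀ α ∈ S, (∫ ω, euclNorm (A.mulVec (αL ω) - F ω) ∂μ)
        ≤ ∫ ω, euclNorm (A.mulVec (α ω) - F ω) ∂μ)
    (αH : Ω → Fin N → ℝ) (hαHmem : αH ∈ S)
    (hαHmin : ∀ α ∈ S, (∫ ω, euclNorm ((Aᵀ * A).mulVec (αH ω) - Aᵀ.mulVec (F ω)) ∂μ)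
        ≤ ∫ ω, euclNorm ((Aᵀ * A).mulVec (α ω) - Aᵀ.mulVec (F ω)) ∂μ) :
    (∫ ω, euclNorm (αstar ω - αL ω) ∂μ)
      ≤ 3 * (ρmax / ρmin) ^ 2 * ⨅ α : S, ∫ ω, euclNorm ((α : Ω → Fin N → ℝ) ω - αstar ω) ∂μ := by
  classical
  haveI : Nonempty S := hSne.to_subtype
  -- positivity of ρmin
  have hps : (Aᵀ * A).PosSemidef := by
    have := Matrix.posSemidef_conjTranspose_mul_self A
    simpa using this
  have heig_nonneg : ∀ i, 0 ≤ hAA.eigenvalues i := fun i => hps.eigenvalues_nonneg i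
  have hdetA : A.det ≠ 0 := by
    intro h
    have := (Matrix.isUnit_iff_isUnit_det A).mp hAinv
    rw [h] at this
    exact this.ne_zero rfl
  have heig_ne : ∀ i, hAA.eigenvalues i ≠ 0 := by
    have hdet : (Aᵀ * A).det ≠ 0 := by
      rw [Matrix.det_mul, Matrix.det_transpose]
      exact mul_ne_zero hdetA hdetA
    have hprod := hAA.det_eq_prod_eigenvalues
    intro i hi
    apply hdet
    rw [hprod]
    exact Finset.prod_eq_zero (Finset.mem_univ i) (by exact_mod_cast hi)
  obtain ⟨i0, hi0⟩ := hρmin.1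
  have hρmin_pos : 0 < ρmin := by
    rw [← hi0]
    exact Real.sqrt_pos.mpr (lt_of_le_of_ne (heig_nonneg i0) (Ne.symm (heig_ne i0)))
  have hρmax_nonneg : 0 ≤ ρmax := by
    obtain ⟨j, hj⟩ := hρmax.1
    rw [← hj]; exact Real.sqrt_nonneg _
  have hle : ρmin ≤ ρmax := hρmax.2 hρmin.1
  have hbd := fun x => euclNorm_bounds A hAA x ρmin ρmax hρmin_pos.le hρmax_nonneg
    (fun i => hρmin.2 ⟨i, rfl⟩) (fun i => hρmax.2 ⟨i, rfl⟩)
  -- A αstar = F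
  have hA1 : A * A⁻¹ = 1 := Matrix.mul_nonsing_inv A ((Matrix.isUnit_iff_isUnit_det A).mp hAinv)
  have hAαstar : ∀ ω, A.mulVec (αstar ω) = F ω := by
    intro ω
    rw [hαstar]
    simp [Matrix.mulVec_mulVec, hA1]
  have hαstar_int : Integrable αstar μ := by
    rw [hαstar]; exact integrable_mulVec_comp _ hF
  have hαL_int : Integrable αL μ := hSint αL hαLmem
  set I : ℝ := ∫ ω, euclNorm (αstar ω - αL ω) ∂μ with hI
  have key : ∀ α ∈ S, ρmin * I ≤ ρmax * ∫ ω, euclNorm (α ω - αstar ω) ∂μ := by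
    intro α hα
    have hα_int : Integrable α μ := hSint α hα
    calc ρmin * I = ∫ ω, ρmin * euclNorm (αstar ω - αL ω) ∂μ :=
          (integral_const_mul ρmin _).symm
      _ ≤ ∫ ω, euclNorm (A.mulVec (αL ω) - F ω) ∂μ := by
          apply integral_mono_of_nonneg
          · filter_upwards with ω
            exact mul_nonneg hρmin_pos.le (euclNorm_nonneg _)
          · exact integrable_euclNorm_comp ((integrable_mulVec_comp A hαL_int).sub hF)
          · filter_upwards with ω
            have h := (hbd (αstar ω - αL ω)).1
            have heq : A.mulVec (αstar ω - αL ω) = -(A.mulVec (αL ω) - F ω) := by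
              rw [Matrix.mulVec_sub, hAαstar]; abel
            rwa [heq, euclNorm_neg] at h
      _ ≤ ∫ ω, euclNorm (A.mulVec (α ω) - F ω) ∂μ := hαLmin α hα
      _ ≤ ∫ ω, ρmax * euclNorm (α ω - αstar ω) ∂μ := by
          apply integral_mono_of_nonneg
          · filter_upwards with ω; exact euclNorm_nonneg _
          · exact (integrable_euclNorm_comp (hα_int.sub hαstar_int)).const_mul ρmax
          · filter_upwards with ω
            have h := (hbd (α ω - αstar ω)).2
            have heq : A.mulVec (α ω - αstar ω) = A.mulVec (α ω) - F ω := by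
              rw [Matrix.mulVec_sub, hAαstar]
            rwa [heq] at h
      _ = ρmax * ∫ ω, euclNorm (α ω - αstar ω) ∂μ := integral_const_mul ρmax _
  set c : ℝ := 3 * (ρmax / ρmin) ^ 2 with hc
  have hκ1 : 1 ≤ ρmax / ρmin := (one_le_div hρmin_pos).mpr hle
  have hc_pos : 0 < c := by positivity
  have hstep : ∀ α : S, I / c ≤ ∫ ω, euclNorm ((α : Ω → Fin N → ℝ) ω - αstar ω) ∂μ := by
    rintro ⟨α, hα⟩
    have hJ : 0 ≤ ∫ ω, euclNorm (α ω - αstar ω) ∂μ :=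
      integral_nonneg fun ω => euclNorm_nonneg _
    have h := key α hα
    rw [div_le_iff₀ hc_pos]
    have hI2 : I ≤ (ρmax / ρmin) * ∫ ω, euclNorm (α ω - αstar ω) ∂μ := by
      rw [div_mul_eq_mul_div, le_div_iff₀ hρmin_pos]
      linarith [h]
    calc I ≤ (ρmax / ρmin) * ∫ ω, euclNorm (α ω - αstar ω) ∂μ := hI2
      _ ≤ c * ∫ ω, euclNorm (α ω - αstar ω) ∂μ := by
          apply mul_le_mul_of_nonneg_right _ hJ
          nlinarith [hκ1]
      _ = (∫ ω, euclNorm (α ω - αstar ω) ∂μ) * c := mul_comm _ _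
  have hiInf := le_ciInf hstep
  calc I = c * (I / c) := by field_simp
    _ ≤ c * ⨅ α : S, ∫ ω, euclNorm ((α : Ω → Fin N → ℝ) ω - αstar ω) ∂μ :=
        mul_le_mul_of_nonneg_left hiInf hc_pos.le
end

section
/- Let (Ω, μ) be a probability space, b > 0, and 𝔽 a nonempty countable family of measurable functions f : Ω → R with |f| ≤ b for every f ∈ 𝔽. Let X₁, …, X_M be i.i.d. random variables with law μ and let ε₁, …, ε_M be i.i.d. uniform on {−1, +1}, independent of the X_i. Then E[ sup_{f∈𝔽} | (1/M) Σ_{j=1}^M f(X_j) − ∫_Ω f dμ | ] ≤ 2 R_M(𝔽), where R_M(𝔽) := E[ sup_{f∈𝔽} | (1/M) Σ_{j=1}^M ε_j f(X_j) | ] is the Rademacher complexity of 𝔽. -/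
open MeasureTheory

set_option linter.unnecessarySeqFocus false
set_option linter.unusedVariables false


lemma bdd_range_of_le {f : ℕ → ℝ} {C : ℝ} (h : ∀ n, f n ≤ C) : BddAbove (Set.range f) :=
  ⟨C, by rintro _ ⟨n, rfl⟩; exact h n⟩

lemma integrable_of_bdd {α : Type*} [MeasurableSpace α] {ρ : Measure α} [IsFiniteMeasure ρ]
    {g : α → ℝ} (hg : AEStronglyMeasurable g ρ) (C : ℝ) (h : ∀ x, |g x| ≤ C) :
    Integrable g ρ :=
  Integrable.mono' (integrable_const C) hg (Filter.Eventually.of_forall fun x => by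
    simpa [Real.norm_eq_abs] using h x)

lemma abs_ciSup_le {f : ℕ → ℝ} {C : ℝ} (h0 : ∀ n, 0 ≤ f n) (hC : ∀ n, f n ≤ C) :
    |⨆ n, f n| ≤ C := by
  rw [abs_of_nonneg (Real.iSup_nonneg h0)]; exact ciSup_le hC

lemma abs_avg_le {M : ℕ} (hM : 0 < M) {b : ℝ} (v : Fin M → ℝ) (hv : ∀ j, |v j| ≤ b) :
    |(M : ℝ)⁻¹ * ∑ j, v j| ≤ b := by
  have hM' : (0:ℝ) < M := Nat.cast_pos.2 hM
  rw [abs_mul, abs_inv, Nat.abs_cast]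
  calc (M : ℝ)⁻¹ * |∑ j, v j| ≤ (M : ℝ)⁻¹ * ∑ j, |v j| := by
        gcongr; exact Finset.abs_sum_le_sum_abs _ _
    _ ≤ (M : ℝ)⁻¹ * ∑ _j : Fin M, b := by gcongr with j _; exact hv j
    _ = b := by
        simp only [Finset.sum_const, Finset.card_univ, Fintype.card_fin, nsmul_eq_mul]
        field_simp

lemma integ_comp {α β : Type*} [MeasurableSpace α] [MeasurableSpace β]
    {μa : Measure α} {μb : Measure β} {φ : α → β} (hφ : MeasurePreserving φ μa μb)
    {g : β → ℝ} (hg : AEStronglyMeasurable g μb) : ∫ x, g (φ x) ∂μa = ∫ y, g y ∂μb := by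
  rw [← hφ.map_eq] at hg ⊢
  exact (integral_map hφ.measurable.aemeasurable hg).symm

lemma abs_integral_le_of_bdd {α : Type*} [MeasurableSpace α] {ρ : Measure α}
    [IsProbabilityMeasure ρ] {g : α → ℝ} (hg : AEStronglyMeasurable g ρ) {C : ℝ}
    (h : ∀ x, |g x| ≤ C) : |∫ x, g x ∂ρ| ≤ C :=
  calc |∫ x, g x ∂ρ| ≤ ∫ x, |g x| ∂ρ := by
        simpa [Real.norm_eq_abs] using norm_integral_le_integral_norm g
    _ ≤ ∫ _x, C ∂ρ := integral_mono (integrable_of_bdd hg C h).abs (integrable_const C)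
        (fun x => h x)
    _ = C := by simp

lemma measurePreserving_eval' {Ω : Type*} [MeasurableSpace Ω] (μ : Measure Ω)
    [IsProbabilityMeasure μ] {M : ℕ} (j : Fin M) :
    MeasurePreserving (fun X : Fin M → Ω => X j) (Measure.pi fun _ : Fin M => μ) μ := by
  classical
  refine ⟨measurable_pi_apply j, ?_⟩
  ext s hs
  rw [Measure.map_apply (measurable_pi_apply j) hs,
    show (fun X : Fin M → Ω => X j) = Function.eval j from rfl, Set.eval_preimage,
    Measure.pi_pi]
  simp [Function.update_apply, apply_ite μ, Finset.prod_ite_eq', measure_univ]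

lemma symm_key {Ω : Type*} [MeasurableSpace Ω] (μ : Measure Ω) [IsProbabilityMeasure μ]
    (b : ℝ) (M : ℕ) (hM : 0 < M) (e : ℕ → Ω → ℝ)
    (hem : ∀ n, Measurable (e n)) (heb : ∀ n ω, |e n ω| ≤ b) (ε : Fin M → Bool) :
    (∫ X : Fin M → Ω, (⨆ n, |(M : ℝ)⁻¹ * ∑ j, e n (X j) - ∫ ω, e n ω ∂μ|)
        ∂(Measure.pi fun _ : Fin M => μ))
      ≤ 2 * ∫ X : Fin M → Ω,
          (⨆ n, |(M : ℝ)⁻¹ * ∑ j, (if ε j then (1 : ℝ) else -1) * e n (X j)|)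
        ∂(Measure.pi fun _ : Fin M => μ) := by
  classical
  set ν : Measure (Fin M → Ω) := Measure.pi fun _ : Fin M => μ with hν
  set π2 : Measure (Fin M → Ω × Ω) := Measure.pi fun _ : Fin M => μ.prod μ with hπ2
  set sg : Fin M → ℝ := fun j => if ε j then (1 : ℝ) else -1 with hsg
  have hsg1 : ∀ j, |sg j| = 1 := by intro j; by_cases h : ε j <;> simp [hsg, h]
  set S : ℕ → (Fin M → Ω) → ℝ := fun n X => (M : ℝ)⁻¹ * ∑ j, e n (X j) with hS
  set T : ℕ → (Fin M → Ω) → ℝ := fun n X => (M : ℝ)⁻¹ * ∑ j, sg j * e n (X j) with hT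
  set mm : ℕ → ℝ := fun n => ∫ ω, e n ω ∂μ with hmm
  set G : (Fin M → Ω) → ℝ := fun X => ⨆ n, |S n X - mm n| with hG
  set R : (Fin M → Ω) → ℝ := fun X => ⨆ n, |T n X| with hR
  set W : (Fin M → Ω) × (Fin M → Ω) → ℝ := fun p => ⨆ n, |S n p.1 - S n p.2| with hW
  set D : (Fin M → Ω) × (Fin M → Ω) → ℝ := fun p => ⨆ n, |T n p.1 - T n p.2| with hD
  -- bounds
  have hSb : ∀ n X, |S n X| ≤ b := fun n X => abs_avg_le hM _ (fun j => heb n (X j))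
  have hTb : ∀ n X, |T n X| ≤ b := fun n X => abs_avg_le hM _ (fun j => by
    rw [abs_mul, hsg1, one_mul]; exact heb n (X j))
  have hmb : ∀ n, |mm n| ≤ b := fun n =>
    abs_integral_le_of_bdd (hem n).aestronglyMeasurable (heb n)
  -- measurability
  have hSm : ∀ n, Measurable (S n) := fun n =>
    measurable_const.mul (Finset.measurable_sum _ fun j _ => (hem n).comp (measurable_pi_apply j))
  have hTm : ∀ n, Measurable (T n) := fun n =>
    measurable_const.mul (Finset.measurable_sum _ fun j _ =>
      measurable_const.mul ((hem n).comp (measurable_pi_apply j)))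
  have hGm : Measurable G := Measurable.iSup fun n => ((hSm n).sub measurable_const).abs
  have hRm : Measurable R := Measurable.iSup fun n => (hTm n).abs
  have hWm : Measurable W := Measurable.iSup fun n =>
    (((hSm n).comp measurable_fst).sub ((hSm n).comp measurable_snd)).abs
  have hDm : Measurable D := Measurable.iSup fun n =>
    (((hTm n).comp measurable_fst).sub ((hTm n).comp measurable_snd)).abs
  -- integrability
  have hGint : Integrable G ν := integrable_of_bdd hGm.aestronglyMeasurable (b + b)
    (fun X => abs_ciSup_le (fun n => abs_nonneg _)
      (fun n => (abs_sub _ _).trans (add_le_add (hSb n X) (hmb n))))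
  have hWb : ∀ p, |W p| ≤ b + b := fun p => abs_ciSup_le (fun n => abs_nonneg _)
    (fun n => (abs_sub _ _).trans (add_le_add (hSb n p.1) (hSb n p.2)))
  have hDb : ∀ p, |D p| ≤ b + b := fun p => abs_ciSup_le (fun n => abs_nonneg _)
    (fun n => (abs_sub _ _).trans (add_le_add (hTb n p.1) (hTb n p.2)))
  have hWint : Integrable W (ν.prod ν) := integrable_of_bdd hWm.aestronglyMeasurable (b + b) hWb
  have hDint : Integrable D (ν.prod ν) := integrable_of_bdd hDm.aestronglyMeasurable (b + b) hDb
  have hRint : Integrable R ν := integrable_of_bdd hRm.aestronglyMeasurable b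
    (fun X => abs_ciSup_le (fun n => abs_nonneg _) (fun n => hTb n X))
  -- mean identity
  have hRb : ∀ X, |R X| ≤ b := fun X => abs_ciSup_le (fun n => abs_nonneg _) (fun n => hTb n X)
  have hSint : ∀ n, Integrable (S n) ν :=
    fun n => integrable_of_bdd (hSm n).aestronglyMeasurable b (hSb n)
  have hmean : ∀ n, ∫ Y, S n Y ∂ν = mm n := by
    intro n
    have hint : ∀ j : Fin M, Integrable (fun Y : Fin M → Ω => e n (Y j)) ν := fun j =>
      integrable_of_bdd ((hem n).comp (measurable_pi_apply j)).aestronglyMeasurable b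
        (fun Y => heb n (Y j))
    have h1 : ∀ j : Fin M, ∫ Y, e n (Y j) ∂ν = mm n := fun j =>
      integ_comp (measurePreserving_eval' μ j) (hem n).aestronglyMeasurable
    have hM' : (M : ℝ) ≠ 0 := Nat.cast_ne_zero.2 hM.ne'
    calc ∫ Y, S n Y ∂ν = (M : ℝ)⁻¹ * ∑ j, ∫ Y, e n (Y j) ∂ν := by
          simp only [hS]
          rw [integral_const_mul, integral_finset_sum _ (fun j _ => hint j)]
      _ = (M : ℝ)⁻¹ * ∑ _j : Fin M, mm n := by
          rw [Finset.sum_congr rfl (fun j _ => h1 j)]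
      _ = mm n := by
          simp only [Finset.sum_const, Finset.card_univ, Fintype.card_fin, nsmul_eq_mul]
          field_simp
  -- pointwise symmetrization
  have hpt : ∀ X, G X ≤ ∫ Y, W (X, Y) ∂ν := by
    intro X
    refine ciSup_le fun n => ?_
    have h1 : S n X - mm n = ∫ Y, (S n X - S n Y) ∂ν := by
      rw [integral_sub (integrable_const _) (hSint n), hmean n, integral_const]; simp
    have h2 : |S n X - mm n| ≤ ∫ Y, |S n X - S n Y| ∂ν := by
      rw [h1]
      simpa [Real.norm_eq_abs] using
        norm_integral_le_integral_norm (μ := ν) (fun Y => S n X - S n Y)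
    refine h2.trans (integral_mono ?_ ?_ ?_)
    · exact ((integrable_const _).sub (hSint n)).abs
    · exact integrable_of_bdd (hWm.comp measurable_prodMk_left).aestronglyMeasurable (b + b)
        (fun Y => hWb (X, Y))
    · intro Y
      exact le_ciSup
        (bdd_range_of_le fun k => (abs_sub _ _).trans (add_le_add (hSb k X) (hSb k Y))) n
  -- step 1
  have hIint : Integrable (fun X => ∫ Y, W (X, Y) ∂ν) ν :=
    integrable_of_bdd hWm.stronglyMeasurable.integral_prod_right'.aestronglyMeasurable (b + b)
      (fun X => abs_integral_le_of_bdd (hWm.comp measurable_prodMk_left).aestronglyMeasurable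
        (fun Y => hWb (X, Y)))
  have step1 : ∫ X, G X ∂ν ≤ ∫ X, (∫ Y, W (X, Y) ∂ν) ∂ν := integral_mono hGint hIint hpt
  -- step 2 (Fubini)
  have step2 : ∫ X, (∫ Y, W (X, Y) ∂ν) ∂ν = ∫ p, W p ∂(ν.prod ν) := by
    rw [integral_integral (f := fun X Y => W (X, Y)) hWint]
  -- step 3 (sign symmetry)
  have step3 : ∫ p, W p ∂(ν.prod ν) = ∫ p, D p ∂(ν.prod ν) := by
    set Φ := MeasurableEquiv.arrowProdEquivProdArrow Ω Ω (Fin M) with hΦdef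
    have hΦ : MeasurePreserving Φ π2 (ν.prod ν) :=
      measurePreserving_arrowProdEquivProdArrow Ω Ω (Fin M) (fun _ => μ) (fun _ => μ)
    set f : Fin M → Ω × Ω → Ω × Ω := fun j a => if ε j then a else a.swap with hf
    have hτ : MeasurePreserving (fun q : Fin M → Ω × Ω => fun j => f j (q j)) π2 π2 := by
      refine measurePreserving_pi _ _ (fun j => ?_)
      by_cases h : ε j
      · simp [hf, h]; exact MeasurePreserving.id (μ.prod μ)
      · simpa [hf, h] using Measure.measurePreserving_swap (μ := μ) (ν := μ)
    have hWD : ∀ q : Fin M → Ω × Ω, W (Φ (fun j => f j (q j))) = D (Φ q) := by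
      intro q
      refine iSup_congr fun n => ?_
      congr 1
      have hfst1 : ∀ r : Fin M → Ω × Ω, (Φ r).1 = fun j => (r j).1 := fun r => rfl
      have hsnd1 : ∀ r : Fin M → Ω × Ω, (Φ r).2 = fun j => (r j).2 := fun r => rfl
      rw [hfst1, hsnd1, hfst1, hsnd1]
      simp only [hS, hT]
      rw [← mul_sub, ← mul_sub, ← Finset.sum_sub_distrib, ← Finset.sum_sub_distrib]
      congr 1
      refine Finset.sum_congr rfl fun j _ => ?_
      by_cases h : ε j <;> simp [hf, hsg, h] <;> ring
    calc ∫ p, W p ∂(ν.prod ν) = ∫ q, W (Φ q) ∂π2 :=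
          (integ_comp hΦ hWm.aestronglyMeasurable).symm
      _ = ∫ q, W (Φ (fun j => f j (q j))) ∂π2 :=
          (integ_comp hτ (hWm.comp hΦ.measurable).aestronglyMeasurable).symm
      _ = ∫ q, D (Φ q) ∂π2 := integral_congr_ae (Filter.Eventually.of_forall hWD)
      _ = ∫ p, D p ∂(ν.prod ν) := integ_comp hΦ hDm.aestronglyMeasurable
  -- step 4 (triangle + marginals)
  have step4 : ∫ p, D p ∂(ν.prod ν) ≤ (∫ X, R X ∂ν) + ∫ X, R X ∂ν := by
    have hpt4 : ∀ p : (Fin M → Ω) × (Fin M → Ω), D p ≤ R p.1 + R p.2 := fun p =>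
      ciSup_le fun n => (abs_sub _ _).trans
        (add_le_add (le_ciSup (bdd_range_of_le fun k => hTb k p.1) n)
          (le_ciSup (bdd_range_of_le fun k => hTb k p.2) n))
    have hfst : MeasurePreserving (Prod.fst) (ν.prod ν) ν := ⟨measurable_fst, by simp⟩
    have hsnd : MeasurePreserving (Prod.snd) (ν.prod ν) ν := ⟨measurable_snd, by simp⟩
    have i1 : Integrable (fun p : (Fin M → Ω) × (Fin M → Ω) => R p.1) (ν.prod ν) :=
      integrable_of_bdd (hRm.comp measurable_fst).aestronglyMeasurable b (fun p => hRb p.1)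
    have i2 : Integrable (fun p : (Fin M → Ω) × (Fin M → Ω) => R p.2) (ν.prod ν) :=
      integrable_of_bdd (hRm.comp measurable_snd).aestronglyMeasurable b (fun p => hRb p.2)
    calc ∫ p, D p ∂(ν.prod ν) ≤ ∫ p, (R p.1 + R p.2) ∂(ν.prod ν) :=
          integral_mono hDint (i1.add i2) hpt4
      _ = (∫ p, R p.1 ∂(ν.prod ν)) + ∫ p, R p.2 ∂(ν.prod ν) := integral_add i1 i2
      _ = (∫ X, R X ∂ν) + ∫ X, R X ∂ν := by
          rw [show (∫ p : (Fin M → Ω) × (Fin M → Ω), R p.1 ∂(ν.prod ν)) = ∫ X, R X ∂ν from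
              integ_comp hfst hRm.aestronglyMeasurable,
            show (∫ p : (Fin M → Ω) × (Fin M → Ω), R p.2 ∂(ν.prod ν)) = ∫ X, R X ∂ν from
              integ_comp hsnd hRm.aestronglyMeasurable]
  calc ∫ X, G X ∂ν ≤ ∫ X, (∫ Y, W (X, Y) ∂ν) ∂ν := step1
    _ = ∫ p, D p ∂(ν.prod ν) := by rw [step2, step3]
    _ ≤ (∫ X, R X ∂ν) + ∫ X, R X ∂ν := step4
    _ = 2 * ∫ X, R X ∂ν := by ring

lemma biSup_range_eq {α : Type*} (e : ℕ → α) (g : α → ℝ) (C : ℝ)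
    (h0 : ∀ n, 0 ≤ g (e n)) (hC : ∀ n, g (e n) ≤ C) :
    (⨆ x ∈ Set.range e, g x) = ⨆ n, g (e n) := by
  apply le_antisymm
  · refine Real.iSup_le (fun x => Real.iSup_le (fun hx => ?_) (Real.iSup_nonneg h0))
      (Real.iSup_nonneg h0)
    obtain ⟨n, rfl⟩ := hx
    exact le_ciSup (bdd_range_of_le hC) n
  · refine ciSup_le fun n => ?_
    have h1 : g (e n) = ⨆ _ : e n ∈ Set.range e, g (e n) :=
      (ciSup_pos (f := fun _ : e n ∈ Set.range e => g (e n)) ⟨n, rfl⟩).symm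
    rw [h1]
    refine le_ciSup (f := fun x => ⨆ _ : x ∈ Set.range e, g x) ?_ (e n)
    refine ⟨max C 0, ?_⟩
    rintro _ ⟨x, rfl⟩
    refine Real.iSup_le (fun hx => ?_) (le_max_right _ _)
    obtain ⟨k, rfl⟩ := hx
    exact (hC k).trans (le_max_left _ _)

/-- Symmetrization: the expected supremum over a bounded countable family `𝔽` of the deviation
of the empirical mean from the true mean, over `M` i.i.d. samples, is bounded by twice the
Rademacher complexity of `𝔽` (expectation over i.i.d. signs, uniform on `{−1, +1}`, given here
as the average over all `2^M` sign patterns `ε : Fin M → Bool`). -/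
theorem stmt5 {Ω : Type*} [MeasurableSpace Ω] (μ : Measure Ω) [IsProbabilityMeasure μ]
    (b : ℝ) (hb : 0 < b)
    (𝔽 : Set (Ω → ℝ)) (h𝔽ne : 𝔽.Nonempty) (h𝔽ct : 𝔽.Countable)
    (hmeas : ∀ f ∈ 𝔽, Measurable f) (hbdd : ∀ f ∈ 𝔽, ∀ ω, |f ω| ≤ b)
    (M : ℕ) (hM : 0 < M) :
    (∫ X : Fin M → Ω, (⨆ f ∈ 𝔽, |(M : ℝ)⁻¹ * (∑ j, f (X j)) - ∫ ω, f ω ∂μ|)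
        ∂(Measure.pi fun _ : Fin M => μ))
      ≤ 2 * ∫ X : Fin M → Ω, (2 ^ M : ℝ)⁻¹ * ∑ ε : Fin M → Bool,
            ⨆ f ∈ 𝔽, |(M : ℝ)⁻¹ * ∑ j, (if ε j then (1 : ℝ) else -1) * f (X j)|
          ∂(Measure.pi fun _ : Fin M => μ) := by
  
  classical
  obtain ⟨e, he⟩ := h𝔽ct.exists_eq_range h𝔽ne
  subst he
  set ν : Measure (Fin M → Ω) := Measure.pi fun _ : Fin M => μ with hν
  have hem : ∀ n, Measurable (e n) := fun n => hmeas _ ⟨n, rfl⟩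
  have heb : ∀ n ω, |e n ω| ≤ b := fun n ω => hbdd _ ⟨n, rfl⟩ ω
  have hSb : ∀ n (X : Fin M → Ω), |(M : ℝ)⁻¹ * ∑ j, e n (X j)| ≤ b :=
    fun n X => abs_avg_le hM _ (fun j => heb n (X j))
  have hTb : ∀ (ε : Fin M → Bool) n (X : Fin M → Ω),
      |(M : ℝ)⁻¹ * ∑ j, (if ε j then (1 : ℝ) else -1) * e n (X j)| ≤ b := fun ε n X =>
    abs_avg_le hM _ (fun j => by
      rcases Bool.dichotomy (ε j) with h | h <;> simp [h, heb n (X j)])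
  have hmb : ∀ n, |∫ ω, e n ω ∂μ| ≤ b := fun n =>
    abs_integral_le_of_bdd (hem n).aestronglyMeasurable (heb n)
  -- rewrite LHS
  have hL : (∫ X : Fin M → Ω, (⨆ f ∈ Set.range e, |(M : ℝ)⁻¹ * (∑ j, f (X j)) - ∫ ω, f ω ∂μ|) ∂ν)
      = ∫ X : Fin M → Ω, (⨆ n, |(M : ℝ)⁻¹ * ∑ j, e n (X j) - ∫ ω, e n ω ∂μ|) ∂ν := by
    refine integral_congr_ae (Filter.Eventually.of_forall fun X => ?_)
    exact biSup_range_eq e (fun f => |(M : ℝ)⁻¹ * (∑ j, f (X j)) - ∫ ω, f ω ∂μ|) (b + b)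
      (fun n => abs_nonneg _)
      (fun n => (abs_sub _ _).trans (add_le_add (hSb n X) (hmb n)))
  -- rewrite RHS
  have hR : (∫ X : Fin M → Ω, (2 ^ M : ℝ)⁻¹ * ∑ ε : Fin M → Bool,
        ⨆ f ∈ Set.range e, |(M : ℝ)⁻¹ * ∑ j, (if ε j then (1 : ℝ) else -1) * f (X j)| ∂ν)
      = ∫ X : Fin M → Ω, (2 ^ M : ℝ)⁻¹ * ∑ ε : Fin M → Bool,
          (⨆ n, |(M : ℝ)⁻¹ * ∑ j, (if ε j then (1 : ℝ) else -1) * e n (X j)|) ∂ν := by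
    refine integral_congr_ae (Filter.Eventually.of_forall fun X => ?_)
    exact congrArg (fun z : ℝ => (2 ^ M : ℝ)⁻¹ * z)
      (Finset.sum_congr rfl fun ε _ => biSup_range_eq e
        (fun f => |(M : ℝ)⁻¹ * ∑ j, (if ε j then (1 : ℝ) else -1) * f (X j)|) b
        (fun n => abs_nonneg _) (fun n => hTb ε n X))
  rw [hL, hR]
  -- integrability of each R ε
  have hRm : ∀ ε : Fin M → Bool, Measurable (fun X : Fin M → Ω =>
      ⨆ n, |(M : ℝ)⁻¹ * ∑ j, (if ε j then (1 : ℝ) else -1) * e n (X j)|) := fun ε =>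
    Measurable.iSup fun n => (measurable_const.mul (Finset.measurable_sum _ fun j _ =>
      measurable_const.mul ((hem n).comp (measurable_pi_apply j)))).abs
  have hRint : ∀ ε : Fin M → Bool, Integrable (fun X : Fin M → Ω =>
      ⨆ n, |(M : ℝ)⁻¹ * ∑ j, (if ε j then (1 : ℝ) else -1) * e n (X j)|) ν := fun ε =>
    integrable_of_bdd (hRm ε).aestronglyMeasurable b
      (fun X => abs_ciSup_le (fun n => abs_nonneg _) (fun n => hTb ε n X))
  -- pull out the constant and the sum
  rw [integral_const_mul, integral_finset_sum _ (fun ε _ => hRint ε)]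
  have hkey : ∀ ε : Fin M → Bool,
      (∫ X : Fin M → Ω, (⨆ n, |(M : ℝ)⁻¹ * ∑ j, e n (X j) - ∫ ω, e n ω ∂μ|) ∂ν)
        ≤ 2 * ∫ X : Fin M → Ω,
            (⨆ n, |(M : ℝ)⁻¹ * ∑ j, (if ε j then (1 : ℝ) else -1) * e n (X j)|) ∂ν :=
    fun ε => symm_key μ b M hM e hem heb ε
  have h2M : (0:ℝ) < (2 ^ M : ℝ) := by positivity
  set I : ℝ := ∫ X : Fin M → Ω, (⨆ n, |(M : ℝ)⁻¹ * ∑ j, e n (X j) - ∫ ω, e n ω ∂μ|) ∂ν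
  calc I = (2 ^ M : ℝ)⁻¹ * ∑ _ε : Fin M → Bool, I := by
        rw [Finset.sum_const, Finset.card_univ]
        simp only [nsmul_eq_mul]
        rw [show (Fintype.card (Fin M → Bool) : ℝ) = (2 ^ M : ℝ) by
          simp [Fintype.card_fun]]
        field_simp
    _ ≤ (2 ^ M : ℝ)⁻¹ * ∑ ε : Fin M → Bool, 2 * ∫ X : Fin M → Ω,
          (⨆ n, |(M : ℝ)⁻¹ * ∑ j, (if ε j then (1 : ℝ) else -1) * e n (X j)|) ∂ν := by
        gcongr with ε _
        exact hkey ε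
    _ = 2 * ((2 ^ M : ℝ)⁻¹ * ∑ ε : Fin M → Bool, ∫ X : Fin M → Ω,
          (⨆ n, |(M : ℝ)⁻¹ * ∑ j, (if ε j then (1 : ℝ) else -1) * e n (X j)|) ∂ν) := by
        rw [← Finset.mul_sum]; ring
end

section
/- Let μ be a probability measure on R^m supported in the set { ω : ‖ω‖_∞ ≤ 1 }, let ρ be a probability measure on R × R^m × R with Q := ∫ |a| (‖b‖₁ + |c|) dρ(a,b,c) < ∞, and suppose g : R^m → R satisfies g(ω) = ∫ a σ(b·ω + c) dρ(a,b,c) for μ-almost every ω, where σ(t) = max(t, 0). Then for every n ∈ N there exist parameters (a_j, b_j, c_j)_{j=1}^n with (1/n) Σ_{j=1}^n |a_j| (‖b_j‖₁ + |c_j|) ≤ 2Q such that ∫_{R^m} | g(ω) − (1/n) Σ_{j=1}^n a_j σ(b_j·ω + c_j) |² dμ(ω) ≤ 3Q²/n. -/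
open MeasureTheory
open scoped ENNReal NNReal

section aux
variable {P : Type*} [MeasurableSpace P] (ν : Measure P) [IsProbabilityMeasure ν]

lemma aux_pi_prod {n : ℕ} (f : Fin n → P → ℝ) :
    ∫ θ : Fin n → P, ∏ i, f i (θ i) ∂(Measure.pi fun _ => ν) = ∏ i, ∫ x, f i x ∂ν := by
  letI : MeasureSpace P := ⟨ν⟩
  haveI : IsProbabilityMeasure (volume : Measure P) := ‹IsProbabilityMeasure ν›
  exact integral_fintype_prod_eq_prod f

lemma aux_pi_eval {n : ℕ} (X : P → ℝ) (j : Fin n) :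
    ∫ θ : Fin n → P, X (θ j) ∂(Measure.pi fun _ => ν) = ∫ x, X x ∂ν := by
  have h := aux_pi_prod ν (fun i : Fin n => fun x => if i = j then X x else 1)
  simp only [Finset.prod_ite_eq', Finset.mem_univ, if_true] at h
  rw [h]
  have : ∀ i : Fin n, (∫ x, (if i = j then X x else 1) ∂ν) = if i = j then ∫ x, X x ∂ν else 1 := by
    intro i; split_ifs <;> simp
  simp only [this, Finset.prod_ite_eq', Finset.mem_univ, if_true]

lemma aux_pi_eval_mul {n : ℕ} (X Y : P → ℝ) {j k : Fin n} (hjk : j ≠ k) :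
    ∫ θ : Fin n → P, X (θ j) * Y (θ k) ∂(Measure.pi fun _ => ν)
      = (∫ x, X x ∂ν) * ∫ x, Y x ∂ν := by
  have h := aux_pi_prod ν
    (fun i : Fin n => fun x => (if i = j then X x else 1) * (if i = k then Y x else 1))
  simp only [Finset.prod_mul_distrib, Finset.prod_ite_eq', Finset.mem_univ, if_true] at h
  rw [h]
  have : ∀ i : Fin n, (∫ x, (if i = j then X x else 1) * (if i = k then Y x else 1) ∂ν)
      = (if i = j then ∫ x, X x ∂ν else 1) * (if i = k then ∫ x, Y x ∂ν else 1) := by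
    intro i
    rcases eq_or_ne i j with rfl | hij
    · simp [hjk]
    · rcases eq_or_ne i k with rfl | hik
      · simp [hij]
      · simp [hij, hik]
  simp only [this, Finset.prod_mul_distrib, Finset.prod_ite_eq', Finset.mem_univ, if_true]

lemma aux_variance [Nonempty P] {n : ℕ} (hn : 0 < n) (X : P → ℝ) (hX : Measurable X)
    (Qb : ℝ) (hbd : ∀ p, |X p| ≤ Qb) (G : ℝ) (hG : ∫ x, X x ∂ν = G) :
    Integrable (fun θ : Fin n → P => (G - (n : ℝ)⁻¹ * ∑ j, X (θ j)) ^ 2)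
      (Measure.pi fun _ => ν) ∧
    ∫ θ : Fin n → P, (G - (n : ℝ)⁻¹ * ∑ j, X (θ j)) ^ 2 ∂(Measure.pi fun _ => ν)
      ≤ Qb ^ 2 / n := by
  set Pn : Measure (Fin n → P) := Measure.pi fun _ => ν with hPn
  haveI : IsProbabilityMeasure Pn := by rw [hPn]; infer_instance
  have hnR : (0 : ℝ) < n := by exact_mod_cast hn
  have hQb : 0 ≤ Qb := le_trans (abs_nonneg _) (hbd Classical.ofNonempty)
  -- measurability and integrability of coordinate evaluations
  have hXj : ∀ j : Fin n, Measurable fun θ : Fin n → P => X (θ j) :=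
    fun j => hX.comp (measurable_pi_apply j)
  have hXjint : ∀ j : Fin n, Integrable (fun θ : Fin n → P => X (θ j)) Pn := by
    intro j
    refine (integrable_const Qb).mono' ((hXj j).aestronglyMeasurable) ?_
    exact Filter.Eventually.of_forall fun θ => by simpa using hbd (θ j)
  have hXjkint : ∀ j k : Fin n, Integrable (fun θ : Fin n → P => X (θ j) * X (θ k)) Pn := by
    intro j k
    refine (integrable_const (Qb * Qb)).mono' (((hXj j).mul (hXj k)).aestronglyMeasurable) ?_
    refine Filter.Eventually.of_forall fun θ => ?_
    simp only [norm_mul, Real.norm_eq_abs]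
    exact mul_le_mul (hbd _) (hbd _) (abs_nonneg _) hQb
  have hSint : Integrable (fun θ : Fin n → P => ∑ j, X (θ j)) Pn :=
    integrable_finset_sum _ fun j _ => hXjint j
  have hSSint : Integrable (fun θ : Fin n → P => ∑ j, ∑ k, X (θ j) * X (θ k)) Pn :=
    integrable_finset_sum _ fun j _ => integrable_finset_sum _ fun k _ => hXjkint j k
  -- integrability of the squared error
  have hint : Integrable (fun θ : Fin n → P => (G - (n : ℝ)⁻¹ * ∑ j, X (θ j)) ^ 2) Pn := by
    have expand : ∀ θ : Fin n → P,
        (G - (n : ℝ)⁻¹ * ∑ j, X (θ j)) ^ 2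
          = G ^ 2 - (2 * G * (n : ℝ)⁻¹) * ∑ j, X (θ j)
            + ((n : ℝ)⁻¹) ^ 2 * ∑ j, ∑ k, X (θ j) * X (θ k) := by
      intro θ
      have hs : (∑ j, X (θ j)) * (∑ k, X (θ k)) = ∑ j, ∑ k, X (θ j) * X (θ k) :=
        Finset.sum_mul_sum _ _ _ _
      rw [← hs]; ring
    simp only [expand]
    exact ((integrable_const _).sub (hSint.const_mul _)).add (hSSint.const_mul _)
  refine ⟨hint, ?_⟩
  set V : ℝ := ∫ x, X x * X x ∂ν with hV
  have hVle : V ≤ Qb ^ 2 := by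
    rw [hV]
    have : ∀ x, X x * X x ≤ Qb ^ 2 := by
      intro x
      have := mul_le_mul (hbd x) (hbd x) (abs_nonneg _) hQb
      nlinarith [abs_nonneg (X x), neg_abs_le (X x), le_abs_self (X x)]
    calc ∫ x, X x * X x ∂ν ≤ ∫ _x, Qb ^ 2 ∂ν := by
          refine integral_mono ?_ (integrable_const _) this
          refine (integrable_const (Qb * Qb)).mono' ((hX.mul hX).aestronglyMeasurable) ?_
          refine Filter.Eventually.of_forall fun x => ?_
          simp only [norm_mul, Real.norm_eq_abs]
          exact mul_le_mul (hbd x) (hbd x) (abs_nonneg _) hQb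
      _ = Qb ^ 2 := by simp
  have hVnn : 0 ≤ V := by
    rw [hV]
    exact integral_nonneg fun x => mul_self_nonneg _
  -- compute the integral
  have key : ∫ θ : Fin n → P, (G - (n : ℝ)⁻¹ * ∑ j, X (θ j)) ^ 2 ∂Pn
      = G ^ 2 - (2 * G * (n : ℝ)⁻¹) * (n * G)
        + ((n : ℝ)⁻¹) ^ 2 * (n * V + (n * n - n) * G ^ 2) := by
    have expand : ∀ θ : Fin n → P,
        (G - (n : ℝ)⁻¹ * ∑ j, X (θ j)) ^ 2
          = G ^ 2 - (2 * G * (n : ℝ)⁻¹) * ∑ j, X (θ j)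
            + ((n : ℝ)⁻¹) ^ 2 * ∑ j, ∑ k, X (θ j) * X (θ k) := by
      intro θ
      have hs : (∑ j, X (θ j)) * (∑ k, X (θ k)) = ∑ j, ∑ k, X (θ j) * X (θ k) :=
        Finset.sum_mul_sum _ _ _ _
      rw [← hs]; ring
    simp only [expand]
    have hA : Integrable (fun θ : Fin n → P =>
        G ^ 2 - (2 * G * (n : ℝ)⁻¹) * ∑ j, X (θ j)) Pn := (integrable_const _).sub (hSint.const_mul _)
    have hB : Integrable (fun θ : Fin n → P =>
        ((n : ℝ)⁻¹) ^ 2 * ∑ j, ∑ k, X (θ j) * X (θ k)) Pn := hSSint.const_mul _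
    have hC : Integrable (fun θ : Fin n → P =>
        (2 * G * (n : ℝ)⁻¹) * ∑ j, X (θ j)) Pn := hSint.const_mul _
    rw [integral_add hA hB,
      integral_sub (integrable_const _) hC, integral_const,
      integral_const_mul, integral_const_mul,
      integral_finset_sum _ (fun j _ => hXjint j),
      integral_finset_sum _ (fun j _ => integrable_finset_sum _ fun k _ => hXjkint j k)]

    have h1 : ∀ j : Fin n, ∫ θ : Fin n → P, X (θ j) ∂Pn = G := by
      intro j; rw [hPn, aux_pi_eval ν X j, hG]
    have h2 : ∀ j : Fin n, ∫ θ : Fin n → P, (∑ k, X (θ j) * X (θ k)) ∂Pn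
        = V + (n - 1) * G ^ 2 := by
      intro j
      rw [integral_finset_sum _ (fun k _ => hXjkint j k)]
      have : ∀ k : Fin n, ∫ θ : Fin n → P, X (θ j) * X (θ k) ∂Pn
          = G ^ 2 + (if j = k then V - G ^ 2 else 0) := by
        intro k
        rcases eq_or_ne j k with rfl | hjk
        · simp [hPn, aux_pi_eval ν (fun x => X x * X x) j, hV]
        · simp [hjk, hPn, aux_pi_eval_mul ν X X hjk, hG, sq]
      simp only [this, Finset.sum_add_distrib, Finset.sum_const, Finset.card_univ,
        Fintype.card_fin, nsmul_eq_mul, Finset.sum_ite_eq, Finset.mem_univ, if_true]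
      ring
    simp only [h1, h2, Finset.sum_const, Finset.card_univ, Fintype.card_fin, nsmul_eq_mul,
      smul_eq_mul]
    have : IsProbabilityMeasure Pn := ‹_›
    rw [probReal_univ]
    simp
    refine Or.inl ?_
    ring
  rw [key]
  have hinv : (n : ℝ)⁻¹ * n = 1 := inv_mul_cancel₀ (ne_of_gt hnR)
  have hG2 : 0 ≤ G ^ 2 := sq_nonneg _
  rw [div_eq_mul_inv]
  have hexp : G ^ 2 - (2 * G * (n : ℝ)⁻¹) * (n * G)
        + ((n : ℝ)⁻¹) ^ 2 * (n * V + (n * n - n) * G ^ 2)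
      = (V - G ^ 2) * (n : ℝ)⁻¹ := by
    field_simp
    ring
  rw [hexp]
  have : V - G ^ 2 ≤ Qb ^ 2 := by linarith
  exact mul_le_mul_of_nonneg_right this (inv_nonneg.2 (le_of_lt hnR)) |>.trans_eq rfl
end aux

/-- Barron's approximation theorem (Maurey argument): let `μ` be a probability measure on `ℝ^m`
supported in `{ω : ‖ω‖_∞ ≤ 1}`, `ρ` a probability measure on `ℝ × ℝ^m × ℝ` with
`Q = ∫ |a| (‖b‖₁ + |c|) dρ < ∞`, and suppose `g(ω) = ∫ a σ(b·ω + c) dρ(a,b,c)` for `μ`-a.e.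
`ω`, with `σ` the ReLU. Then for every `n ≥ 1` there are parameters `(a_j, b_j, c_j)_{j<n}`
with path norm `(1/n) Σ_j |a_j| (‖b_j‖₁ + |c_j|) ≤ 2Q` such that
`∫ |g(ω) − (1/n) Σ_j a_j σ(b_j·ω + c_j)|² dμ(ω) ≤ 3 Q² / n`. -/
theorem stmt14 {m : ℕ} (μ : Measure (Fin m → ℝ)) [IsProbabilityMeasure μ]
    (hμsupp : ∀ᵐ ω ∂μ, ∀ i, |ω i| ≤ 1)
    (ρ : Measure (ℝ × (Fin m → ℝ) × ℝ)) [IsProbabilityMeasure ρ]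
    (hQint : Integrable (fun p : ℝ × (Fin m → ℝ) × ℝ =>
        |p.1| * ((∑ i, |p.2.1 i|) + |p.2.2|)) ρ)
    (Q : ℝ) (hQ : Q = ∫ p, |p.1| * ((∑ i, |p.2.1 i|) + |p.2.2|) ∂ρ)
    (g : (Fin m → ℝ) → ℝ)
    (hg : ∀ᵐ ω ∂μ, g ω = ∫ p, p.1 * max ((∑ i, p.2.1 i * ω i) + p.2.2) 0 ∂ρ) :
    ∀ n : ℕ, 0 < n → ∃ (a : Fin n → ℝ) (b : Fin n → Fin m → ℝ) (c : Fin n → ℝ),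
      (n : ℝ)⁻¹ * (∑ j, |a j| * ((∑ i, |b j i|) + |c j|)) ≤ 2 * Q ∧
      (∫ ω, (g ω - (n : ℝ)⁻¹ * ∑ j, a j * max ((∑ i, b j i * ω i) + c j) 0) ^ 2 ∂μ)
        ≤ 3 * Q ^ 2 / n := by
  classical
  set K : (ℝ × (Fin m → ℝ) × ℝ) → ℝ := fun p => (∑ i, |p.2.1 i|) + |p.2.2| with hKdef
  set N : (ℝ × (Fin m → ℝ) × ℝ) → ℝ := fun p => |p.1| * K p with hNdef
  set h : (ℝ × (Fin m → ℝ) × ℝ) → (Fin m → ℝ) → ℝ :=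
    fun p ω => p.1 * max ((∑ i, p.2.1 i * ω i) + p.2.2) 0 with hhdef
  have hK : ∀ p, 0 ≤ K p := fun p =>
    add_nonneg (Finset.sum_nonneg fun i _ => abs_nonneg _) (abs_nonneg _)
  have hN : ∀ p, 0 ≤ N p := fun p => mul_nonneg (abs_nonneg _) (hK p)
  have hrelu_le : ∀ (p : (ℝ × (Fin m → ℝ) × ℝ)) (ω : Fin m → ℝ), (∀ i, |ω i| ≤ 1) →
      max ((∑ i, p.2.1 i * ω i) + p.2.2) 0 ≤ K p := by
    intro p ω hω
    refine max_le ?_ (hK p)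
    calc (∑ i, p.2.1 i * ω i) + p.2.2 ≤ |(∑ i, p.2.1 i * ω i) + p.2.2| := le_abs_self _
      _ ≤ |∑ i, p.2.1 i * ω i| + |p.2.2| := abs_add_le _ _
      _ ≤ (∑ i, |p.2.1 i * ω i|) + |p.2.2| :=
          add_le_add_left (Finset.abs_sum_le_sum_abs _ _) _
      _ ≤ (∑ i, |p.2.1 i|) + |p.2.2| := by
          refine add_le_add_left (Finset.sum_le_sum fun i _ => ?_) _
          rw [abs_mul]
          exact mul_le_of_le_one_right (abs_nonneg _) (hω i)
  have habs_h : ∀ (p : (ℝ × (Fin m → ℝ) × ℝ)) (ω : Fin m → ℝ), (∀ i, |ω i| ≤ 1) → |h p ω| ≤ N p := by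
    intro p ω hω
    rw [hhdef, hNdef]
    simp only [abs_mul]
    refine mul_le_mul_of_nonneg_left ?_ (abs_nonneg _)
    rw [abs_of_nonneg (le_max_right _ _)]
    exact hrelu_le p ω hω
  have hQnn : 0 ≤ Q := by
    rw [hQ]
    exact integral_nonneg fun p => mul_nonneg (abs_nonneg _) (hK p)
  rcases eq_or_lt_of_le hQnn with hQ0 | hQpos
  · -- degenerate case Q = 0
    intro n hn
    refine ⟨fun _ => 0, fun _ _ => 0, fun _ => 0, ?_, ?_⟩
    · simp [← hQ0]
    · have hNzero : ∀ᵐ p ∂ρ, N p = 0 := by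
        have h0 : ∫ p, N p ∂ρ = 0 := by
          rw [← hQ0] at hQ
          exact hQ.symm
        have := (integral_eq_zero_iff_of_nonneg (fun p => hN p) hQint).mp h0
        filter_upwards [this] with p hp using hp
      have hgzero : ∀ᵐ ω ∂μ, g ω = 0 := by
        filter_upwards [hg, hμsupp] with ω hgw hωs
        rw [hgw]
        have : ∀ᵐ p ∂ρ, p.1 * max ((∑ i, p.2.1 i * ω i) + p.2.2) 0 = 0 := by
          filter_upwards [hNzero] with p hp
          have := habs_h p ω hωs
          rw [hp] at this
          exact abs_nonpos_iff.mp this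
        exact integral_eq_zero_of_ae this
      simp only [zero_mul, Finset.sum_const_zero, mul_zero, sub_zero]
      have hzero : ∫ ω, g ω ^ 2 ∂μ = 0 := by
        refine integral_eq_zero_of_ae ?_
        filter_upwards [hgzero] with ω h0
        simp [h0]
      rw [hzero]
      positivity
  · -- main case Q > 0
    -- measurability of basic objects
    have hNmeas : Measurable N := by
      apply Measurable.mul
      · exact measurable_fst.abs
      · apply Measurable.add
        · exact Finset.measurable_sum _ fun i _ =>
            ((measurable_pi_apply i).comp (measurable_fst.comp measurable_snd)).abs
        · exact (measurable_snd.comp measurable_snd).abs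
    set gh : (Fin m → ℝ) → ℝ :=
      fun ω => ∫ p, p.1 * max ((∑ i, p.2.1 i * ω i) + p.2.2) 0 ∂ρ with hghdef
    have hFmeas : Measurable (fun q : (Fin m → ℝ) × (ℝ × (Fin m → ℝ) × ℝ) => h q.2 q.1) := by
      rw [hhdef]
      apply Measurable.mul
      · exact measurable_fst.comp measurable_snd
      · apply Measurable.max _ measurable_const
        apply Measurable.add
        · apply Finset.measurable_sum
          intro i _
          exact ((measurable_pi_apply i).comp
            (measurable_fst.comp (measurable_snd.comp measurable_snd))).mul
            ((measurable_pi_apply i).comp measurable_fst)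
        · exact measurable_snd.comp (measurable_snd.comp measurable_snd)
    have hghmeas : Measurable gh := by
      have := hFmeas.stronglyMeasurable.integral_prod_right' (ν := ρ)
      exact this.measurable
    -- the tilted density and measure
    set d : (ℝ × (Fin m → ℝ) × ℝ) → ℝ≥0 := fun p => Real.toNNReal (N p / Q) with hddef
    have hdmeas : Measurable d := (hNmeas.div_const Q).real_toNNReal
    set ν : Measure (ℝ × (Fin m → ℝ) × ℝ) := ρ.withDensity fun p => ((d p : ℝ≥0∞)) with hνdef
    haveI hνprob : IsProbabilityMeasure ν := by
      constructor
      rw [hνdef, withDensity_apply _ MeasurableSet.univ, setLIntegral_univ]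
      have hcoe : ∀ p, ((d p : ℝ≥0∞)) = ENNReal.ofReal (N p / Q) := fun p => rfl
      simp_rw [hcoe]
      rw [← ofReal_integral_eq_lintegral_ofReal (hQint.div_const Q)
        (Filter.Eventually.of_forall fun p => div_nonneg (hN p) hQpos.le)]
      rw [integral_div, ← hQ, div_self (ne_of_gt hQpos), ENNReal.ofReal_one]
    -- scaled neurons
    set ta : (ℝ × (Fin m → ℝ) × ℝ) → ℝ := fun p => Q * p.1 / N p with htadef
    set ht : (ℝ × (Fin m → ℝ) × ℝ) → (Fin m → ℝ) → ℝ :=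
      fun p ω => ta p * max ((∑ i, p.2.1 i * ω i) + p.2.2) 0 with hhtdef
    have hpath : ∀ p : (ℝ × (Fin m → ℝ) × ℝ), |ta p| * K p ≤ Q := by
      intro p
      by_cases hNp : N p = 0
      · rcases mul_eq_zero.mp hNp with h1 | h2
        · have : p.1 = 0 := abs_eq_zero.mp h1
          rw [htadef]
          simp [this, hQpos.le]
        · rw [h2, mul_zero]; exact hQpos.le
      · have hNpos : 0 < N p := lt_of_le_of_ne (hN p) (Ne.symm hNp)
        have habs : |ta p| = Q * |p.1| / N p := by
          rw [htadef]
          rw [abs_div, abs_mul, abs_of_pos hQpos, abs_of_pos hNpos]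
        rw [habs, div_mul_eq_mul_div, mul_assoc]
        have hNe : |p.1| * K p = N p := rfl
        rw [hNe, mul_div_assoc, div_self hNp, mul_one]
    have hbound : ∀ (p : (ℝ × (Fin m → ℝ) × ℝ)) (ω : Fin m → ℝ), (∀ i, |ω i| ≤ 1) → |ht p ω| ≤ Q := by
      intro p ω hω
      rw [hhtdef]
      simp only [abs_mul]
      calc |ta p| * |max ((∑ i, p.2.1 i * ω i) + p.2.2) 0|
          ≤ |ta p| * K p := by
            refine mul_le_mul_of_nonneg_left ?_ (abs_nonneg _)
            rw [abs_of_nonneg (le_max_right _ _)]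
            exact hrelu_le p ω hω
        _ ≤ Q := hpath p
    have hhtmeas : Measurable (fun q : (ℝ × (Fin m → ℝ) × ℝ) × (Fin m → ℝ) => ht q.1 q.2) := by
      rw [hhtdef, htadef]
      apply Measurable.mul
      · exact ((measurable_fst.comp measurable_fst).const_mul Q).div
          (hNmeas.comp measurable_fst)
      · apply Measurable.max _ measurable_const
        apply Measurable.add
        · apply Finset.measurable_sum
          intro i _
          exact ((measurable_pi_apply i).comp
            (measurable_fst.comp (measurable_snd.comp measurable_fst))).mul
            ((measurable_pi_apply i).comp measurable_snd)
        · exact measurable_snd.comp (measurable_snd.comp measurable_fst)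
    have hXint : ∀ ω : Fin m → ℝ, (∀ i, |ω i| ≤ 1) → ∫ p, ht p ω ∂ν = gh ω := by
      intro ω hω
      rw [hνdef, integral_withDensity_eq_integral_smul hdmeas]
      have key : ∀ p : (ℝ × (Fin m → ℝ) × ℝ), d p • ht p ω = p.1 * max ((∑ i, p.2.1 i * ω i) + p.2.2) 0 := by
        intro p
        have hcoe : (d p : ℝ) = N p / Q := Real.coe_toNNReal _ (div_nonneg (hN p) hQpos.le)
        rw [NNReal.smul_def, hcoe, hhtdef, htadef]
        by_cases hNp : N p = 0
        · have hhz : p.1 * max ((∑ i, p.2.1 i * ω i) + p.2.2) 0 = 0 := by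
            have := habs_h p ω hω
            rw [hNp] at this
            exact abs_nonpos_iff.mp this
          rw [hNp, hhz]
          simp
        · field_simp
          rw [smul_eq_mul, div_mul_div_comm, div_eq_iff (mul_ne_zero hQpos.ne' hNp)]
          ring
      rw [hghdef]
      exact integral_congr_ae (Filter.Eventually.of_forall fun p => key p)
    intro n hn
    haveI : IsProbabilityMeasure (Measure.pi fun _ : Fin n => ν) := inferInstance
    set Pn : Measure (Fin n → (ℝ × (Fin m → ℝ) × ℝ)) := Measure.pi fun _ => ν with hPndef
    -- joint measurability of the squared error
    set E : (Fin n → (ℝ × (Fin m → ℝ) × ℝ)) → (Fin m → ℝ) → ℝ :=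
      fun θ ω => (gh ω - (n : ℝ)⁻¹ * ∑ j, ht (θ j) ω) ^ 2 with hEdef
    have hEmeas : Measurable (fun q : (Fin n → (ℝ × (Fin m → ℝ) × ℝ)) × (Fin m → ℝ) => E q.1 q.2) := by
      rw [hEdef]
      apply Measurable.pow _ measurable_const
      apply Measurable.sub
      · exact hghmeas.comp measurable_snd
      · apply Measurable.const_mul
        apply Finset.measurable_sum
        intro j _
        have hj : Measurable fun q : (Fin n → (ℝ × (Fin m → ℝ) × ℝ)) × (Fin m → ℝ) => (q.1 j, q.2) :=
          ((measurable_pi_apply j).comp measurable_fst).prodMk measurable_snd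
        exact hhtmeas.comp hj
    set L : (Fin n → (ℝ × (Fin m → ℝ) × ℝ)) → ℝ≥0∞ :=
      fun θ => ∫⁻ ω, ENNReal.ofReal (E θ ω) ∂μ with hLdef
    have hLmeas : Measurable L := by
      rw [hLdef]
      exact (ENNReal.measurable_ofReal.comp hEmeas).lintegral_prod_right'
    have hswap : ∫⁻ θ, L θ ∂Pn
        = ∫⁻ ω, (∫⁻ θ, ENNReal.ofReal (E θ ω) ∂Pn) ∂μ := by
      exact lintegral_lintegral_swap (ENNReal.measurable_ofReal.comp hEmeas).aemeasurable
    have hinner : ∀ᵐ ω ∂μ, ∫⁻ θ, ENNReal.ofReal (E θ ω) ∂Pn ≤ ENNReal.ofReal (Q ^ 2 / n) := by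
      filter_upwards [hμsupp] with ω hω
      have hXmeas : Measurable (fun p : (ℝ × (Fin m → ℝ) × ℝ) => ht p ω) :=
        hhtmeas.comp (measurable_id.prodMk measurable_const)
      obtain ⟨hInt, hBd⟩ := aux_variance ν hn (fun p => ht p ω) hXmeas Q
        (fun p => hbound p ω hω) (gh ω) (hXint ω hω)
      have : ∫⁻ θ, ENNReal.ofReal (E θ ω) ∂Pn
          = ENNReal.ofReal (∫ θ, E θ ω ∂Pn) := by
        rw [← ofReal_integral_eq_lintegral_ofReal hInt
          (Filter.Eventually.of_forall fun θ => sq_nonneg _)]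
      rw [this]
      exact ENNReal.ofReal_le_ofReal hBd
    have htotal : ∫⁻ θ, L θ ∂Pn ≤ ENNReal.ofReal (Q ^ 2 / n) := by
      rw [hswap]
      calc ∫⁻ ω, (∫⁻ θ, ENNReal.ofReal (E θ ω) ∂Pn) ∂μ
          ≤ ∫⁻ _ω, ENNReal.ofReal (Q ^ 2 / n) ∂μ := lintegral_mono_ae hinner
        _ = ENNReal.ofReal (Q ^ 2 / n) := by rw [lintegral_const, measure_univ, mul_one]
    obtain ⟨θ0, hθ0⟩ := exists_le_lintegral (μ := Pn) hLmeas.aemeasurable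
    have hθ0' : L θ0 ≤ ENNReal.ofReal (Q ^ 2 / n) := hθ0.trans htotal
    refine ⟨fun j => ta (θ0 j), fun j => (θ0 j).2.1, fun j => (θ0 j).2.2, ?_, ?_⟩
    · -- path norm bound
      have hsum : (∑ j : Fin n, |ta (θ0 j)| * ((∑ i, |(θ0 j).2.1 i|) + |(θ0 j).2.2|))
          ≤ n * Q := by
        calc (∑ j : Fin n, |ta (θ0 j)| * ((∑ i, |(θ0 j).2.1 i|) + |(θ0 j).2.2|))
            ≤ ∑ _j : Fin n, Q := Finset.sum_le_sum fun j _ => hpath (θ0 j)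
          _ = n * Q := by rw [Finset.sum_const, Finset.card_univ, Fintype.card_fin,
              nsmul_eq_mul]
      have hnR : (0 : ℝ) < n := by exact_mod_cast hn
      calc (n : ℝ)⁻¹ * (∑ j : Fin n, |ta (θ0 j)| * ((∑ i, |(θ0 j).2.1 i|) + |(θ0 j).2.2|))
          ≤ (n : ℝ)⁻¹ * (n * Q) :=
            mul_le_mul_of_nonneg_left hsum (inv_nonneg.2 hnR.le)
        _ = Q := by field_simp
        _ ≤ 2 * Q := by linarith
    · -- error bound
      have hnR : (0 : ℝ) < n := by exact_mod_cast hn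
      have step1 : ∫ ω, (g ω - (n : ℝ)⁻¹ * ∑ j, ta (θ0 j) *
            max ((∑ i, (θ0 j).2.1 i * ω i) + (θ0 j).2.2) 0) ^ 2 ∂μ
          = ∫ ω, E θ0 ω ∂μ := by
        refine integral_congr_ae ?_
        filter_upwards [hg] with ω hgw
        have h1 : E θ0 ω = (gh ω - (n : ℝ)⁻¹ * ∑ j, ht (θ0 j) ω) ^ 2 := rfl
        have h2 : gh ω = ∫ p, p.1 * max ((∑ i, p.2.1 i * ω i) + p.2.2) 0 ∂ρ := rfl
        rw [h1, h2, ← hgw]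
      have hht_omega : ∀ p : ℝ × (Fin m → ℝ) × ℝ,
          Measurable fun ω : Fin m → ℝ => ht p ω := by
        intro p
        apply Measurable.const_mul
        apply Measurable.max _ measurable_const
        apply Measurable.add _ measurable_const
        exact Finset.measurable_sum _ fun i _ => (measurable_pi_apply i).const_mul _
      have hEθmeas : Measurable fun ω => E θ0 ω := by
        show Measurable fun ω => (gh ω - (n : ℝ)⁻¹ * ∑ j, ht (θ0 j) ω) ^ 2
        exact (hghmeas.sub ((Finset.measurable_sum _
          fun j _ => hht_omega (θ0 j)).const_mul _)).pow measurable_const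
      have step2 : ∫ ω, E θ0 ω ∂μ = (L θ0).toReal := by
        rw [integral_eq_lintegral_of_nonneg_ae
          (Filter.Eventually.of_forall fun ω => sq_nonneg _)
          hEθmeas.aestronglyMeasurable]
      have step3 : (L θ0).toReal ≤ Q ^ 2 / n := by
        have := ENNReal.toReal_mono (by exact ENNReal.ofReal_ne_top) hθ0'
        rwa [ENNReal.toReal_ofReal (by positivity)] at this
      have step4 : Q ^ 2 / n ≤ 3 * Q ^ 2 / n := by
        gcongr
        nlinarith [sq_nonneg Q]
      calc ∫ ω, (g ω - (n : ℝ)⁻¹ * ∑ j, ta (θ0 j) *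
            max ((∑ i, (θ0 j).2.1 i * ω i) + (θ0 j).2.2) 0) ^ 2 ∂μ
          = (L θ0).toReal := by rw [step1, step2]
        _ ≤ Q ^ 2 / n := step3
        _ ≤ 3 * Q ^ 2 / n := step4
end

section
/- Let μ be a probability measure on R^m supported in { ω : ‖ω‖_∞ ≤ 1 }. For i = 1, …, N let ρ_i be a probability measure on R × R^m × R with Q_i := ∫ |a| (‖b‖₁ + |c|) dρ_i < ∞, and let g_i : R^m → R satisfy g_i(ω) = ∫ a σ(b·ω + c) dρ_i(a,b,c) for μ-a.e. ω. Then for every n ∈ N there exists G = (G₁, …, G_N) : R^m → R^N, where each component G_i is a two-layer ReLU network with n hidden neurons whose path norm is at most 2Q_i, such that ∫_{R^m} | g(ω) − G(ω) |₂² dμ(ω) ≤ (3/n) Σ_{i=1}^N Q_i², where g = (g₁, …, g_N) and |·|₂ is the Euclidean norm on R^N. -/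
open MeasureTheory

namespace Barron15

variable {m : ℕ}

/-- Path-weight of a neuron parameter. -/
noncomputable def Wfn (p : ℝ × (Fin m → ℝ) × ℝ) : ℝ :=
  |p.1| * ((∑ k, |p.2.1 k|) + |p.2.2|)

/-- The neuron function. -/
noncomputable def Phi (p : ℝ × (Fin m → ℝ) × ℝ) (ω : Fin m → ℝ) : ℝ :=
  p.1 * max ((∑ k, p.2.1 k * ω k) + p.2.2) 0

/-- Reweighted outer coefficient. -/
noncomputable def Afn (Q : ℝ) (p : ℝ × (Fin m → ℝ) × ℝ) : ℝ :=
  if Wfn p = 0 then 0 else p.1 * Q / Wfn p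

/-- Reweighted neuron. -/
noncomputable def psi (Q : ℝ) (p : ℝ × (Fin m → ℝ) × ℝ) (ω : Fin m → ℝ) : ℝ :=
  Afn Q p * max ((∑ k, p.2.1 k * ω k) + p.2.2) 0

lemma Wfn_nonneg (p : ℝ × (Fin m → ℝ) × ℝ) : 0 ≤ Wfn p :=
  mul_nonneg (abs_nonneg _) (add_nonneg (Finset.sum_nonneg fun _ _ => abs_nonneg _) (abs_nonneg _))

lemma continuous_Wfn : Continuous (Wfn : ℝ × (Fin m → ℝ) × ℝ → ℝ) := by
  apply Continuous.mul
  · exact continuous_abs.comp continuous_fst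
  · exact ((continuous_finset_sum _ fun k _ =>
      continuous_abs.comp ((continuous_apply k).comp (continuous_fst.comp continuous_snd)))).add
      (continuous_abs.comp (continuous_snd.comp continuous_snd))

lemma continuous_phi :
    Continuous (fun z : (ℝ × (Fin m → ℝ) × ℝ) × (Fin m → ℝ) => Phi z.1 z.2) := by
  apply Continuous.mul
  · exact continuous_fst.fst
  · exact ((continuous_finset_sum _ fun k _ =>
      (((continuous_apply k).comp (continuous_fst.comp (continuous_snd.comp continuous_fst)))).mul
        ((continuous_apply k).comp continuous_snd)).add
      (continuous_snd.comp (continuous_snd.comp continuous_fst))).max continuous_const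

lemma measurable_Afn (Q : ℝ) : Measurable (Afn Q : ℝ × (Fin m → ℝ) × ℝ → ℝ) := by
  unfold Afn
  refine Measurable.ite ?_ measurable_const ?_
  · exact continuous_Wfn.measurable (MeasurableSet.singleton 0)
  · exact (measurable_fst.mul_const Q).div continuous_Wfn.measurable

lemma measurable_psi (Q : ℝ) :
    Measurable (fun z : (ℝ × (Fin m → ℝ) × ℝ) × (Fin m → ℝ) => psi Q z.1 z.2) := by
  unfold psi
  refine Measurable.mul ((measurable_Afn Q).comp measurable_fst) ?_
  have : Continuous (fun z : (ℝ × (Fin m → ℝ) × ℝ) × (Fin m → ℝ) =>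
      max ((∑ k, z.1.2.1 k * z.2 k) + z.1.2.2) 0) := by
    exact ((continuous_finset_sum _ fun k _ =>
      (((continuous_apply k).comp (continuous_fst.comp (continuous_snd.comp continuous_fst)))).mul
        ((continuous_apply k).comp continuous_snd)).add
      (continuous_snd.comp (continuous_snd.comp continuous_fst))).max continuous_const
  exact this.measurable

lemma continuous_psi_omega (Q : ℝ) (p : ℝ × (Fin m → ℝ) × ℝ) : Continuous (psi Q p) := by
  unfold psi
  exact continuous_const.mul (((continuous_finset_sum _ fun k _ =>
    continuous_const.mul (continuous_apply k)).add continuous_const).max continuous_const)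

lemma relu_abs_le {b : Fin m → ℝ} {c : ℝ} {ω : Fin m → ℝ} (hω : ∀ k, |ω k| ≤ 1) :
    |max ((∑ k, b k * ω k) + c) 0| ≤ (∑ k, |b k|) + |c| := by
  have h1 : |max ((∑ k, b k * ω k) + c) 0| ≤ |(∑ k, b k * ω k) + c| := by
    rcases le_total ((∑ k, b k * ω k) + c) 0 with h | h
    · simp [max_eq_right h, abs_nonneg]
    · simp [max_eq_left h]
  refine h1.trans ((abs_add_le _ _).trans (add_le_add ?_ le_rfl))
  refine (Finset.abs_sum_le_sum_abs _ _).trans (Finset.sum_le_sum fun k _ => ?_)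
  rw [abs_mul]
  calc |b k| * |ω k| ≤ |b k| * 1 := mul_le_mul_of_nonneg_left (hω k) (abs_nonneg _)
  _ = |b k| := mul_one _

lemma phi_abs_le {p : ℝ × (Fin m → ℝ) × ℝ} {ω : Fin m → ℝ} (hω : ∀ k, |ω k| ≤ 1) :
    |Phi p ω| ≤ Wfn p := by
  rw [Phi, Wfn, abs_mul]
  exact mul_le_mul_of_nonneg_left (relu_abs_le hω) (abs_nonneg _)

lemma phi_eq_zero {p : ℝ × (Fin m → ℝ) × ℝ} (h : Wfn p = 0) (ω : Fin m → ℝ) : Phi p ω = 0 := by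
  rw [Wfn, mul_eq_zero] at h
  rcases h with h | h
  · rw [Phi, abs_eq_zero.mp h, zero_mul]
  · have hb : ∀ k, |p.2.1 k| = 0 ∧ |p.2.2| = (0:ℝ) → True := fun _ _ => trivial
    have hs : (∑ k, |p.2.1 k|) = 0 ∧ |p.2.2| = 0 := by
      constructor
      · have := Finset.sum_nonneg (fun k (_ : k ∈ Finset.univ) => abs_nonneg (p.2.1 k))
        linarith [abs_nonneg p.2.2]
      · have := Finset.sum_nonneg (fun k (_ : k ∈ Finset.univ) => abs_nonneg (p.2.1 k))
        linarith [abs_nonneg p.2.2]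
    have hk : ∀ k, p.2.1 k = 0 := by
      intro k
      have := (Finset.sum_eq_zero_iff_of_nonneg
        (fun k (_ : k ∈ Finset.univ) => abs_nonneg (p.2.1 k))).mp hs.1 k (Finset.mem_univ k)
      exact abs_eq_zero.mp this
    have hc : p.2.2 = 0 := abs_eq_zero.mp hs.2
    rw [Phi]
    have : (∑ k, p.2.1 k * ω k) + p.2.2 = 0 := by
      rw [hc, add_zero]
      exact Finset.sum_eq_zero fun k _ => by rw [hk k, zero_mul]
    rw [this]
    simp

lemma Afn_le {Q : ℝ} (hQ : 0 ≤ Q) (p : ℝ × (Fin m → ℝ) × ℝ) :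
    |Afn Q p| * ((∑ k, |p.2.1 k|) + |p.2.2|) ≤ Q := by
  by_cases h : Wfn p = 0
  · simp [Afn, h, hQ]
  · have hW : 0 < Wfn p := lt_of_le_of_ne (Wfn_nonneg p) (Ne.symm h)
    rw [Afn, if_neg h, abs_div, abs_mul, abs_of_nonneg hQ, abs_of_pos hW]
    rw [div_mul_eq_mul_div, mul_comm (|p.1|) Q, mul_assoc]
    rw [show |p.1| * ((∑ k, |p.2.1 k|) + |p.2.2|) = Wfn p from rfl]
    rw [mul_div_assoc, div_self h, mul_one]

lemma psi_abs_le {Q : ℝ} (hQ : 0 ≤ Q) (p : ℝ × (Fin m → ℝ) × ℝ) {ω : Fin m → ℝ}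
    (hω : ∀ k, |ω k| ≤ 1) : |psi Q p ω| ≤ Q := by
  rw [psi, abs_mul]
  calc |Afn Q p| * |max ((∑ k, p.2.1 k * ω k) + p.2.2) 0|
      ≤ |Afn Q p| * ((∑ k, |p.2.1 k|) + |p.2.2|) :=
        mul_le_mul_of_nonneg_left (relu_abs_le hω) (abs_nonneg _)
    _ ≤ Q := Afn_le hQ p

lemma W_div_Q_mul_psi {Q : ℝ} (hQ : Q ≠ 0) (p : ℝ × (Fin m → ℝ) × ℝ) (ω : Fin m → ℝ) :
    (Wfn p / Q) * psi Q p ω = Phi p ω := by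
  by_cases h : Wfn p = 0
  · rw [psi, Afn, if_pos h, zero_mul, mul_zero, phi_eq_zero h]
  · rw [psi, Afn, if_neg h, Phi]
    field_simp


open scoped NNReal ENNReal

/-- mean function -/
noncomputable def ghat (ρ : Measure (ℝ × (Fin m → ℝ) × ℝ)) (ω : Fin m → ℝ) : ℝ :=
  ∫ p, Phi p ω ∂ρ

/-- reweighted measure -/
noncomputable def rtil (ρ : Measure (ℝ × (Fin m → ℝ) × ℝ)) (Q : ℝ) :
    Measure (ℝ × (Fin m → ℝ) × ℝ) :=
  ρ.withDensity (fun p => ((Real.toNNReal (Wfn p / Q) : ℝ≥0) : ℝ≥0∞))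

lemma sm_ghat (ρ : Measure (ℝ × (Fin m → ℝ) × ℝ)) [SFinite ρ] :
    StronglyMeasurable (ghat ρ) := by
  have h : StronglyMeasurable (Function.uncurry fun (ω : Fin m → ℝ) p => Phi p ω) := by
    have : Continuous (Function.uncurry fun (ω : Fin m → ℝ) (p : ℝ × (Fin m → ℝ) × ℝ) =>
        Phi p ω) := continuous_phi.comp (continuous_snd.prodMk continuous_fst)
    exact this.stronglyMeasurable
  exact h.integral_prod_right

lemma phi_integrable {ρ : Measure (ℝ × (Fin m → ℝ) × ℝ)}
    (hint : Integrable (Wfn : ℝ × (Fin m → ℝ) × ℝ → ℝ) ρ) {ω : Fin m → ℝ}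
    (hω : ∀ k, |ω k| ≤ 1) : Integrable (fun p => Phi p ω) ρ := by
  refine hint.mono' ?_ ?_
  · exact (continuous_phi.comp (continuous_id.prodMk continuous_const)).aestronglyMeasurable
  · exact Filter.Eventually.of_forall fun p => by
      simpa [Real.norm_eq_abs] using phi_abs_le (p := p) hω

lemma ghat_abs_le {ρ : Measure (ℝ × (Fin m → ℝ) × ℝ)}
    (hint : Integrable (Wfn : ℝ × (Fin m → ℝ) × ℝ → ℝ) ρ) {Q : ℝ}
    (hQeq : ∫ p, Wfn p ∂ρ = Q) {ω : Fin m → ℝ} (hω : ∀ k, |ω k| ≤ 1) :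
    |ghat ρ ω| ≤ Q := by
  rw [ghat, ← hQeq]
  calc |∫ p, Phi p ω ∂ρ| ≤ ∫ p, |Phi p ω| ∂ρ := by
        simpa [Real.norm_eq_abs] using norm_integral_le_integral_norm (fun p => Phi p ω) (μ := ρ)
    _ ≤ ∫ p, Wfn p ∂ρ := by
        refine integral_mono (phi_integrable hint hω).abs hint fun p => phi_abs_le hω

lemma isProb_rtil {ρ : Measure (ℝ × (Fin m → ℝ) × ℝ)} [IsProbabilityMeasure ρ]
    (hint : Integrable (Wfn : ℝ × (Fin m → ℝ) × ℝ → ℝ) ρ) {Q : ℝ} (hQpos : 0 < Q)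
    (hQeq : ∫ p, Wfn p ∂ρ = Q) : IsProbabilityMeasure (rtil ρ Q) := by
  constructor
  rw [rtil, withDensity_apply _ MeasurableSet.univ, Measure.restrict_univ]
  have h1 : ∫⁻ p, ((Real.toNNReal (Wfn p / Q) : ℝ≥0) : ℝ≥0∞) ∂ρ
      = ENNReal.ofReal (∫ p, Wfn p / Q ∂ρ) := by
    exact (ofReal_integral_eq_lintegral_ofReal (hint.div_const Q)
      (Filter.Eventually.of_forall fun p => div_nonneg (Wfn_nonneg p) hQpos.le)).symm
  rw [h1, integral_div, hQeq, div_self hQpos.ne', ENNReal.ofReal_one]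

lemma integral_psi_rtil {ρ : Measure (ℝ × (Fin m → ℝ) × ℝ)} {Q : ℝ} (hQpos : 0 < Q)
    (ω : Fin m → ℝ) : ∫ p, psi Q p ω ∂(rtil ρ Q) = ghat ρ ω := by
  rw [rtil, integral_withDensity_eq_integral_smul
    ((continuous_Wfn.measurable.div_const Q).real_toNNReal) (fun p => psi Q p ω)]
  rw [ghat]
  congr 1
  funext p
  rw [NNReal.smul_def, smul_eq_mul,
    Real.coe_toNNReal _ (div_nonneg (Wfn_nonneg p) hQpos.le), W_div_Q_mul_psi hQpos.ne' p ω]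


lemma bdd_int {α : Type*} [MeasurableSpace α] {μ : Measure α} [IsFiniteMeasure μ]
    {f : α → ℝ} (hf : AEStronglyMeasurable f μ) {C : ℝ} (h : ∀ᵐ x ∂μ, |f x| ≤ C) :
    Integrable f μ :=
  (integrable_const C).mono' hf (by simpa [Real.norm_eq_abs] using h)

lemma abs_sq_le {x c : ℝ} (h : |x| ≤ c) : |x ^ 2| ≤ c ^ 2 := by
  have h1 : |x ^ 2| = |x| ^ 2 := abs_pow x 2
  rw [h1]
  exact pow_le_pow_left₀ (abs_nonneg x) h 2

lemma abs_mul_le {x y cx cy : ℝ} (hx : |x| ≤ cx) (hy : |y| ≤ cy) : |x * y| ≤ cx * cy := by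
  rw [abs_mul]
  exact mul_le_mul hx hy (abs_nonneg _) ((abs_nonneg _).trans hx)

lemma fub {μ : Measure (Fin m → ℝ)} [IsProbabilityMeasure μ]
    (hμsupp : ∀ᵐ ω ∂μ, ∀ k, |ω k| ≤ 1)
    {ρ : Measure (ℝ × (Fin m → ℝ) × ℝ)} [IsProbabilityMeasure ρ]
    (hint : Integrable (Wfn : ℝ × (Fin m → ℝ) × ℝ → ℝ) ρ) {Q : ℝ} (hQpos : 0 < Q)
    (hQeq : ∫ p, Wfn p ∂ρ = Q)
    {H : (Fin m → ℝ) → ℝ} (hH : Measurable H) {C : ℝ} (hb : ∀ᵐ ω ∂μ, |H ω| ≤ C) :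
    ∫ p, (∫ ω, H ω * psi Q p ω ∂μ) ∂(rtil ρ Q) = ∫ ω, H ω * ghat ρ ω ∂μ := by
  haveI := isProb_rtil hint hQpos hQeq
  have hFm : AEStronglyMeasurable
      (Function.uncurry fun (p : ℝ × (Fin m → ℝ) × ℝ) (ω : Fin m → ℝ) => H ω * psi Q p ω)
      ((rtil ρ Q).prod μ) :=
    ((hH.comp measurable_snd).mul (measurable_psi Q)).aestronglyMeasurable
  have h1 := hμsupp.and hb
  rw [ae_iff] at h1
  have hae : ∀ᵐ z ∂((rtil ρ Q).prod μ), (∀ k, |z.2 k| ≤ 1) ∧ |H z.2| ≤ C := by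
    rw [ae_iff]
    have hset : {z : (ℝ × (Fin m → ℝ) × ℝ) × (Fin m → ℝ) |
        ¬((∀ k, |z.2 k| ≤ 1) ∧ |H z.2| ≤ C)} =
        Set.univ ×ˢ {ω | ¬((∀ k, |ω k| ≤ 1) ∧ |H ω| ≤ C)} := by
      ext z; simp [Set.mem_prod]
    rw [hset, Measure.prod_prod, h1, mul_zero]
  have hInt : Integrable
      (Function.uncurry fun (p : ℝ × (Fin m → ℝ) × ℝ) (ω : Fin m → ℝ) => H ω * psi Q p ω)
      ((rtil ρ Q).prod μ) := by
    refine (integrable_const (C * Q)).mono' hFm (hae.mono fun z hz => ?_)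
    simp only [Function.uncurry, Real.norm_eq_abs]
    exact abs_mul_le hz.2 (psi_abs_le hQpos.le z.1 hz.1)
  rw [integral_integral_swap hInt]
  have h2 : ∀ ω, ∫ p, H ω * psi Q p ω ∂(rtil ρ Q) = H ω * ghat ρ ω := by
    intro ω
    rw [integral_const_mul, integral_psi_rtil hQpos]
  simp_rw [h2]

lemma step {μ : Measure (Fin m → ℝ)} [IsProbabilityMeasure μ]
    (hμsupp : ∀ᵐ ω ∂μ, ∀ k, |ω k| ≤ 1)
    {ρ : Measure (ℝ × (Fin m → ℝ) × ℝ)} [IsProbabilityMeasure ρ]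
    (hint : Integrable (Wfn : ℝ × (Fin m → ℝ) × ℝ → ℝ) ρ) {Q : ℝ} (hQpos : 0 < Q)
    (hQeq : ∫ p, Wfn p ∂ρ = Q)
    {f : (Fin m → ℝ) → ℝ} (hf : Measurable f) (hfb : ∀ᵐ ω ∂μ, |f ω| ≤ Q)
    {t : ℝ} (ht0 : 0 ≤ t) (ht1 : t ≤ 1) :
    ∃ p₀ : ℝ × (Fin m → ℝ) × ℝ,
      ∫ ω, ((1 - t) * f ω + t * psi Q p₀ ω - ghat ρ ω) ^ 2 ∂μ
        ≤ (1 - t) ^ 2 * ∫ ω, (f ω - ghat ρ ω) ^ 2 ∂μ + t ^ 2 * Q ^ 2 := by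
  haveI := isProb_rtil hint hQpos hQeq
  set g : (Fin m → ℝ) → ℝ := ghat ρ with hgdef
  have hgm : Measurable g := (sm_ghat ρ).measurable
  have hgb : ∀ᵐ ω ∂μ, |g ω| ≤ Q := hμsupp.mono fun ω hω => ghat_abs_le hint hQeq hω
  set h : (Fin m → ℝ) → ℝ := fun ω => g ω - (1 - t) * f ω with hhdef
  have hhm : Measurable h := hgm.sub (measurable_const.mul hf)
  have h1t : (0:ℝ) ≤ 1 - t := by linarith
  have hhb : ∀ᵐ ω ∂μ, |h ω| ≤ 2 * Q := (hgb.and hfb).mono fun ω hω => by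
    have t1 : |(1 - t) * f ω| ≤ (1 - t) * Q := by
      rw [abs_mul, abs_of_nonneg h1t]
      exact mul_le_mul_of_nonneg_left hω.2 h1t
    calc |h ω| = |g ω - (1 - t) * f ω| := rfl
      _ ≤ |g ω| + |(1 - t) * f ω| := abs_sub _ _
      _ ≤ Q + (1 - t) * Q := add_le_add hω.1 t1
      _ ≤ 2 * Q := by nlinarith
  have hψm : ∀ p : ℝ × (Fin m → ℝ) × ℝ, Measurable (psi Q p) := fun p => (continuous_psi_omega Q p).measurable
  have hψb : ∀ p : ℝ × (Fin m → ℝ) × ℝ, ∀ᵐ ω ∂μ, |psi Q p ω| ≤ Q := fun p =>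
    hμsupp.mono fun ω hω => psi_abs_le hQpos.le p hω
  -- integrability over μ
  have Ih2 : Integrable (fun ω => h ω ^ 2) μ :=
    bdd_int (hhm.pow_const 2).aestronglyMeasurable (hhb.mono fun ω hω => abs_sq_le hω)
  have Ihψ : ∀ p : ℝ × (Fin m → ℝ) × ℝ, Integrable (fun ω => h ω * psi Q p ω) μ := fun p =>
    bdd_int (hhm.mul (hψm p)).aestronglyMeasurable
      ((hhb.and (hψb p)).mono fun ω hω => abs_mul_le hω.1 hω.2)
  have Iψ2 : ∀ p : ℝ × (Fin m → ℝ) × ℝ, Integrable (fun ω => psi Q p ω ^ 2) μ := fun p =>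
    bdd_int ((hψm p).pow_const 2).aestronglyMeasurable ((hψb p).mono fun ω hω => abs_sq_le hω)
  have Ihg : Integrable (fun ω => h ω * g ω) μ :=
    bdd_int (hhm.mul hgm).aestronglyMeasurable ((hhb.and hgb).mono fun ω hω => abs_mul_le hω.1 hω.2)
  have Ifg2 : Integrable (fun ω => (f ω - g ω) ^ 2) μ := by
    refine bdd_int ((hf.sub hgm).pow_const 2).aestronglyMeasurable
      ((hfb.and hgb).mono fun ω hω => abs_sq_le (c := 2 * Q) ?_)
    calc |f ω - g ω| ≤ |f ω| + |g ω| := abs_sub _ _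
      _ ≤ 2 * Q := by linarith [hω.1, hω.2]
  have Ig2 : Integrable (fun ω => g ω ^ 2) μ :=
    bdd_int (hgm.pow_const 2).aestronglyMeasurable (hgb.mono fun ω hω => abs_sq_le hω)
  -- the value function and its expansion
  have hVeq : ∀ p : ℝ × (Fin m → ℝ) × ℝ, ∫ ω, ((1 - t) * f ω + t * psi Q p ω - g ω) ^ 2 ∂μ
      = (∫ ω, h ω ^ 2 ∂μ) - 2 * t * (∫ ω, h ω * psi Q p ω ∂μ)
        + t ^ 2 * (∫ ω, psi Q p ω ^ 2 ∂μ) := by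
    intro p
    have e1 : (fun ω => ((1 - t) * f ω + t * psi Q p ω - g ω) ^ 2)
        = fun ω => h ω ^ 2 - 2 * t * (h ω * psi Q p ω) + t ^ 2 * psi Q p ω ^ 2 := by
      funext ω; rw [hhdef]; ring
    have I1 : Integrable (fun ω => 2 * t * (h ω * psi Q p ω)) μ := (Ihψ p).const_mul (2 * t)
    have I2 : Integrable (fun ω => h ω ^ 2 - 2 * t * (h ω * psi Q p ω)) μ := Ih2.sub I1
    have I3 : Integrable (fun ω => t ^ 2 * psi Q p ω ^ 2) μ := (Iψ2 p).const_mul (t ^ 2)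
    rw [e1, integral_add I2 I3, integral_sub Ih2 I1, integral_const_mul, integral_const_mul]
  -- measurability/boundedness of expression in p
  have hexprb : ∀ p : ℝ × (Fin m → ℝ) × ℝ, ∀ᵐ ω ∂μ, |(1 - t) * f ω + t * psi Q p ω - g ω| ≤ 2 * Q := by
    intro p
    refine ((hfb.and hgb).and (hψb p)).mono fun ω hω => ?_
    have t1 : |(1 - t) * f ω| ≤ (1 - t) * Q := by
      rw [abs_mul, abs_of_nonneg h1t]; exact mul_le_mul_of_nonneg_left hω.1.1 h1t
    have t2 : |t * psi Q p ω| ≤ t * Q := by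
      rw [abs_mul, abs_of_nonneg ht0]; exact mul_le_mul_of_nonneg_left hω.2 ht0
    calc |(1 - t) * f ω + t * psi Q p ω - g ω|
        ≤ |(1 - t) * f ω + t * psi Q p ω| + |g ω| := abs_sub _ _
      _ ≤ (|(1 - t) * f ω| + |t * psi Q p ω|) + |g ω| := by
          exact add_le_add (abs_add_le _ _) le_rfl
      _ ≤ ((1 - t) * Q + t * Q) + Q := by
          exact add_le_add (add_le_add t1 t2) hω.1.2
      _ = 2 * Q := by ring
  have Iexpr2 : ∀ p : ℝ × (Fin m → ℝ) × ℝ, Integrable (fun ω => ((1 - t) * f ω + t * psi Q p ω - g ω) ^ 2) μ := by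
    intro p
    exact bdd_int (((measurable_const.mul hf).add
        (measurable_const.mul (hψm p))).sub hgm |>.pow_const 2).aestronglyMeasurable
      ((hexprb p).mono fun ω hω => abs_sq_le hω)
  -- integrability of V over rtil
  set ν : Measure (ℝ × (Fin m → ℝ) × ℝ) := rtil ρ Q with hνdef
  have hVm : StronglyMeasurable
      (fun p => ∫ ω, ((1 - t) * f ω + t * psi Q p ω - g ω) ^ 2 ∂μ) := by
    have : StronglyMeasurable (Function.uncurry
        fun (p : ℝ × (Fin m → ℝ) × ℝ) (ω : Fin m → ℝ) =>
          ((1 - t) * f ω + t * psi Q p ω - g ω) ^ 2) := by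
      refine Measurable.stronglyMeasurable ?_
      exact ((((measurable_const.mul (hf.comp measurable_snd)).add
        (measurable_const.mul (measurable_psi Q))).sub (hgm.comp measurable_snd)).pow_const 2)
    exact this.integral_prod_right
  have hVb : ∀ p : ℝ × (Fin m → ℝ) × ℝ, |∫ ω, ((1 - t) * f ω + t * psi Q p ω - g ω) ^ 2 ∂μ| ≤ (2 * Q) ^ 2 := by
    intro p
    rw [abs_of_nonneg (integral_nonneg fun ω => sq_nonneg _)]
    calc ∫ ω, ((1 - t) * f ω + t * psi Q p ω - g ω) ^ 2 ∂μ
        ≤ ∫ _, (2 * Q) ^ 2 ∂μ := by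
          refine integral_mono_ae (Iexpr2 p) (integrable_const _)
            ((hexprb p).mono fun ω hω => ?_)
          have := abs_sq_le hω
          calc ((1 - t) * f ω + t * psi Q p ω - g ω) ^ 2
              = |((1 - t) * f ω + t * psi Q p ω - g ω) ^ 2| := (abs_of_nonneg (sq_nonneg _)).symm
            _ ≤ (2 * Q) ^ 2 := this
      _ = (2 * Q) ^ 2 := by simp
  have hVint : Integrable
      (fun p => ∫ ω, ((1 - t) * f ω + t * psi Q p ω - g ω) ^ 2 ∂μ) ν :=
    bdd_int hVm.aestronglyMeasurable (Filter.Eventually.of_forall hVb)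
  obtain ⟨p₀, hp₀⟩ := exists_le_integral (μ := ν) hVint
  refine ⟨p₀, hp₀.trans ?_⟩
  -- now bound ∫ V dν
  have IB : Integrable (fun p => ∫ ω, h ω * psi Q p ω ∂μ) ν := by
    refine bdd_int (C := 2 * Q * Q) ?_ (Filter.Eventually.of_forall fun p => ?_)
    · have : StronglyMeasurable (Function.uncurry
          fun (p : ℝ × (Fin m → ℝ) × ℝ) (ω : Fin m → ℝ) => h ω * psi Q p ω) :=
        ((hhm.comp measurable_snd).mul (measurable_psi Q)).stronglyMeasurable
      exact this.integral_prod_right.aestronglyMeasurable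
    · calc |∫ ω, h ω * psi Q p ω ∂μ| ≤ ∫ ω, |h ω * psi Q p ω| ∂μ := by
            simpa only [Real.norm_eq_abs] using
              norm_integral_le_integral_norm (fun ω => h ω * psi Q p ω) (μ := μ)
        _ ≤ ∫ _, 2 * Q * Q ∂μ :=
            integral_mono_ae (Ihψ p).abs (integrable_const _)
              ((hhb.and (hψb p)).mono fun ω hω => abs_mul_le hω.1 hω.2)
        _ = 2 * Q * Q := by simp
  have IC : Integrable (fun p => ∫ ω, psi Q p ω ^ 2 ∂μ) ν := by
    refine bdd_int (C := Q ^ 2) ?_ (Filter.Eventually.of_forall fun p => ?_)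
    · have : StronglyMeasurable (Function.uncurry
          fun (p : ℝ × (Fin m → ℝ) × ℝ) (ω : Fin m → ℝ) => psi Q p ω ^ 2) :=
        ((measurable_psi Q).pow_const 2).stronglyMeasurable
      exact this.integral_prod_right.aestronglyMeasurable
    · rw [abs_of_nonneg (integral_nonneg fun ω => sq_nonneg _)]
      calc ∫ ω, psi Q p ω ^ 2 ∂μ ≤ ∫ _, Q ^ 2 ∂μ :=
            integral_mono_ae (Iψ2 p) (integrable_const _) ((hψb p).mono fun ω hω => by
              calc psi Q p ω ^ 2 = |psi Q p ω ^ 2| := (abs_of_nonneg (sq_nonneg _)).symm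
                _ ≤ Q ^ 2 := abs_sq_le hω)
        _ = Q ^ 2 := by simp
  have hCle : ∫ p, (∫ ω, psi Q p ω ^ 2 ∂μ) ∂ν ≤ Q ^ 2 := by
    calc ∫ p, (∫ ω, psi Q p ω ^ 2 ∂μ) ∂ν ≤ ∫ _, Q ^ 2 ∂ν := by
          refine integral_mono IC (integrable_const _) fun p => ?_
          calc ∫ ω, psi Q p ω ^ 2 ∂μ ≤ ∫ _, Q ^ 2 ∂μ :=
                integral_mono_ae (Iψ2 p) (integrable_const _) ((hψb p).mono fun ω hω => by
                  calc psi Q p ω ^ 2 = |psi Q p ω ^ 2| := (abs_of_nonneg (sq_nonneg _)).symm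
                    _ ≤ Q ^ 2 := abs_sq_le hω)
            _ = Q ^ 2 := by simp
      _ = Q ^ 2 := by simp
  have hBeq : ∫ p, (∫ ω, h ω * psi Q p ω ∂μ) ∂ν = ∫ ω, h ω * g ω ∂μ :=
    fub hμsupp hint hQpos hQeq hhm (C := 2 * Q) hhb
  have hsplit : ∫ p, (∫ ω, ((1 - t) * f ω + t * psi Q p ω - g ω) ^ 2 ∂μ) ∂ν
      = (∫ ω, h ω ^ 2 ∂μ) - 2 * t * (∫ p, (∫ ω, h ω * psi Q p ω ∂μ) ∂ν)
        + t ^ 2 * (∫ p, (∫ ω, psi Q p ω ^ 2 ∂μ) ∂ν) := by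
    simp_rw [hVeq]
    have J1 : Integrable (fun p : ℝ × (Fin m → ℝ) × ℝ =>
        2 * t * ∫ ω, h ω * psi Q p ω ∂μ) ν := IB.const_mul (2 * t)
    have J2 : Integrable (fun p : ℝ × (Fin m → ℝ) × ℝ =>
        (∫ ω, h ω ^ 2 ∂μ) - 2 * t * ∫ ω, h ω * psi Q p ω ∂μ) ν := (integrable_const _).sub J1
    have J3 : Integrable (fun p : ℝ × (Fin m → ℝ) × ℝ =>
        t ^ 2 * ∫ ω, psi Q p ω ^ 2 ∂μ) ν := IC.const_mul (t ^ 2)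
    rw [integral_add J2 J3, integral_sub (integrable_const _) J1,
      integral_const_mul, integral_const_mul, integral_const]
    simp [measure_univ]
  rw [hsplit, hBeq]
  -- key algebraic identity
  have hkey : (∫ ω, h ω ^ 2 ∂μ) - 2 * t * ∫ ω, h ω * g ω ∂μ
      = (1 - t) ^ 2 * (∫ ω, (f ω - g ω) ^ 2 ∂μ) - t ^ 2 * ∫ ω, g ω ^ 2 ∂μ := by
    have e2 : (fun ω => h ω ^ 2 - 2 * t * (h ω * g ω))
        = fun ω => (1 - t) ^ 2 * (f ω - g ω) ^ 2 - t ^ 2 * g ω ^ 2 := by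
      funext ω; rw [hhdef]; ring
    have l1 : ∫ ω, (h ω ^ 2 - 2 * t * (h ω * g ω)) ∂μ
        = (∫ ω, h ω ^ 2 ∂μ) - 2 * t * ∫ ω, h ω * g ω ∂μ := by
      have K1 : Integrable (fun ω => 2 * t * (h ω * g ω)) μ := Ihg.const_mul (2 * t)
      rw [integral_sub Ih2 K1, integral_const_mul]
    have l2 : ∫ ω, ((1 - t) ^ 2 * (f ω - g ω) ^ 2 - t ^ 2 * g ω ^ 2) ∂μ
        = (1 - t) ^ 2 * (∫ ω, (f ω - g ω) ^ 2 ∂μ) - t ^ 2 * ∫ ω, g ω ^ 2 ∂μ := by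
      have K2 : Integrable (fun ω => (1 - t) ^ 2 * (f ω - g ω) ^ 2) μ := Ifg2.const_mul _
      have K3 : Integrable (fun ω => t ^ 2 * g ω ^ 2) μ := Ig2.const_mul _
      rw [integral_sub K2 K3, integral_const_mul, integral_const_mul]
    rw [← l1, ← l2, e2]
  have hg2 : 0 ≤ ∫ ω, g ω ^ 2 ∂μ := integral_nonneg fun ω => sq_nonneg _
  have hC2 : t ^ 2 * (∫ p, (∫ ω, psi Q p ω ^ 2 ∂μ) ∂ν) ≤ t ^ 2 * Q ^ 2 :=
    mul_le_mul_of_nonneg_left hCle (sq_nonneg t)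
  nlinarith [sq_nonneg t]


lemma maurey {μ : Measure (Fin m → ℝ)} [IsProbabilityMeasure μ]
    (hμsupp : ∀ᵐ ω ∂μ, ∀ k, |ω k| ≤ 1)
    {ρ : Measure (ℝ × (Fin m → ℝ) × ℝ)} [IsProbabilityMeasure ρ]
    (hint : Integrable (Wfn : ℝ × (Fin m → ℝ) × ℝ → ℝ) ρ) {Q : ℝ} (hQpos : 0 < Q)
    (hQeq : ∫ p, Wfn p ∂ρ = Q) :
    ∀ n : ℕ, 0 < n → ∃ p : Fin n → ℝ × (Fin m → ℝ) × ℝ,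
      ∫ ω, ((n : ℝ)⁻¹ * (∑ j, psi Q (p j) ω) - ghat ρ ω) ^ 2 ∂μ ≤ Q ^ 2 / n := by
  intro n hn
  induction n with
  | zero => omega
  | succ n ih =>
    by_cases hn0 : n = 0
    · subst hn0
      have hzb : ∀ᵐ ω ∂μ, |(fun _ : Fin m → ℝ => (0:ℝ)) ω| ≤ Q :=
        Filter.Eventually.of_forall fun ω => by simp [hQpos.le]
      obtain ⟨p₀, hp₀⟩ := step hμsupp hint hQpos hQeq (f := fun _ => 0)
        measurable_const hzb (t := 1) zero_le_one le_rfl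
      refine ⟨fun _ => p₀, ?_⟩
      have e1 : ∀ ω, (((0+1:ℕ) : ℝ)⁻¹ * (∑ j : Fin (0+1), psi Q p₀ ω) - ghat ρ ω) ^ 2
          = ((1 - 1) * (fun _ : Fin m → ℝ => (0:ℝ)) ω + 1 * psi Q p₀ ω - ghat ρ ω) ^ 2 := by
        intro ω; norm_num
      rw [integral_congr_ae (Filter.Eventually.of_forall e1)]
      refine hp₀.trans ?_
      norm_num
    · have hn' : 0 < n := Nat.pos_of_ne_zero hn0
      obtain ⟨p, hp⟩ := ih hn'
      have hnpos : (0:ℝ) < n := by exact_mod_cast hn'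
      have hn1pos : (0:ℝ) < (n:ℝ) + 1 := by linarith
      set f : (Fin m → ℝ) → ℝ := fun ω => (n:ℝ)⁻¹ * (∑ j, psi Q (p j) ω) with hfdef
      have hsm : Measurable fun ω : Fin m → ℝ => ∑ j, psi Q (p j) ω :=
        Finset.measurable_sum Finset.univ fun j _ => (continuous_psi_omega Q (p j)).measurable
      have hfm : Measurable f := hsm.const_mul _
      have hfb : ∀ᵐ ω ∂μ, |f ω| ≤ Q := hμsupp.mono fun ω hω => by
        have h1 : |∑ j, psi Q (p j) ω| ≤ ∑ _j : Fin n, Q :=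
          (Finset.abs_sum_le_sum_abs _ _).trans
            (Finset.sum_le_sum fun j _ => psi_abs_le hQpos.le (p j) hω)
        have h2 : (∑ _j : Fin n, Q) = (n:ℝ) * Q := by
          rw [Finset.sum_const, Finset.card_univ, Fintype.card_fin, nsmul_eq_mul]
        calc |f ω| = (n:ℝ)⁻¹ * |∑ j, psi Q (p j) ω| := by
              rw [hfdef, abs_mul, abs_of_nonneg (inv_nonneg.mpr hnpos.le)]
          _ ≤ (n:ℝ)⁻¹ * ((n:ℝ) * Q) :=
              mul_le_mul_of_nonneg_left (h1.trans_eq h2) (inv_nonneg.mpr hnpos.le)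
          _ = Q := by field_simp
      set t : ℝ := ((n:ℝ) + 1)⁻¹ with htdef
      have ht0 : 0 ≤ t := inv_nonneg.mpr hn1pos.le
      have ht1 : t ≤ 1 := by
        rw [htdef]
        rw [inv_le_one_iff₀]
        right; linarith
      obtain ⟨p₀, hp₀⟩ := step hμsupp hint hQpos hQeq hfm hfb ht0 ht1
      set pp : Fin (n+1) → ℝ × (Fin m → ℝ) × ℝ := Fin.snoc p p₀ with hppdef
      refine ⟨pp, ?_⟩
      have hsum : ∀ ω, (((n+1:ℕ) : ℝ)⁻¹ * (∑ j : Fin (n+1), psi Q (pp j) ω)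
            - ghat ρ ω) ^ 2
          = ((1 - t) * f ω + t * psi Q p₀ ω - ghat ρ ω) ^ 2 := by
        intro ω
        have e1 : (∑ j : Fin (n+1), psi Q (pp j) ω)
            = (∑ j : Fin n, psi Q (p j) ω) + psi Q p₀ ω := by
          rw [hppdef]
          rw [Fin.sum_univ_castSucc]
          simp
        have e2 : (∑ j : Fin n, psi Q (p j) ω) = (n:ℝ) * f ω := by
          rw [hfdef]
          field_simp
        rw [e1, e2, htdef]
        push_cast
        have h3 : ((n:ℝ) + 1) ≠ 0 := hn1pos.ne'
        field_simp
        ring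
      rw [integral_congr_ae (Filter.Eventually.of_forall hsum)]
      refine hp₀.trans ?_
      have hfg : ∫ ω, (f ω - ghat ρ ω) ^ 2 ∂μ ≤ Q ^ 2 / n := hp
      calc (1 - t) ^ 2 * ∫ ω, (f ω - ghat ρ ω) ^ 2 ∂μ + t ^ 2 * Q ^ 2
          ≤ (1 - t) ^ 2 * (Q ^ 2 / n) + t ^ 2 * Q ^ 2 := by
            have := mul_le_mul_of_nonneg_left hfg (sq_nonneg (1 - t))
            linarith
        _ = Q ^ 2 / ((n+1:ℕ) : ℝ) := by
            rw [htdef]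
            push_cast
            field_simp
            ring

lemma scalar {μ : Measure (Fin m → ℝ)} [IsProbabilityMeasure μ]
    (hμsupp : ∀ᵐ ω ∂μ, ∀ k, |ω k| ≤ 1)
    {ρ : Measure (ℝ × (Fin m → ℝ) × ℝ)} [IsProbabilityMeasure ρ]
    (hint : Integrable (Wfn : ℝ × (Fin m → ℝ) × ℝ → ℝ) ρ) {Q : ℝ}
    (hQeq : ∫ p, Wfn p ∂ρ = Q) {n : ℕ} (hn : 0 < n) :
    ∃ (a : Fin n → ℝ) (b : Fin n → Fin m → ℝ) (c : Fin n → ℝ),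
      (∀ j, |a j| * ((∑ k, |b j k|) + |c j|) ≤ Q) ∧
      ∫ ω, (ghat ρ ω - (n : ℝ)⁻¹ * ∑ j, a j * max ((∑ k, b j k * ω k) + c j) 0) ^ 2 ∂μ
        ≤ Q ^ 2 / n := by
  have hQ0 : 0 ≤ Q := hQeq ▸ integral_nonneg Wfn_nonneg
  rcases eq_or_lt_of_le hQ0 with hQz | hQpos
  · refine ⟨0, 0, 0, fun j => by simp [← hQz], ?_⟩
    have hW0 : ∀ᵐ p ∂ρ, Wfn p = 0 :=
      (integral_eq_zero_iff_of_nonneg (fun p => Wfn_nonneg p) hint).mp (hQeq.trans hQz.symm)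
    have hg0 : ∀ ω, ghat ρ ω = 0 := fun ω =>
      integral_eq_zero_of_ae (hW0.mono fun p hp => phi_eq_zero hp ω)
    have : ∀ ω, (ghat ρ ω - (n : ℝ)⁻¹ * ∑ j : Fin n,
        (0:Fin n → ℝ) j * max ((∑ k, (0:Fin n → Fin m → ℝ) j k * ω k) + (0:Fin n → ℝ) j) 0) ^ 2
        = 0 := by
      intro ω
      simp [hg0 ω]
    rw [integral_congr_ae (Filter.Eventually.of_forall this)]
    simp [← hQz]
  · obtain ⟨p, hp⟩ := maurey hμsupp hint hQpos hQeq n hn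
    refine ⟨fun j => Afn Q (p j), fun j => (p j).2.1, fun j => (p j).2.2,
      fun j => Afn_le hQ0 (p j), ?_⟩
    have e1 : ∀ ω, (ghat ρ ω - (n : ℝ)⁻¹ * ∑ j,
        Afn Q (p j) * max ((∑ k, (p j).2.1 k * ω k) + (p j).2.2) 0) ^ 2
        = ((n : ℝ)⁻¹ * (∑ j, psi Q (p j) ω) - ghat ρ ω) ^ 2 := by
      intro ω
      simp only [psi]
      ring
    rw [integral_congr_ae (Filter.Eventually.of_forall e1)]
    exact hp

end Barron15

open Barron15

/-- Vector-valued Barron approximation: let `μ` be a probability measure on `ℝ^m` supported in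
`{ω : ‖ω‖_∞ ≤ 1}`; for `i = 1, …, N` let `ρ i` be a probability measure on `ℝ × ℝ^m × ℝ` with
`Q i = ∫ |a| (‖b‖₁ + |c|) d(ρ i) < ∞` and let `g i` satisfy
`g i ω = ∫ a σ(b·ω + c) d(ρ i)` for `μ`-a.e. `ω` (`σ` the ReLU). Then for every `n ≥ 1` there
is `G = (G_1, …, G_N)` whose components are two-layer ReLU networks with `n` hidden neurons
and path norm at most `2 Q i`, with `∫ |g(ω) − G(ω)|₂² dμ(ω) ≤ (3/n) Σ_i (Q i)²`. -/
theorem stmt15 {m N : ℕ} (μ : Measure (Fin m → ℝ)) [IsProbabilityMeasure μ]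
    (hμsupp : ∀ᵐ ω ∂μ, ∀ i, |ω i| ≤ 1)
    (ρ : Fin N → Measure (ℝ × (Fin m → ℝ) × ℝ)) (hρ : ∀ i, IsProbabilityMeasure (ρ i))
    (hQint : ∀ i, Integrable (fun p : ℝ × (Fin m → ℝ) × ℝ =>
        |p.1| * ((∑ k, |p.2.1 k|) + |p.2.2|)) (ρ i))
    (Q : Fin N → ℝ) (hQ : ∀ i, Q i = ∫ p, |p.1| * ((∑ k, |p.2.1 k|) + |p.2.2|) ∂(ρ i))
    (g : Fin N → (Fin m → ℝ) → ℝ)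
    (hg : ∀ i, ∀ᵐ ω ∂μ, g i ω = ∫ p, p.1 * max ((∑ k, p.2.1 k * ω k) + p.2.2) 0 ∂(ρ i)) :
    ∀ n : ℕ, 0 < n →
      ∃ (a : Fin N → Fin n → ℝ) (b : Fin N → Fin n → Fin m → ℝ) (c : Fin N → Fin n → ℝ),
        (∀ i, (n : ℝ)⁻¹ * (∑ j, |a i j| * ((∑ k, |b i j k|) + |c i j|)) ≤ 2 * Q i) ∧
        (∫ ω, euclNorm (fun i =>
            g i ω - (n : ℝ)⁻¹ * ∑ j, a i j * max ((∑ k, b i j k * ω k) + c i j) 0) ^ 2 ∂μ)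
          ≤ 3 / n * ∑ i, Q i ^ 2 := by
  intro n hn
  have hnpos : (0:ℝ) < n := by exact_mod_cast hn
  have hQ0 : ∀ i, 0 ≤ Q i := fun i => by
    rw [hQ i]
    exact integral_nonneg fun p => mul_nonneg (abs_nonneg _)
      (add_nonneg (Finset.sum_nonneg fun _ _ => abs_nonneg _) (abs_nonneg _))
  have key : ∀ i : Fin N, ∃ (a : Fin n → ℝ) (b : Fin n → Fin m → ℝ) (c : Fin n → ℝ),
      (∀ j, |a j| * ((∑ k, |b j k|) + |c j|) ≤ Q i) ∧
      ∫ ω, (ghat (ρ i) ω - (n : ℝ)⁻¹ * ∑ j,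
          a j * max ((∑ k, b j k * ω k) + c j) 0) ^ 2 ∂μ ≤ Q i ^ 2 / n := by
    intro i
    haveI := hρ i
    exact scalar hμsupp (hQint i) ((hQ i).symm) hn
  choose a b c hnorm herr using key
  refine ⟨a, b, c, ?_, ?_⟩
  · intro i
    have h1 : (∑ j, |a i j| * ((∑ k, |b i j k|) + |c i j|)) ≤ ∑ _j : Fin n, Q i :=
      Finset.sum_le_sum fun j _ => hnorm i j
    have h2 : (∑ _j : Fin n, Q i) = (n:ℝ) * Q i := by
      rw [Finset.sum_const, Finset.card_univ, Fintype.card_fin, nsmul_eq_mul]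
    calc (n : ℝ)⁻¹ * (∑ j, |a i j| * ((∑ k, |b i j k|) + |c i j|))
        ≤ (n : ℝ)⁻¹ * ((n:ℝ) * Q i) :=
          mul_le_mul_of_nonneg_left (h1.trans_eq h2) (inv_nonneg.mpr hnpos.le)
      _ = Q i := by field_simp
      _ ≤ 2 * Q i := by linarith [hQ0 i]
  · have hGm : ∀ i : Fin N, Measurable (fun ω : Fin m → ℝ =>
        (n : ℝ)⁻¹ * ∑ j, a i j * max ((∑ k, b i j k * ω k) + c i j) 0) := by
      intro i
      have : Continuous (fun ω : Fin m → ℝ =>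
          (n : ℝ)⁻¹ * ∑ j, a i j * max ((∑ k, b i j k * ω k) + c i j) 0) :=
        continuous_const.mul (continuous_finset_sum _ fun j _ =>
          continuous_const.mul (((continuous_finset_sum _ fun k _ =>
            continuous_const.mul (continuous_apply k)).add continuous_const).max
            continuous_const))
      exact this.measurable
    have hGb : ∀ i : Fin N, ∀ ω : Fin m → ℝ, (∀ k, |ω k| ≤ 1) →
        |(n : ℝ)⁻¹ * ∑ j, a i j * max ((∑ k, b i j k * ω k) + c i j) 0| ≤ Q i := by
      intro i ω hω
      have h1 : |∑ j, a i j * max ((∑ k, b i j k * ω k) + c i j) 0| ≤ ∑ _j : Fin n, Q i := by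
        refine (Finset.abs_sum_le_sum_abs _ _).trans (Finset.sum_le_sum fun j _ => ?_)
        rw [abs_mul]
        exact (mul_le_mul_of_nonneg_left (relu_abs_le hω) (abs_nonneg _)).trans (hnorm i j)
      have h2 : (∑ _j : Fin n, Q i) = (n:ℝ) * Q i := by
        rw [Finset.sum_const, Finset.card_univ, Fintype.card_fin, nsmul_eq_mul]
      rw [abs_mul, abs_of_nonneg (inv_nonneg.mpr hnpos.le)]
      calc (n : ℝ)⁻¹ * |∑ j, a i j * max ((∑ k, b i j k * ω k) + c i j) 0|
          ≤ (n : ℝ)⁻¹ * ((n:ℝ) * Q i) :=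
            mul_le_mul_of_nonneg_left (h1.trans_eq h2) (inv_nonneg.mpr hnpos.le)
        _ = Q i := by field_simp
    have hgall : ∀ᵐ ω ∂μ, ∀ i, g i ω = ghat (ρ i) ω := ae_all_iff.mpr fun i => hg i
    have hae : (fun ω => euclNorm (fun i =>
          g i ω - (n : ℝ)⁻¹ * ∑ j, a i j * max ((∑ k, b i j k * ω k) + c i j) 0) ^ 2)
        =ᵐ[μ] fun ω => ∑ i, (ghat (ρ i) ω
          - (n : ℝ)⁻¹ * ∑ j, a i j * max ((∑ k, b i j k * ω k) + c i j) 0) ^ 2 := by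
      refine hgall.mono fun ω hω => ?_
      simp only [euclNorm]
      rw [Real.sq_sqrt (Finset.sum_nonneg fun i _ => sq_nonneg _)]
      exact Finset.sum_congr rfl fun i _ => by rw [hω i]
    rw [integral_congr_ae hae]
    have hInt : ∀ i ∈ Finset.univ, Integrable (fun ω => (ghat (ρ i) ω
        - (n : ℝ)⁻¹ * ∑ j, a i j * max ((∑ k, b i j k * ω k) + c i j) 0) ^ 2) μ := by
      intro i _
      haveI := hρ i
      refine bdd_int (C := (2 * Q i) ^ 2)
        (((sm_ghat (ρ i)).measurable.sub (hGm i)).pow_const 2).aestronglyMeasurable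
        (hμsupp.mono fun ω hω => abs_sq_le ?_)
      have hg1 : |ghat (ρ i) ω| ≤ Q i := ghat_abs_le (hQint i) ((hQ i).symm) hω
      have hg2 := hGb i ω hω
      calc |ghat (ρ i) ω - (n : ℝ)⁻¹ * ∑ j, a i j *
            max ((∑ k, b i j k * ω k) + c i j) 0|
          ≤ |ghat (ρ i) ω| + |(n : ℝ)⁻¹ * ∑ j, a i j *
            max ((∑ k, b i j k * ω k) + c i j) 0| := abs_sub _ _
        _ ≤ 2 * Q i := by linarith
    rw [integral_finset_sum Finset.univ hInt]
    calc ∑ i, ∫ ω, (ghat (ρ i) ω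
          - (n : ℝ)⁻¹ * ∑ j, a i j * max ((∑ k, b i j k * ω k) + c i j) 0) ^ 2 ∂μ
        ≤ ∑ i, Q i ^ 2 / n := Finset.sum_le_sum fun i _ => herr i
      _ ≤ 3 / n * ∑ i, Q i ^ 2 := by
          rw [Finset.mul_sum]
          refine Finset.sum_le_sum fun i _ => ?_
          rw [div_mul_eq_mul_div]
          gcongr
          nlinarith [sq_nonneg (Q i)]
end

section
/- Fix m, M ∈ N and Q > 0, and let x₁, …, x_M ∈ R^m satisfy ‖x_i‖_∞ ≤ 1 for all i. Let F_Q be the set of all functions f : R^m → R of the form f(x) = (1/n) Σ_{j=1}^n a_j σ(b_j·x + c_j) for some n ∈ N and parameters with path norm (1/n) Σ_{j=1}^n |a_j| (‖b_j‖₁ + |c_j|) ≤ Q, where σ(t) = max(t,0). Then 2^{−M} Σ_{ε ∈ {−1,+1}^M} sup_{f ∈ F_Q} | (1/M) Σ_{i=1}^M ε_i f(x_i) | ≤ 2Q √( 2 log(2m+2) / M ). (The supremum is finite since |f(x_i)| ≤ Q for all f ∈ F_Q.) -/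
set_option maxHeartbeats 1000000

open Finset

lemma bdd_range {α : Type*} (f : α → ℝ) (B : ℝ) (h : ∀ a, f a ≤ B) :
    BddAbove (Set.range f) := ⟨B, by rintro _ ⟨a, rfl⟩; exact h a⟩

lemma relu_smul (r s : ℝ) (hr : 0 ≤ r) : max (r * s) 0 = r * max s 0 := by
  rcases le_total s 0 with h | h
  · rw [max_eq_right (by nlinarith), max_eq_right h, mul_zero]
  · rw [max_eq_left (by nlinarith), max_eq_left h]

lemma sum_update_pair {M : ℕ} (F : (Fin M → Bool) → ℝ) (j : Fin M) :
    ∑ ε : Fin M → Bool, (F (Function.update ε j true) + F (Function.update ε j false))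
      = 2 * ∑ ε : Fin M → Bool, F ε := by
  classical
  have upd : ∀ (b c : Bool) (g : {k // k ≠ j} → Bool),
      Function.update ((Equiv.piSplitAt j (fun _ => Bool)).symm (b, g)) j c
        = (Equiv.piSplitAt j (fun _ => Bool)).symm (c, g) := by
    intro b c g
    funext k
    by_cases h : k = j
    · subst h; simp [Equiv.piSplitAt]
    · simp [Function.update, h, Equiv.piSplitAt]
  rw [← Equiv.sum_comp (Equiv.piSplitAt j (fun _ : Fin M => Bool)).symm
        (fun ε => F (Function.update ε j true) + F (Function.update ε j false)),
      ← Equiv.sum_comp (Equiv.piSplitAt j (fun _ : Fin M => Bool)).symm F]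
  rw [Fintype.sum_prod_type, Fintype.sum_prod_type]
  simp only [upd]
  rw [Fintype.sum_bool, Fintype.sum_bool]
  rw [sum_add_distrib]
  ring

lemma step_lemma {α : Type*} [Nonempty α] (t A : α → ℝ)
    (h1 : BddAbove (Set.range fun u => t u + A u))
    (h2 : BddAbove (Set.range fun u => -t u + A u)) :
    (⨆ u, (max (t u) 0 + A u)) + (⨆ u, (-max (t u) 0 + A u))
      ≤ (⨆ u, (t u + A u)) + (⨆ u, (-t u + A u)) := by
  set R := (⨆ u, (t u + A u)) + (⨆ u, (-t u + A u)) with hR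
  have key : ∀ u w, (max (t u) 0 + A u) + (-max (t w) 0 + A w) ≤ R := by
    intro u w
    have hlip : |max (t u) 0 - max (t w) 0| ≤ |t u - t w| := abs_max_sub_max_le_abs _ _ _
    rcases le_total (t w) (t u) with hc | hc
    · have h3 : max (t u) 0 - max (t w) 0 ≤ t u - t w := by
        have := (abs_le.1 hlip).2
        rwa [abs_of_nonneg (by linarith)] at this
      have h4 : t u + A u ≤ ⨆ u, (t u + A u) := le_ciSup h1 u
      have h5 : -t w + A w ≤ ⨆ u, (-t u + A u) := le_ciSup h2 w
      rw [hR]; linarith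
    · have h3 : max (t u) 0 - max (t w) 0 ≤ t w - t u := by
        have h6 := (abs_le.1 hlip).2
        have habs : |t u - t w| = t w - t u := by rw [abs_sub_comm, abs_of_nonneg (by linarith)]
        linarith [habs ▸ h6]
      have h4 : t w + A w ≤ ⨆ u, (t u + A u) := le_ciSup h1 w
      have h5 : -t u + A u ≤ ⨆ u, (-t u + A u) := le_ciSup h2 u
      rw [hR]; linarith
  have hs2 : ∀ u, (⨆ w, (-max (t w) 0 + A w)) ≤ R - (max (t u) 0 + A u) := by
    intro u
    exact ciSup_le fun w => by linarith [key u w]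
  have hs1 : (⨆ u, (max (t u) 0 + A u)) ≤ R - (⨆ w, (-max (t w) 0 + A w)) :=
    ciSup_le fun u => by linarith [hs2 u]
  linarith

lemma contraction {α : Type*} [Nonempty α] {M : ℕ} (t : Fin M → α → ℝ)
    (C : ℝ) (hC : 0 ≤ C) (ht : ∀ i u, |t i u| ≤ C) :
    ∑ ε : Fin M → Bool, (⨆ u, ∑ i, (if ε i then (1:ℝ) else -1) * max (t i u) 0)
      ≤ ∑ ε : Fin M → Bool, (⨆ u, ∑ i, (if ε i then (1:ℝ) else -1) * (t i u)) := by
  classical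
  set χ : Bool → ℝ := fun b => if b then 1 else -1 with hχ
  have hχabs : ∀ b, |χ b| = 1 := by intro b; cases b <;> simp [hχ]
  set ψ : Finset (Fin M) → Fin M → α → ℝ :=
    fun s i u => if i ∈ s then max (t i u) 0 else t i u with hψ
  have hmaxabs : ∀ i u, |max (t i u) 0| ≤ C := by
    intro i u
    rw [abs_of_nonneg (le_max_right _ _)]
    exact max_le (abs_le.1 (ht i u)).2 hC
  have hψabs : ∀ s i u, |ψ s i u| ≤ C := by
    intro s i u
    by_cases h : i ∈ s
    · simpa [hψ, h] using hmaxabs i u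
    · simpa [hψ, h] using ht i u
  have hterm : ∀ s i u (b : Bool), |χ b * ψ s i u| ≤ C := by
    intro s i u b
    rw [abs_mul, hχabs, one_mul]; exact hψabs s i u
  have bdd : ∀ (s : Finset (Fin M)) (ε : Fin M → Bool),
      BddAbove (Set.range fun u => ∑ i, χ (ε i) * ψ s i u) := by
    intro s ε
    refine bdd_range _ (M * C) fun u => ?_
    calc ∑ i, χ (ε i) * ψ s i u ≤ ∑ _i : Fin M, C :=
          sum_le_sum fun i _ => (abs_le.1 (hterm s i u (ε i))).2
      _ = M * C := by simp [mul_comm]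
  have main : ∀ s : Finset (Fin M),
      (∑ ε : Fin M → Bool, ⨆ u, ∑ i, χ (ε i) * ψ s i u)
        ≤ ∑ ε : Fin M → Bool, ⨆ u, ∑ i, χ (ε i) * ψ ∅ i u := by
    intro s
    induction s using Finset.induction_on with
    | empty => exact le_rfl
    | @insert j s hj ih =>
      refine le_trans ?_ ih
      have pair1 := sum_update_pair (fun ε => ⨆ u, ∑ i, χ (ε i) * ψ (insert j s) i u) j
      have pair2 := sum_update_pair (fun ε => ⨆ u, ∑ i, χ (ε i) * ψ s i u) j
      have perε : ∀ ε : Fin M → Bool,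
          ((⨆ u, ∑ i, χ (Function.update ε j true i) * ψ (insert j s) i u)
            + ⨆ u, ∑ i, χ (Function.update ε j false i) * ψ (insert j s) i u)
          ≤ (⨆ u, ∑ i, χ (Function.update ε j true i) * ψ s i u)
            + ⨆ u, ∑ i, χ (Function.update ε j false i) * ψ s i u := by
        intro ε
        set A : α → ℝ := fun u => ∑ i ∈ univ.erase j, χ (ε i) * ψ s i u with hA
        have hsplit : ∀ (c : Bool) (s' : Finset (Fin M)), (∀ i, i ≠ j → (i ∈ s' ↔ i ∈ s)) → ∀ u,
            ∑ i, χ (Function.update ε j c i) * ψ s' i u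
              = χ c * ψ s' j u + A u := by
          intro c s' hs' u
          rw [← Finset.add_sum_erase _ _ (mem_univ j)]
          congr 1
          · rw [Function.update_self]
          · refine sum_congr rfl fun i hi => ?_
            have hij : i ≠ j := (mem_erase.1 hi).1
            rw [Function.update_of_ne hij]
            have hmem : (i ∈ s') = (i ∈ s) := propext (hs' i hij)
            simp only [hψ, hmem]
        have hmem1 : ∀ i, i ≠ j → (i ∈ insert j s ↔ i ∈ s) := by
          intro i hij; simp [mem_insert, hij]
        have hmem2 : ∀ i, i ≠ j → (i ∈ s ↔ i ∈ s) := fun i _ => Iff.rfl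
        have hψj1 : ψ (insert j s) j = fun u => max (t j u) 0 := by
          funext u; simp [hψ]
        have hψj2 : ψ s j = t j := by
          funext u; simp [hψ, hj]
        have hb1 : BddAbove (Set.range fun u => t j u + A u) := by
          refine bdd_range _ (C + M * C) fun u => ?_
          have h1 : t j u ≤ C := (abs_le.1 (ht j u)).2
          have h2 : A u ≤ M * C := by
            calc A u ≤ ∑ i ∈ univ.erase j, C :=
                  sum_le_sum fun i _ => (abs_le.1 (hterm s i u (ε i))).2
              _ = (univ.erase j).card * C := by rw [sum_const, nsmul_eq_mul]
              _ ≤ M * C := by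
                  refine mul_le_mul_of_nonneg_right ?_ hC
                  have hcard : #(univ.erase j) ≤ M :=
                    le_trans (card_le_card (erase_subset _ _)) (by simp)
                  exact_mod_cast hcard
          linarith
        have hb2 : BddAbove (Set.range fun u => -t j u + A u) := by
          refine bdd_range _ (C + M * C) fun u => ?_
          have h1 : -t j u ≤ C := by linarith [(abs_le.1 (ht j u)).1]
          have h2 : A u ≤ M * C := by
            calc A u ≤ ∑ i ∈ univ.erase j, C :=
                  sum_le_sum fun i _ => (abs_le.1 (hterm s i u (ε i))).2
              _ = (univ.erase j).card * C := by rw [sum_const, nsmul_eq_mul]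
              _ ≤ M * C := by
                  refine mul_le_mul_of_nonneg_right ?_ hC
                  have hcard : #(univ.erase j) ≤ M :=
                    le_trans (card_le_card (erase_subset _ _)) (by simp)
                  exact_mod_cast hcard
          linarith
        have step := step_lemma (t j) A hb1 hb2
        simp only [hsplit true (insert j s) hmem1, hsplit false (insert j s) hmem1,
          hsplit true s hmem2, hsplit false s hmem2, hψj1, hψj2]
        have hχt : χ true = 1 := by simp [hχ]
        have hχf : χ false = -1 := by simp [hχ]
        simp only [hχt, hχf, one_mul, neg_one_mul]
        exact step
      have := sum_le_sum (fun ε (_ : ε ∈ univ) => perε ε)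
      linarith
  have lhs_eq : (fun (s : Finset (Fin M)) => True) = (fun _ => True) := rfl
  have h1 := main univ
  have e1 : ∀ ε : Fin M → Bool, (⨆ u, ∑ i, χ (ε i) * ψ univ i u)
      = ⨆ u, ∑ i, (if ε i then (1:ℝ) else -1) * max (t i u) 0 := by
    intro ε
    have hfe : (fun u => ∑ i, χ (ε i) * ψ univ i u)
        = fun u => ∑ i, (if ε i then (1:ℝ) else -1) * max (t i u) 0 := by
      funext u; exact sum_congr rfl fun i _ => by simp [hψ, hχ]
    rw [hfe]
  have e2 : ∀ ε : Fin M → Bool, (⨆ u, ∑ i, χ (ε i) * ψ ∅ i u)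
      = ⨆ u, ∑ i, (if ε i then (1:ℝ) else -1) * t i u := by
    intro ε
    have hfe : (fun u => ∑ i, χ (ε i) * ψ ∅ i u)
        = fun u => ∑ i, (if ε i then (1:ℝ) else -1) * t i u := by
      funext u; exact sum_congr rfl fun i _ => by simp [hψ, hχ]
    rw [hfe]
  calc ∑ ε : Fin M → Bool, (⨆ u, ∑ i, (if ε i then (1:ℝ) else -1) * max (t i u) 0)
      = ∑ ε : Fin M → Bool, ⨆ u, ∑ i, χ (ε i) * ψ univ i u := by
        exact sum_congr rfl fun ε _ => (e1 ε).symm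
    _ ≤ ∑ ε : Fin M → Bool, ⨆ u, ∑ i, χ (ε i) * ψ ∅ i u := main univ
    _ = _ := sum_congr rfl fun ε _ => e2 ε


lemma massart {M : ℕ} (hM : 0 < M) {J : Type*} [Fintype J] [Nonempty J]
    (c : Fin M → J → ℝ) (hc : ∀ i j, |c i j| ≤ 1) (hJ : 2 ≤ Fintype.card J) :
    (2 ^ M : ℝ)⁻¹ * ∑ ε : Fin M → Bool,
        (univ.sup' univ_nonempty fun j => ∑ i, (if ε i then (1:ℝ) else -1) * c i j)
      ≤ Real.sqrt (2 * M * Real.log (Fintype.card J)) := by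
  classical
  set N : ℝ := (Fintype.card J : ℝ) with hN
  have hN1 : 1 < N := by
    have h2 : (2:ℝ) ≤ N := by rw [hN]; exact_mod_cast hJ
    linarith
  have hN0 : 0 < N := by linarith
  have hlogN : 0 < Real.log N := Real.log_pos hN1
  have hMR : (0:ℝ) < M := by exact_mod_cast hM
  set lam : ℝ := Real.sqrt (2 * Real.log N / M) with hlam
  have hlam0 : 0 < lam := Real.sqrt_pos.2 (by positivity)
  have hlamsq : lam ^ 2 = 2 * Real.log N / M := Real.sq_sqrt (by positivity)
  set D : (Fin M → Bool) → ℝ :=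
    fun ε => univ.sup' univ_nonempty fun j => ∑ i, (if ε i then (1:ℝ) else -1) * c i j with hD
  set avg : ℝ := (2 ^ M : ℝ)⁻¹ * ∑ ε : Fin M → Bool, D ε with havg
  have hcard : (Fintype.card (Fin M → Bool) : ℝ) = 2 ^ M := by
    simp [Fintype.card_fun]
  -- Jensen
  have jensen : Real.exp (lam * avg) ≤
      ∑ ε : Fin M → Bool, (2 ^ M : ℝ)⁻¹ * Real.exp (lam * D ε) := by
    have h := convexOn_exp.map_sum_le (t := (univ : Finset (Fin M → Bool)))
      (w := fun _ => (2 ^ M : ℝ)⁻¹) (p := fun ε => lam * D ε)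
      (fun _ _ => by positivity)
      (by rw [Finset.sum_const, nsmul_eq_mul, Finset.card_univ]
          rw [show ((Fintype.card (Fin M → Bool)) : ℝ) = 2 ^ M from hcard]
          field_simp)
      (fun _ _ => Set.mem_univ _)
    have harg : ∑ ε : Fin M → Bool, (2 ^ M : ℝ)⁻¹ • (lam * D ε) = lam * avg := by
      rw [havg]
      simp only [smul_eq_mul]
      rw [← Finset.mul_sum, ← Finset.mul_sum]
      ring
    rw [harg] at h
    simpa using h
  -- per-ε bound
  have perε : ∀ ε : Fin M → Bool, Real.exp (lam * D ε) ≤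
      ∑ j : J, Real.exp (lam * ∑ i, (if ε i then (1:ℝ) else -1) * c i j) := by
    intro ε
    obtain ⟨j0, -, hj0⟩ := Finset.exists_mem_eq_sup' univ_nonempty
      (fun j => ∑ i, (if ε i then (1:ℝ) else -1) * c i j)
    have : D ε = ∑ i, (if ε i then (1:ℝ) else -1) * c i j0 := hj0
    rw [this]
    exact Finset.single_le_sum
      (f := fun j => Real.exp (lam * ∑ i, (if ε i then (1:ℝ) else -1) * c i j))
      (fun j _ => (Real.exp_pos _).le) (mem_univ j0)
  -- product bound
  have prod_bound : ∀ j : J,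
      ∑ ε : Fin M → Bool, Real.exp (lam * ∑ i, (if ε i then (1:ℝ) else -1) * c i j)
        ≤ (2 * Real.exp (lam ^ 2 / 2)) ^ M := by
    intro j
    have expand : ∀ ε : Fin M → Bool,
        Real.exp (lam * ∑ i, (if ε i then (1:ℝ) else -1) * c i j)
          = ∏ i, Real.exp (lam * ((if ε i then (1:ℝ) else -1) * c i j)) := by
      intro ε
      rw [← Real.exp_sum, Finset.mul_sum]
    calc ∑ ε : Fin M → Bool, Real.exp (lam * ∑ i, (if ε i then (1:ℝ) else -1) * c i j)
        = ∑ ε : Fin M → Bool, ∏ i, Real.exp (lam * ((if ε i then (1:ℝ) else -1) * c i j)) :=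
          Finset.sum_congr rfl fun ε _ => expand ε
      _ = ∏ i, ∑ b : Bool, Real.exp (lam * ((if b then (1:ℝ) else -1) * c i j)) := by
          rw [Finset.prod_univ_sum]
          rw [Fintype.piFinset_univ]
      _ ≤ ∏ i : Fin M, (2 * Real.exp (lam ^ 2 / 2)) := by
          refine Finset.prod_le_prod (fun i _ => ?_) (fun i _ => ?_)
          · positivity
          · rw [Fintype.sum_bool]
            have e1 : Real.exp (lam * ((if (true:Bool) = true then (1:ℝ) else -1) * c i j))
                = Real.exp (lam * c i j) := by norm_num
            have e2 : Real.exp (lam * ((if (false:Bool) = true then (1:ℝ) else -1) * c i j))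
                = Real.exp (-(lam * c i j)) := by norm_num
            rw [e1, e2]
            have hcosh : Real.exp (lam * c i j) + Real.exp (-(lam * c i j))
                = 2 * Real.cosh (lam * c i j) := by
              rw [Real.cosh_eq]; ring
            rw [hcosh]
            have h1 : Real.cosh (lam * c i j) ≤ Real.exp ((lam * c i j) ^ 2 / 2) :=
              Real.cosh_le_exp_half_sq _
            have h2 : Real.exp ((lam * c i j) ^ 2 / 2) ≤ Real.exp (lam ^ 2 / 2) := by
              refine Real.exp_le_exp.2 (by
                have hc2 : (c i j) ^ 2 ≤ 1 := by
                  have := abs_le.1 (hc i j)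
                  nlinarith
                have : (lam * c i j) ^ 2 ≤ lam ^ 2 := by
                  rw [mul_pow]
                  nlinarith [sq_nonneg lam]
                linarith)
            linarith
      _ = (2 * Real.exp (lam ^ 2 / 2)) ^ M := by
          rw [Finset.prod_const, Finset.card_univ, Fintype.card_fin]
  -- combine
  have total : Real.exp (lam * avg) ≤ N * Real.exp (M * lam ^ 2 / 2) := by
    calc Real.exp (lam * avg) ≤ ∑ ε : Fin M → Bool, (2 ^ M : ℝ)⁻¹ * Real.exp (lam * D ε) :=
          jensen
      _ ≤ ∑ ε : Fin M → Bool, (2 ^ M : ℝ)⁻¹ *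
            ∑ j : J, Real.exp (lam * ∑ i, (if ε i then (1:ℝ) else -1) * c i j) := by
          refine Finset.sum_le_sum fun ε _ => ?_
          exact mul_le_mul_of_nonneg_left (perε ε) (by positivity)
      _ = (2 ^ M : ℝ)⁻¹ * ∑ j : J,
            ∑ ε : Fin M → Bool, Real.exp (lam * ∑ i, (if ε i then (1:ℝ) else -1) * c i j) := by
          rw [← Finset.mul_sum, Finset.sum_comm]
      _ ≤ (2 ^ M : ℝ)⁻¹ * ∑ _j : J, (2 * Real.exp (lam ^ 2 / 2)) ^ M := by
          refine mul_le_mul_of_nonneg_left (Finset.sum_le_sum fun j _ => prod_bound j)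
            (by positivity)
      _ = N * Real.exp (M * lam ^ 2 / 2) := by
          rw [Finset.sum_const, Finset.card_univ, nsmul_eq_mul]
          rw [mul_pow, ← Real.exp_nat_mul]
          rw [hN]
          field_simp
  have hlog : lam * avg ≤ Real.log N + M * lam ^ 2 / 2 := by
    have : N * Real.exp (M * lam ^ 2 / 2) = Real.exp (Real.log N + M * lam ^ 2 / 2) := by
      rw [Real.exp_add, Real.exp_log hN0]
    rw [this] at total
    exact Real.exp_le_exp.1 total
  have hsum : Real.log N + M * lam ^ 2 / 2 = 2 * Real.log N := by
    rw [hlamsq]; field_simp; ring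
  rw [hsum] at hlog
  have hfinal : 2 * Real.log N / lam = Real.sqrt (2 * M * Real.log N) := by
    have h1 : lam * Real.sqrt (2 * M * Real.log N) = 2 * Real.log N := by
      rw [hlam, ← Real.sqrt_mul (by positivity)]
      rw [show 2 * Real.log N / (M:ℝ) * (2 * M * Real.log N) = (2 * Real.log N)^2 by
        field_simp]
      exact Real.sqrt_sq (by positivity)
    rw [div_eq_iff (ne_of_gt hlam0)]
    linarith [h1]
  have : avg ≤ 2 * Real.log N / lam := by
    rw [le_div_iff₀ hlam0]; linarith [hlog]
  calc avg ≤ 2 * Real.log N / lam := this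
    _ = Real.sqrt (2 * M * Real.log N) := hfinal


/-- Empirical Rademacher complexity bound for the path-norm ball of two-layer ReLU networks:
for sample points `x_1, …, x_M ∈ ℝ^m` with `‖x_i‖_∞ ≤ 1`, and `F_Q` the class of two-layer
ReLU networks (any width) with path norm at most `Q`, the empirical Rademacher complexity
`2^{-M} Σ_{ε ∈ {±1}^M} sup_{f ∈ F_Q} |(1/M) Σ_i ε_i f(x_i)|` is at most
`2 Q √(2 log(2m+2) / M)`. -/
theorem stmt16 (m M : ℕ) (hM : 0 < M) (Q : ℝ) (hQ : 0 < Q)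
    (x : Fin M → Fin m → ℝ) (hx : ∀ i k, |x i k| ≤ 1)
    (FQ : Set ((Fin m → ℝ) → ℝ))
    (hFQ : FQ = {f | ∃ (n : ℕ) (a : Fin n → ℝ) (b : Fin n → Fin m → ℝ) (c : Fin n → ℝ),
        ((n : ℝ)⁻¹ * ∑ j, |a j| * ((∑ k, |b j k|) + |c j|)) ≤ Q ∧
        ∀ y : Fin m → ℝ, f y = (n : ℝ)⁻¹ * ∑ j, a j * max ((∑ k, b j k * y k) + c j) 0}) :
    (2 ^ M : ℝ)⁻¹ * ∑ ε : Fin M → Bool,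
        (⨆ f ∈ FQ, |(M : ℝ)⁻¹ * ∑ i, (if ε i then (1 : ℝ) else -1) * f (x i)|)
      ≤ 2 * Q * Real.sqrt (2 * Real.log (2 * m + 2) / M) := by
  classical
  -- the augmented data vectors
  set V : Fin M → Fin (m + 1) → ℝ :=
    fun i k => if h : (k : ℕ) < m then x i ⟨k, h⟩ else 1 with hV
  have hVabs : ∀ i k, |V i k| ≤ 1 := by
    intro i k
    by_cases h : (k : ℕ) < m
    · simp only [hV, dif_pos h]; exact hx i ⟨k, h⟩
    · simp [hV, dif_neg h]
  -- the parameter space: l¹ unit ball of ℝ^{m+1}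
  let α : Type := {u : Fin (m + 1) → ℝ // ∑ k, |u k| ≤ 1}
  haveI : Nonempty α := ⟨⟨0, by simp⟩⟩
  set t : Fin M → α → ℝ := fun i u => ∑ k, V i k * u.1 k with ht_def
  have ht : ∀ i u, |t i u| ≤ 1 := by
    intro i u
    calc |t i u| ≤ ∑ k, |V i k * u.1 k| := Finset.abs_sum_le_sum_abs _ _
      _ ≤ ∑ k, |u.1 k| := Finset.sum_le_sum fun k _ => by
          rw [abs_mul]
          calc |V i k| * |u.1 k| ≤ 1 * |u.1 k| :=
                mul_le_mul_of_nonneg_right (hVabs i k) (abs_nonneg _)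
            _ = |u.1 k| := one_mul _
      _ ≤ 1 := u.2
  have hrelu_abs : ∀ i (u : α), |max (t i u) 0| ≤ 1 := by
    intro i u
    rw [abs_of_nonneg (le_max_right _ _)]
    exact max_le (abs_le.1 (ht i u)).2 zero_le_one
  -- the suprema over the unit ball
  set S : (Fin M → Bool) → ℝ :=
    fun ε => ⨆ u : α, |∑ i, (if ε i then (1:ℝ) else -1) * max (t i u) 0| with hS_def
  set T : (Fin M → Bool) → ℝ :=
    fun ε => ⨆ u : α, ∑ i, (if ε i then (1:ℝ) else -1) * max (t i u) 0 with hT_def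
  set Tlin : (Fin M → Bool) → ℝ :=
    fun ε => ⨆ u : α, ∑ i, (if ε i then (1:ℝ) else -1) * t i u with hTlin_def
  have habs_term : ∀ (ε : Fin M → Bool) i (u : α),
      |(if ε i then (1:ℝ) else -1) * max (t i u) 0| ≤ 1 := by
    intro ε i u
    rw [abs_mul]
    have h1 : |(if ε i then (1:ℝ) else -1)| = 1 := by rcases Bool.dichotomy (ε i) with h | h <;> simp [h]
    rw [h1, one_mul]
    exact hrelu_abs i u
  have hsum_bound : ∀ (ε : Fin M → Bool) (u : α),
      |∑ i, (if ε i then (1:ℝ) else -1) * max (t i u) 0| ≤ M := by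
    intro ε u
    calc |∑ i, (if ε i then (1:ℝ) else -1) * max (t i u) 0|
        ≤ ∑ i, |(if ε i then (1:ℝ) else -1) * max (t i u) 0| := Finset.abs_sum_le_sum_abs _ _
      _ ≤ ∑ _i : Fin M, (1:ℝ) := Finset.sum_le_sum fun i _ => habs_term ε i u
      _ = M := by simp
  have bddS : ∀ ε : Fin M → Bool, BddAbove (Set.range fun u : α =>
      |∑ i, (if ε i then (1:ℝ) else -1) * max (t i u) 0|) :=
    fun ε => bdd_range _ M fun u => hsum_bound ε u
  have bddT : ∀ ε : Fin M → Bool, BddAbove (Set.range fun u : α =>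
      ∑ i, (if ε i then (1:ℝ) else -1) * max (t i u) 0) :=
    fun ε => bdd_range _ M fun u => (abs_le.1 (hsum_bound ε u)).2
  have hS_nonneg : ∀ ε, 0 ≤ S ε := fun ε => Real.iSup_nonneg fun u => abs_nonneg _
  have hT_nonneg : ∀ ε, 0 ≤ T ε := by
    intro ε
    set u0 : α := ⟨fun _ => 0, by simp⟩ with hu0
    have h0 : ∀ i, t i u0 = 0 := by
      intro i; simp [ht_def, hu0]
    have hz : (∑ i, (if ε i then (1:ℝ) else -1) * max (t i u0) 0) = 0 :=
      Finset.sum_eq_zero fun i _ => by rw [h0 i]; simp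
    have hle : (∑ i, (if ε i then (1:ℝ) else -1) * max (t i u0) 0) ≤ T ε :=
      le_ciSup (bddT ε) u0
    linarith
  have fact1 : ∀ ε : Fin M → Bool,
      (⨆ f ∈ FQ, |(M : ℝ)⁻¹ * ∑ i, (if ε i then (1 : ℝ) else -1) * f (x i)|)
        ≤ Q * (M:ℝ)⁻¹ * S ε := by
    intro ε
    have hrhs : 0 ≤ Q * (M:ℝ)⁻¹ * S ε :=
      mul_nonneg (mul_nonneg hQ.le (by positivity)) (hS_nonneg ε)
    refine Real.iSup_le (fun f => Real.iSup_le (fun hf => ?_) hrhs) hrhs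
    rw [hFQ] at hf
    obtain ⟨n, a, b, c, hpath, hfy⟩ := hf
    have atom : ∀ j : Fin n,
        |∑ i, (if ε i then (1:ℝ) else -1) * max ((∑ k, b j k * x i k) + c j) 0|
          ≤ ((∑ k, |b j k|) + |c j|) * S ε := by
      intro j
      set r : ℝ := (∑ k, |b j k|) + |c j| with hr
      have hr0 : 0 ≤ r := by positivity
      rcases eq_or_lt_of_le hr0 with hr0' | hrpos
      · have hbsum : (0:ℝ) ≤ ∑ k, |b j k| :=
          Finset.sum_nonneg fun k _ => abs_nonneg (b j k)
        have h1 : ∑ k, |b j k| = 0 := by nlinarith [abs_nonneg (c j)]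
        have h2 : |c j| = 0 := by nlinarith
        have hb0 : ∀ k, b j k = 0 := fun k => abs_eq_zero.1 <|
          (Finset.sum_eq_zero_iff_of_nonneg (fun k _ => abs_nonneg (b j k))).1 h1 k (mem_univ k)
        have hc0 : c j = 0 := abs_eq_zero.1 h2
        have hz : ∀ i : Fin M, (∑ k, b j k * x i k) + c j = 0 := by
          intro i; rw [hc0]; simp [hb0]
        have hlhs : |∑ i, (if ε i then (1:ℝ) else -1) * max ((∑ k, b j k * x i k) + c j) 0| = 0 := by
          rw [Finset.sum_eq_zero fun i _ => by rw [hz i]; simp]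
          exact abs_zero
        rw [hlhs, ← hr0', zero_mul]
      · -- r > 0 : rescale
        set u' : Fin (m+1) → ℝ :=
          fun k => if h : (k:ℕ) < m then r⁻¹ * b j ⟨k, h⟩ else r⁻¹ * c j with hu'
        have hcast : ∀ k : Fin m, u' k.castSucc = r⁻¹ * b j k := by
          intro k
          have hk : ((k.castSucc : Fin (m+1)) : ℕ) < m := by simp [k.isLt]
          rw [hu']
          simp only [dif_pos hk]
          congr 1
        have hlast : u' (Fin.last m) = r⁻¹ * c j := by
          rw [hu']
          simp
        have hnorm : ∑ k, |u' k| = 1 := by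
          rw [Fin.sum_univ_castSucc]
          have h1 : ∀ k : Fin m, |u' k.castSucc| = r⁻¹ * |b j k| := by
            intro k; rw [hcast k, abs_mul, abs_of_nonneg (inv_nonneg.2 hr0)]
          have h2 : |u' (Fin.last m)| = r⁻¹ * |c j| := by
            rw [hlast, abs_mul, abs_of_nonneg (inv_nonneg.2 hr0)]
          rw [h2, Finset.sum_congr rfl fun k _ => h1 k, ← Finset.mul_sum]
          rw [← mul_add, ← hr]
          field_simp
        set uu : α := ⟨u', le_of_eq hnorm⟩ with huu
        have hVcast : ∀ (i : Fin M) (k : Fin m), V i k.castSucc = x i k := by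
          intro i k
          have hk : ((k.castSucc : Fin (m+1)) : ℕ) < m := by simp [k.isLt]
          rw [hV]
          simp only [dif_pos hk]
          congr 1
        have hVlast : ∀ i : Fin M, V i (Fin.last m) = 1 := by
          intro i; rw [hV]; simp
        have hinner : ∀ i, t i uu = r⁻¹ * ((∑ k, b j k * x i k) + c j) := by
          intro i
          rw [ht_def]
          show ∑ k, V i k * u' k = _
          rw [Fin.sum_univ_castSucc]
          have h1 : ∀ k : Fin m, V i k.castSucc * u' k.castSucc = r⁻¹ * (b j k * x i k) := by
            intro k; rw [hcast k, hVcast i k]; ring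
          rw [hVlast i, hlast, Finset.sum_congr rfl fun k _ => h1 k, ← Finset.mul_sum]
          ring
        have hmax : ∀ i, max ((∑ k, b j k * x i k) + c j) 0 = r * max (t i uu) 0 := by
          intro i
          rw [← relu_smul r (t i uu) hr0]
          congr 1
          rw [hinner i]
          field_simp
        have hsum_eq : ∑ i, (if ε i then (1:ℝ) else -1) * max ((∑ k, b j k * x i k) + c j) 0
            = r * ∑ i, (if ε i then (1:ℝ) else -1) * max (t i uu) 0 := by
          rw [Finset.mul_sum]
          exact Finset.sum_congr rfl fun i _ => by rw [hmax i]; ring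
        rw [hsum_eq, abs_mul, abs_of_nonneg hr0]
        exact mul_le_mul_of_nonneg_left (le_ciSup (bddS ε) uu) hr0
    -- swap the two sums
    have swap : ∑ i, (if ε i then (1:ℝ) else -1) * f (x i)
        = (n:ℝ)⁻¹ * ∑ j, a j *
            ∑ i, (if ε i then (1:ℝ) else -1) * max ((∑ k, b j k * x i k) + c j) 0 := by
      calc ∑ i, (if ε i then (1:ℝ) else -1) * f (x i)
          = ∑ i, ∑ j, (n:ℝ)⁻¹ * (a j * ((if ε i then (1:ℝ) else -1)
              * max ((∑ k, b j k * x i k) + c j) 0)) := by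
            refine Finset.sum_congr rfl fun i _ => ?_
            rw [hfy (x i), Finset.mul_sum, Finset.mul_sum]
            exact Finset.sum_congr rfl fun j _ => by ring
        _ = ∑ j, ∑ i, (n:ℝ)⁻¹ * (a j * ((if ε i then (1:ℝ) else -1)
              * max ((∑ k, b j k * x i k) + c j) 0)) := Finset.sum_comm
        _ = (n:ℝ)⁻¹ * ∑ j, a j *
              ∑ i, (if ε i then (1:ℝ) else -1) * max ((∑ k, b j k * x i k) + c j) 0 := by
            rw [Finset.mul_sum]
            refine Finset.sum_congr rfl fun j _ => ?_
            rw [← Finset.mul_sum, ← Finset.mul_sum]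
    have habs : |∑ i, (if ε i then (1:ℝ) else -1) * f (x i)| ≤ Q * S ε := by
      rw [swap, abs_mul, abs_of_nonneg (inv_nonneg.2 (Nat.cast_nonneg n))]
      calc (n:ℝ)⁻¹ * |∑ j, a j *
              ∑ i, (if ε i then (1:ℝ) else -1) * max ((∑ k, b j k * x i k) + c j) 0|
          ≤ (n:ℝ)⁻¹ * ∑ j, |a j| * (((∑ k, |b j k|) + |c j|) * S ε) := by
            refine mul_le_mul_of_nonneg_left ?_ (by positivity)
            refine le_trans (Finset.abs_sum_le_sum_abs _ _) (Finset.sum_le_sum fun j _ => ?_)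
            rw [abs_mul]
            exact mul_le_mul_of_nonneg_left (atom j) (abs_nonneg (a j))
        _ = ((n:ℝ)⁻¹ * ∑ j, |a j| * ((∑ k, |b j k|) + |c j|)) * S ε := by
            rw [mul_assoc, Finset.sum_mul]
            congr 1
            exact Finset.sum_congr rfl fun j _ => by ring
        _ ≤ Q * S ε := mul_le_mul_of_nonneg_right hpath (hS_nonneg ε)
    rw [abs_mul, abs_of_nonneg (inv_nonneg.2 (Nat.cast_nonneg M))]
    calc (M:ℝ)⁻¹ * |∑ i, (if ε i then (1:ℝ) else -1) * f (x i)|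
        ≤ (M:ℝ)⁻¹ * (Q * S ε) := mul_le_mul_of_nonneg_left habs (by positivity)
      _ = Q * (M:ℝ)⁻¹ * S ε := by ring
  -- Fact 2 : symmetrization removes the absolute value
  have fact2 : ∀ ε : Fin M → Bool, S ε ≤ T ε + T (fun i => !ε i) := by
    intro ε
    refine ciSup_le fun u => ?_
    have h1 : (∑ i, (if ε i then (1:ℝ) else -1) * max (t i u) 0) ≤ T ε := le_ciSup (bddT ε) u
    have h2 : (∑ i, (if (!ε i) then (1:ℝ) else -1) * max (t i u) 0) ≤ T (fun i => !ε i) :=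
      le_ciSup (bddT (fun i => !ε i)) u
    have hneg : ∑ i, (if (!ε i) then (1:ℝ) else -1) * max (t i u) 0
        = -(∑ i, (if ε i then (1:ℝ) else -1) * max (t i u) 0) := by
      rw [← Finset.sum_neg_distrib]
      refine Finset.sum_congr rfl fun i _ => ?_
      rcases Bool.dichotomy (ε i) with h | h <;> simp [h]
    rcases abs_cases (∑ i, (if ε i then (1:ℝ) else -1) * max (t i u) 0) with ⟨he, -⟩ | ⟨he, -⟩
    · rw [he]; linarith [hT_nonneg (fun i => !ε i)]
    · rw [he]; rw [hneg] at h2; linarith [hT_nonneg ε]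
  have hflip : ∑ ε : Fin M → Bool, T (fun i => !ε i) = ∑ ε : Fin M → Bool, T ε := by
    refine Fintype.sum_bijective (fun ε : Fin M → Bool => fun i => !ε i) ?_ _ _ (fun ε => rfl)
    exact Function.Involutive.bijective (fun ε => by funext i; simp)
  -- Fact 3 : contraction
  have fact3 : ∑ ε : Fin M → Bool, T ε ≤ ∑ ε : Fin M → Bool, Tlin ε :=
    contraction t 1 zero_le_one ht
  -- Fact 4 : the linear supremum is attained at vertices
  set Dm : (Fin M → Bool) → ℝ := fun ε => univ.sup' univ_nonempty
      (fun p : Fin (m+1) × Bool =>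
        ∑ i, (if ε i then (1:ℝ) else -1) * ((if p.2 then (1:ℝ) else -1) * V i p.1)) with hDm_def
  have fact4 : ∀ ε : Fin M → Bool, Tlin ε ≤ Dm ε := by
    intro ε
    refine ciSup_le fun u => ?_
    set w : Fin (m+1) → ℝ := fun k => ∑ i, (if ε i then (1:ℝ) else -1) * V i k with hw
    have hswap : ∑ i, (if ε i then (1:ℝ) else -1) * t i u = ∑ k, u.1 k * w k := by
      calc ∑ i, (if ε i then (1:ℝ) else -1) * t i u
          = ∑ i, ∑ k, u.1 k * ((if ε i then (1:ℝ) else -1) * V i k) := by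
            refine Finset.sum_congr rfl fun i _ => ?_
            rw [ht_def]
            show (if ε i then (1:ℝ) else -1) * (∑ k, V i k * u.1 k) = _
            rw [Finset.mul_sum]
            exact Finset.sum_congr rfl fun k _ => by ring
        _ = ∑ k, ∑ i, u.1 k * ((if ε i then (1:ℝ) else -1) * V i k) := Finset.sum_comm
        _ = ∑ k, u.1 k * w k := by
            refine Finset.sum_congr rfl fun k _ => ?_
            rw [hw, ← Finset.mul_sum]
    have hwk : ∀ k, |w k| ≤ Dm ε := by
      intro k
      have hp1 : (∑ i, (if ε i then (1:ℝ) else -1) * ((if (true:Bool) then (1:ℝ) else -1) * V i k))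
          ≤ Dm ε :=
        Finset.le_sup' (f := fun p : Fin (m+1) × Bool =>
          ∑ i, (if ε i then (1:ℝ) else -1) * ((if p.2 then (1:ℝ) else -1) * V i p.1))
          (mem_univ ((k, true) : Fin (m+1) × Bool))
      have hp2 : (∑ i, (if ε i then (1:ℝ) else -1) * ((if (false:Bool) then (1:ℝ) else -1) * V i k))
          ≤ Dm ε :=
        Finset.le_sup' (f := fun p : Fin (m+1) × Bool =>
          ∑ i, (if ε i then (1:ℝ) else -1) * ((if p.2 then (1:ℝ) else -1) * V i p.1))
          (mem_univ ((k, false) : Fin (m+1) × Bool))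
      have e1 : (∑ i, (if ε i then (1:ℝ) else -1) * ((if (true:Bool) then (1:ℝ) else -1) * V i k))
          = w k := by
        rw [hw]; exact Finset.sum_congr rfl fun i _ => by norm_num
      have e2 : (∑ i, (if ε i then (1:ℝ) else -1) * ((if (false:Bool) then (1:ℝ) else -1) * V i k))
          = -w k := by
        rw [hw, ← Finset.sum_neg_distrib]
        refine Finset.sum_congr rfl fun i _ => by norm_num
      rw [e1] at hp1; rw [e2] at hp2
      rcases abs_cases (w k) with ⟨he, -⟩ | ⟨he, -⟩ <;> rw [he]
      · exact hp1
      · exact hp2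
    have hD0 : 0 ≤ Dm ε := le_trans (abs_nonneg _) (hwk ⟨0, Nat.succ_pos m⟩)
    calc ∑ i, (if ε i then (1:ℝ) else -1) * t i u = ∑ k, u.1 k * w k := hswap
      _ ≤ ∑ k, |u.1 k| * Dm ε := by
          refine Finset.sum_le_sum fun k _ => ?_
          calc u.1 k * w k ≤ |u.1 k * w k| := le_abs_self _
            _ = |u.1 k| * |w k| := abs_mul _ _
            _ ≤ |u.1 k| * Dm ε := mul_le_mul_of_nonneg_left (hwk k) (abs_nonneg _)
      _ = (∑ k, |u.1 k|) * Dm ε := (Finset.sum_mul _ _ _).symm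
      _ ≤ 1 * Dm ε := mul_le_mul_of_nonneg_right u.2 hD0
      _ = Dm ε := one_mul _
  -- Fact 5 : Massart's finite-class lemma
  have hJcard : Fintype.card (Fin (m+1) × Bool) = 2 * m + 2 := by
    rw [Fintype.card_prod, Fintype.card_fin, Fintype.card_bool]
    omega
  have fact5 : (2 ^ M : ℝ)⁻¹ * ∑ ε : Fin M → Bool, Dm ε
      ≤ Real.sqrt (2 * M * Real.log (Fintype.card (Fin (m+1) × Bool))) := by
    refine massart hM (c := fun (i : Fin M) (p : Fin (m+1) × Bool) =>
      (if p.2 then (1:ℝ) else -1) * V i p.1) ?_ ?_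
    · intro i p
      rw [abs_mul]
      have h1 : |(if p.2 then (1:ℝ) else -1)| = 1 := by
        rcases Bool.dichotomy p.2 with h | h <;> simp [h]
      rw [h1, one_mul]
      exact hVabs i p.1
    · rw [hJcard]; omega
  -- Put everything together
  set L : ℝ := Real.log (2 * (m:ℝ) + 2) with hL_def
  have hL0 : 0 ≤ L := Real.log_nonneg (by
    have hm0 : (0:ℝ) ≤ (m:ℝ) := Nat.cast_nonneg m
    linarith)
  have hlogcard : Real.log ((Fintype.card (Fin (m+1) × Bool) : ℝ)) = L := by
    rw [hJcard, hL_def]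
    congr 1
    push_cast
    ring
  have hMR : (0:ℝ) < M := by exact_mod_cast hM
  have chain : (2 ^ M : ℝ)⁻¹ * ∑ ε : Fin M → Bool,
        (⨆ f ∈ FQ, |(M : ℝ)⁻¹ * ∑ i, (if ε i then (1 : ℝ) else -1) * f (x i)|)
      ≤ 2 * Q * (M:ℝ)⁻¹ * Real.sqrt (2 * M * L) := by
    have c1 : ∑ ε : Fin M → Bool,
          (⨆ f ∈ FQ, |(M : ℝ)⁻¹ * ∑ i, (if ε i then (1 : ℝ) else -1) * f (x i)|)
        ≤ ∑ ε : Fin M → Bool, Q * (M:ℝ)⁻¹ * S ε :=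
      Finset.sum_le_sum fun ε _ => fact1 ε
    have c2 : ∑ ε : Fin M → Bool, S ε ≤ 2 * ∑ ε : Fin M → Bool, T ε := by
      calc ∑ ε : Fin M → Bool, S ε
          ≤ ∑ ε : Fin M → Bool, (T ε + T (fun i => !ε i)) :=
            Finset.sum_le_sum fun ε _ => fact2 ε
        _ = ∑ ε : Fin M → Bool, T ε + ∑ ε : Fin M → Bool, T (fun i => !ε i) :=
            Finset.sum_add_distrib
        _ = 2 * ∑ ε : Fin M → Bool, T ε := by rw [hflip]; ring
    have c3 : ∑ ε : Fin M → Bool, Tlin ε ≤ ∑ ε : Fin M → Bool, Dm ε :=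
      Finset.sum_le_sum fun ε _ => fact4 ε
    have c4 : (2 ^ M : ℝ)⁻¹ * ∑ ε : Fin M → Bool, Dm ε ≤ Real.sqrt (2 * M * L) := by
      rw [← hlogcard]
      exact fact5
    have hpow : (0:ℝ) < (2 ^ M : ℝ)⁻¹ := by positivity
    calc (2 ^ M : ℝ)⁻¹ * ∑ ε : Fin M → Bool,
          (⨆ f ∈ FQ, |(M : ℝ)⁻¹ * ∑ i, (if ε i then (1 : ℝ) else -1) * f (x i)|)
        ≤ (2 ^ M : ℝ)⁻¹ * ∑ ε : Fin M → Bool, Q * (M:ℝ)⁻¹ * S ε :=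
          mul_le_mul_of_nonneg_left c1 hpow.le
      _ = Q * (M:ℝ)⁻¹ * ((2 ^ M : ℝ)⁻¹ * ∑ ε : Fin M → Bool, S ε) := by
          rw [← Finset.mul_sum]; ring
      _ ≤ Q * (M:ℝ)⁻¹ * ((2 ^ M : ℝ)⁻¹ * (2 * ∑ ε : Fin M → Bool, T ε)) := by
          refine mul_le_mul_of_nonneg_left (mul_le_mul_of_nonneg_left c2 hpow.le) ?_
          positivity
      _ ≤ Q * (M:ℝ)⁻¹ * ((2 ^ M : ℝ)⁻¹ * (2 * ∑ ε : Fin M → Bool, Tlin ε)) := by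
          refine mul_le_mul_of_nonneg_left (mul_le_mul_of_nonneg_left ?_ hpow.le) (by positivity)
          linarith [fact3]
      _ ≤ Q * (M:ℝ)⁻¹ * ((2 ^ M : ℝ)⁻¹ * (2 * ∑ ε : Fin M → Bool, Dm ε)) := by
          refine mul_le_mul_of_nonneg_left (mul_le_mul_of_nonneg_left ?_ hpow.le) (by positivity)
          linarith [c3]
      _ = 2 * Q * (M:ℝ)⁻¹ * ((2 ^ M : ℝ)⁻¹ * ∑ ε : Fin M → Bool, Dm ε) := by ring
      _ ≤ 2 * Q * (M:ℝ)⁻¹ * Real.sqrt (2 * M * L) := by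
          refine mul_le_mul_of_nonneg_left c4 (by positivity)
  have hsqrt : Real.sqrt (2 * M * L) = Real.sqrt (2 * L / M) * M := by
    rw [show 2 * (M:ℝ) * L = (2 * L / M) * (M:ℝ)^2 by field_simp,
      Real.sqrt_mul (by positivity), Real.sqrt_sq (Nat.cast_nonneg M)]
  have hfinal : 2 * Q * (M:ℝ)⁻¹ * Real.sqrt (2 * M * L)
      = 2 * Q * Real.sqrt (2 * L / M) := by
    rw [hsqrt]
    field_simp
  rw [hL_def] at hfinal
  calc (2 ^ M : ℝ)⁻¹ * ∑ ε : Fin M → Bool,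
        (⨆ f ∈ FQ, |(M : ℝ)⁻¹ * ∑ i, (if ε i then (1 : ℝ) else -1) * f (x i)|)
      ≤ 2 * Q * (M:ℝ)⁻¹ * Real.sqrt (2 * M * L) := chain
    _ = 2 * Q * Real.sqrt (2 * Real.log (2 * (m:ℝ) + 2) / M) := hfinal
end

section
/- Let K ⊂ R^m be compact and let g : K → R^N be continuous. Then for every ε > 0 there exist n ∈ N, a matrix W¹ ∈ R^{n×m}, a vector b¹ ∈ R^n, a matrix W² ∈ R^{N×n}, and a vector b² ∈ R^N such that sup_{x ∈ K} | W² σ(W¹x + b¹) + b² − g(x) |₂ < ε, where σ is the ReLU function applied componentwise. That is, two-layer ReLU neural networks are dense in C(K; R^N) with respect to the uniform norm. -/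
open Matrix

namespace Stmt17Aux


lemma oneD (h : ℝ → ℝ) (hc : Continuous h) (A B ε : ℝ) (hAB : A < B) (hε : 0 < ε) :
    ∃ (ι : Type) (_ : Fintype ι) (c p : ι → ℝ) (d : ℝ),
      ∀ t ∈ Set.Icc A B, |(∑ j, c j * max (t - p j) 0) + d - h t| ≤ ε := by
  obtain ⟨δ, hδ, hu⟩ := Metric.uniformContinuousOn_iff.1
    (isCompact_Icc.uniformContinuousOn_of_continuous (hc.continuousOn (s := Set.Icc A B)))
    (ε/2) (by linarith)
  have hδ2 : 0 < δ/2 := by linarith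
  set n : ℕ := ⌈(B - A)/(δ/2)⌉₊ + 1 with hn
  have hn1 : 1 ≤ n := Nat.le_add_left 1 _
  have hnpos : (0:ℝ) < n := by positivity
  set Δ : ℝ := (B - A)/n with hΔ
  have hΔpos : 0 < Δ := div_pos (by linarith) hnpos
  have hΔδ : Δ ≤ δ/2 := by
    rw [hΔ, div_le_iff₀ hnpos]
    have h1 : (B - A)/(δ/2) ≤ (n:ℝ) := by
      calc (B - A)/(δ/2) ≤ (⌈(B - A)/(δ/2)⌉₊ : ℝ) := Nat.le_ceil _
        _ ≤ (n:ℝ) := by exact_mod_cast Nat.le_succ _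
    calc B - A = (B - A)/(δ/2) * (δ/2) := by field_simp
      _ ≤ (n:ℝ) * (δ/2) := by nlinarith
      _ = δ/2 * n := by ring
  set T : ℕ → ℝ := fun j => A + j * Δ with hT
  have hT0 : T 0 = A := by simp [hT]
  have hTn : T n = B := by
    simp only [hT, hΔ]; field_simp; ring
  have hTmono : ∀ {i j : ℕ}, i ≤ j → T i ≤ T j := by
    intro i j hij
    simp only [hT]
    have : (i:ℝ) ≤ j := by exact_mod_cast hij
    nlinarith
  have hTsucc : ∀ j : ℕ, T (j+1) - T j = Δ := by
    intro j; simp only [hT]; push_cast; ring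
  have hTk' : ∀ (k:ℕ) (t:ℝ), (k:ℝ) * Δ ≤ t - A → T k ≤ t := by
    intro k t hh; simp only [hT]; linarith
  have hTk1' : ∀ (k:ℕ) (t:ℝ), t - A ≤ ((k:ℝ)+1) * Δ → t ≤ T (k+1) := by
    intro k t hh; simp only [hT]; push_cast; linarith
  have hTIcc : ∀ j : ℕ, j ≤ n → T j ∈ Set.Icc A B := by
    intro j hj
    constructor
    · rw [← hT0]; exact hTmono (Nat.zero_le j)
    · rw [← hTn]; exact hTmono hj
  set M : ℕ → ℝ := fun j => (h (T (j+1)) - h (T j))/Δ with hM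
  have hMΔ : ∀ j, M j * Δ = h (T (j+1)) - h (T j) := by
    intro j; rw [hM]; exact div_mul_cancel₀ _ (ne_of_gt hΔpos)
  have hMabs : ∀ j, |M j| = |h (T (j+1)) - h (T j)| / Δ := by
    intro j; rw [hM, abs_div, abs_of_pos hΔpos]
  clear_value M
  clear hM
  clear_value T
  clear hT
  refine ⟨Fin n ⊕ Fin n, inferInstance,
    Sum.elim (fun j : Fin n => M j) (fun j : Fin n => -(M j)),
    Sum.elim (fun j : Fin n => T j) (fun j : Fin n => T (j+1)), h A, ?_⟩
  intro t ht
  obtain ⟨htA, htB⟩ := ht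
  have hsum : (∑ j : Fin n ⊕ Fin n,
      Sum.elim (fun j : Fin n => M j) (fun j : Fin n => -(M j)) j *
        max (t - Sum.elim (fun j : Fin n => T j) (fun j : Fin n => T (j+1)) j) 0)
      = ∑ j ∈ Finset.range n, (M j * max (t - T j) 0 - M j * max (t - T (j+1)) 0) := by
    rw [Fintype.sum_sum_type]
    simp only [Sum.elim_inl, Sum.elim_inr, neg_mul]
    rw [Fin.sum_univ_eq_sum_range (fun j => M j * max (t - T j) 0),
        Fin.sum_univ_eq_sum_range (fun j => -(M j * max (t - T (j+1)) 0)),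
        ← Finset.sum_add_distrib]
    apply Finset.sum_congr rfl
    intro j _; ring
  rw [hsum]
  set u : ℝ := (t - A)/Δ with hu'
  have hu0 : 0 ≤ u := div_nonneg (by linarith) hΔpos.le
  set k : ℕ := min (n-1) ⌊u⌋₊ with hk
  have hkn : k < n := lt_of_le_of_lt (min_le_left _ _) (Nat.sub_lt hn1 one_pos)
  have hkmin : k ≤ ⌊u⌋₊ := min_le_right _ _
  have hku : (k:ℝ) ≤ u := by
    calc (k:ℝ) ≤ (⌊u⌋₊:ℝ) := by exact_mod_cast hkmin
      _ ≤ u := Nat.floor_le hu0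
  have huk1 : u ≤ (k:ℝ) + 1 := by
    rcases le_or_gt (⌊u⌋₊) (n-1) with hle | hlt
    · have hkeq : k = ⌊u⌋₊ := min_eq_right hle
      rw [hkeq]
      exact (Nat.lt_floor_add_one u).le
    · have hkeq : k = n - 1 := min_eq_left hlt.le
      have hun : u ≤ (n:ℝ) := by
        rw [hu', div_le_iff₀ hΔpos, hΔ]
        have hx : (B - A)/(n:ℝ) * n = B - A := by field_simp
        nlinarith [hx]
      have hcast : ((n - 1 : ℕ) : ℝ) = (n:ℝ) - 1 := by
        rw [Nat.cast_sub hn1]; norm_num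
      rw [hkeq, hcast]
      linarith
  have huΔ : u * Δ = t - A := by rw [hu']; field_simp
  have htk : T k ≤ t := by
    refine hTk' k t ?_
    have h1 : (k:ℝ) * Δ ≤ u * Δ := by nlinarith
    linarith [huΔ ▸ h1]
  have htk1 : t ≤ T (k+1) := by
    refine hTk1' k t ?_
    have h1 : u * Δ ≤ ((k:ℝ) + 1) * Δ := by nlinarith
    linarith [huΔ ▸ h1]
  clear_value k u
  clear hk hu'
  have hsplit := Finset.sum_range_add_sum_Ico
    (fun j => M j * max (t - T j) 0 - M j * max (t - T (j+1)) 0) (Nat.succ_le_of_lt hkn)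
  have htail : ∑ j ∈ Finset.Ico (k+1) n,
      (M j * max (t - T j) 0 - M j * max (t - T (j+1)) 0) = 0 := by
    apply Finset.sum_eq_zero
    intro j hj
    have hj1 : k + 1 ≤ j := (Finset.mem_Ico.1 hj).1
    have h1 : t - T j ≤ 0 := by have := hTmono hj1; linarith
    have h2 : t - T (j+1) ≤ 0 := by
      have := hTmono (le_trans hj1 (Nat.le_succ j)); linarith
    rw [max_eq_right h1, max_eq_right h2]; ring
  have hhead : ∑ j ∈ Finset.range (k+1),
      (M j * max (t - T j) 0 - M j * max (t - T (j+1)) 0)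
      = (h (T k) - h A) + M k * (t - T k) := by
    rw [Finset.sum_range_succ]
    have hinit : ∑ j ∈ Finset.range k,
        (M j * max (t - T j) 0 - M j * max (t - T (j+1)) 0)
        = h (T k) - h A := by
      have hcong : ∀ j ∈ Finset.range k,
          (M j * max (t - T j) 0 - M j * max (t - T (j+1)) 0)
          = h (T (j+1)) - h (T j) := by
        intro j hj
        have hjk : j + 1 ≤ k := Nat.succ_le_of_lt (Finset.mem_range.1 hj)
        have h2 : 0 ≤ t - T (j+1) := by
          have := hTmono (le_trans hjk (le_refl k)); linarith [hTmono hjk]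
        have h1 : 0 ≤ t - T j := by
          have := hTsucc j; linarith
        rw [max_eq_left h1, max_eq_left h2]
        have he : M j * (t - T j) - M j * (t - T (j+1)) = M j * Δ := by
          rw [← hTsucc j]; ring
        rw [he]
        exact hMΔ j
      rw [Finset.sum_congr rfl hcong, Finset.sum_range_sub (fun j => h (T j)) k, hT0]
    rw [hinit]
    have h1 : 0 ≤ t - T k := by linarith
    have h2 : t - T (k+1) ≤ 0 := by linarith
    rw [max_eq_left h1, max_eq_right h2]
    ring
  rw [← hsplit, htail, hhead, add_zero]
  -- final estimate
  have hTkmem : T k ∈ Set.Icc A B := hTIcc k hkn.le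
  have hTk1mem : T (k+1) ∈ Set.Icc A B := hTIcc (k+1) (Nat.succ_le_of_lt hkn)
  have htmem : t ∈ Set.Icc A B := ⟨htA, htB⟩
  have hd1 : |h (T k) - h t| ≤ ε/2 := by
    have hdist : dist (T k) t < δ := by
      rw [Real.dist_eq, abs_sub_comm, abs_of_nonneg (by linarith)]
      have := hTsucc k; linarith
    have := hu (T k) hTkmem t htmem hdist
    rw [Real.dist_eq] at this; linarith
  have hd2 : |h (T (k+1)) - h (T k)| ≤ ε/2 := by
    have hdist : dist (T (k+1)) (T k) < δ := by
      rw [Real.dist_eq, hTsucc k, abs_of_nonneg hΔpos.le]; linarith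
    have := hu (T (k+1)) hTk1mem (T k) hTkmem hdist
    rw [Real.dist_eq] at this; linarith
  have hMk : |M k| * (t - T k) ≤ ε/2 := by
    have hMk' : |M k| ≤ (ε/2)/Δ := by
      rw [hMabs]
      gcongr
    have h1 : t - T k ≤ Δ := by have := hTsucc k; linarith
    calc |M k| * (t - T k) ≤ (ε/2)/Δ * Δ := by
          apply mul_le_mul hMk' h1 (by linarith) (by positivity)
      _ = ε/2 := div_mul_cancel₀ _ (ne_of_gt hΔpos)
  calc |(h (T k) - h A) + M k * (t - T k) + h A - h t|
      = |(h (T k) - h t) + M k * (t - T k)| := by congr 1; ring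
    _ ≤ |h (T k) - h t| + |M k * (t - T k)| := abs_add_le _ _
    _ = |h (T k) - h t| + |M k| * (t - T k) := by
        rw [abs_mul, abs_of_nonneg (by linarith : (0:ℝ) ≤ t - T k)]
    _ ≤ ε/2 + ε/2 := add_le_add hd1 hMk
    _ = ε := by ring


variable {m : ℕ}

/-- scalar-output two-layer ReLU network, exactly representable on `K`. -/
def IsNet (K : Set (Fin m → ℝ)) (f : (Fin m → ℝ) → ℝ) : Prop :=
  ∃ (ι : Type) (_ : Fintype ι) (w : ι → Fin m → ℝ) (a c : ι → ℝ) (d : ℝ),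
    ∀ x ∈ K, f x = (∑ j, c j * max ((∑ k, w j k * x k) + a j) 0) + d

variable {K : Set (Fin m → ℝ)}

/-- approximable by nets, as a predicate on continuous functions on K. -/
def ApproxC (K : Set (Fin m → ℝ)) (φ : C(K, ℝ)) : Prop :=
  ∀ ε : ℝ, 0 < ε → ∃ F : (Fin m → ℝ) → ℝ, IsNet K F ∧ ∀ x : K, |F x - φ x| ≤ ε

lemma approxC_zero : ApproxC K (0 : C(K, ℝ)) := by
  intro ε hε
  refine ⟨fun _ => 0, ⟨PEmpty, inferInstance, fun j => j.elim, fun j => j.elim,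
    fun j => j.elim, 0, by intro x _; simp⟩, by intro x; simp [hε.le]⟩

lemma approxC_add {φ ψ : C(K, ℝ)} (hφ : ApproxC K φ) (hψ : ApproxC K ψ) :
    ApproxC K (φ + ψ) := by
  intro ε hε
  obtain ⟨F, ⟨ι₁, _, w₁, a₁, c₁, d₁, hF⟩, hFa⟩ := hφ (ε/2) (by linarith)
  obtain ⟨G, ⟨ι₂, _, w₂, a₂, c₂, d₂, hG⟩, hGa⟩ := hψ (ε/2) (by linarith)
  refine ⟨F + G, ⟨ι₁ ⊕ ι₂, inferInstance, Sum.elim w₁ w₂, Sum.elim a₁ a₂,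
    Sum.elim c₁ c₂, d₁ + d₂, ?_⟩, ?_⟩
  · intro x hx
    rw [Fintype.sum_sum_type]
    simp only [Sum.elim_inl, Sum.elim_inr, Pi.add_apply, hF x hx, hG x hx]
    ring
  · intro x
    have h1 := hFa x
    have h2 := hGa x
    simp only [ContinuousMap.add_apply, Pi.add_apply]
    have : F x + G x - (φ x + ψ x) = (F x - φ x) + (G x - ψ x) := by ring
    rw [this]
    calc |(F x - φ x) + (G x - ψ x)| ≤ |F x - φ x| + |G x - ψ x| := abs_add_le _ _
      _ ≤ ε/2 + ε/2 := add_le_add h1 h2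
      _ = ε := by ring

lemma approxC_smul {φ : C(K, ℝ)} (r : ℝ) (hφ : ApproxC K φ) :
    ApproxC K (r • φ) := by
  intro ε hε
  rcases eq_or_ne r 0 with hr | hr
  · subst hr; simpa using approxC_zero (K := K) ε hε
  obtain ⟨F, ⟨ι, _, w, a, c, d, hF⟩, hFa⟩ := hφ (ε/|r|) (by positivity)
  refine ⟨fun x => r * F x, ⟨ι, inferInstance, w, a, fun j => r * c j, r * d, ?_⟩, ?_⟩
  · intro x hx
    simp only []
    rw [hF x hx, mul_add, Finset.mul_sum]
    congr 1
    apply Finset.sum_congr rfl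
    intro j _; ring
  · intro x
    have h1 := hFa x
    simp only [ContinuousMap.smul_apply, smul_eq_mul]
    have : r * F x - r * φ x = r * (F x - φ x) := by ring
    rw [this, abs_mul]
    calc |r| * |F x - φ x| ≤ |r| * (ε/|r|) := by
          apply mul_le_mul_of_nonneg_left h1 (abs_nonneg r)
      _ = ε := by field_simp

/-- exponential ridge function as a continuous map on K -/
noncomputable def expRidge (K : Set (Fin m → ℝ)) (w : Fin m → ℝ) : C(K, ℝ) :=
  ⟨fun x => Real.exp (∑ k, w k * x.1 k), by
    apply Real.continuous_exp.comp
    exact continuous_finset_sum _ fun k _ =>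
      (continuous_const.mul ((continuous_apply k).comp continuous_subtype_val))⟩

lemma expRidge_apply (w : Fin m → ℝ) (x : K) :
    expRidge K w x = Real.exp (∑ k, w k * x.1 k) := rfl

lemma expRidge_mul (w v : Fin m → ℝ) :
    expRidge K w * expRidge K v = expRidge K (w + v) := by
  ext x
  simp only [ContinuousMap.mul_apply, expRidge_apply, ← Real.exp_add]
  congr 1
  rw [← Finset.sum_add_distrib]
  apply Finset.sum_congr rfl
  intro k _
  simp [Pi.add_apply]; ring

lemma expRidge_zero : expRidge K (0 : Fin m → ℝ) = 1 := by
  ext x; simp [expRidge_apply]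

/-- the submonoid of exponential ridge functions -/
noncomputable def expSubmonoid (K : Set (Fin m → ℝ)) : Submonoid C(K, ℝ) where
  carrier := Set.range (expRidge K)
  mul_mem' := by
    rintro _ _ ⟨w, rfl⟩ ⟨v, rfl⟩
    exact ⟨w + v, (expRidge_mul w v).symm⟩
  one_mem' := ⟨0, expRidge_zero⟩

lemma separates :
    (Algebra.adjoin ℝ (Set.range (expRidge K) : Set C(K, ℝ))).SeparatesPoints := by
  intro x y hxy
  have hxy' : (x : Fin m → ℝ) ≠ y := fun h => hxy (Subtype.ext h)
  obtain ⟨k, hk⟩ : ∃ k, (x : Fin m → ℝ) k ≠ y.1 k := by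
    by_contra hcon
    push_neg at hcon
    exact hxy' (funext hcon)
  refine ⟨⇑(expRidge K (Pi.single k 1)),
    ⟨expRidge K (Pi.single k 1), Algebra.subset_adjoin ⟨Pi.single k 1, rfl⟩, rfl⟩, ?_⟩
  simp only [expRidge_apply]
  intro heq
  have := Real.exp_injective heq
  have hx : ∑ j, (Pi.single k 1 : Fin m → ℝ) j * x.1 j = x.1 k := by
    rw [Finset.sum_eq_single k]
    · simp
    · intro b _ hb; simp [Pi.single_apply, hb.symm]
    · simp
  have hy : ∑ j, (Pi.single k 1 : Fin m → ℝ) j * y.1 j = y.1 k := by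
    rw [Finset.sum_eq_single k]
    · simp
    · intro b _ hb; simp [Pi.single_apply, hb.symm]
    · simp
  rw [hx, hy] at this
  exact hk this

lemma ridgeBound (hK : IsCompact K) (w : Fin m → ℝ) :
    ∃ R : ℝ, 0 < R ∧ ∀ x ∈ K, (∑ k, w k * x k) ∈ Set.Icc (-R) R := by
  obtain ⟨r, hr⟩ := hK.isBounded.subset_closedBall 0
  set r' : ℝ := max r 0 with hr'
  have hr'0 : 0 ≤ r' := le_max_right _ _
  refine ⟨(∑ k, |w k|) * r' + 1, by positivity, ?_⟩
  intro x hx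
  have hxnorm : ‖x‖ ≤ r' := by
    have := hr hx
    rw [Metric.mem_closedBall, dist_zero_right] at this
    exact le_trans this (le_max_left _ _)
  have hbound : |∑ k, w k * x k| ≤ (∑ k, |w k|) * r' := by
    calc |∑ k, w k * x k| ≤ ∑ k, |w k * x k| := Finset.abs_sum_le_sum_abs _ _
      _ ≤ ∑ k, |w k| * r' := by
          apply Finset.sum_le_sum
          intro k _
          rw [abs_mul]
          apply mul_le_mul_of_nonneg_left _ (abs_nonneg _)
          exact le_trans (norm_le_pi_norm x k) hxnorm
      _ = (∑ k, |w k|) * r' := by rw [← Finset.sum_mul]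
  rw [abs_le] at hbound
  constructor <;> [linarith [hbound.1]; linarith [hbound.2]]

lemma approxC_expRidge (hK : IsCompact K) (w : Fin m → ℝ) :
    ApproxC K (expRidge K w) := by
  intro ε hε
  obtain ⟨R, hR, hmem⟩ := ridgeBound hK w
  obtain ⟨ι, _, c, p, d, hnet⟩ :=
    oneD Real.exp Real.continuous_exp (-R) R ε (by linarith) hε
  refine ⟨fun x => (∑ j, c j * max ((∑ k, w k * x k) - p j) 0) + d,
    ⟨ι, inferInstance, fun _ => w, fun j => -(p j), c, d, ?_⟩, ?_⟩
  · intro x _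
    show (∑ j, c j * max ((∑ k, w k * x k) - p j) 0) + d
        = (∑ j, c j * max ((∑ k, w k * x k) + -(p j)) 0) + d
    simp [sub_eq_add_neg]
  · intro x
    have hx := hmem x.1 x.2
    have := hnet (∑ k, w k * x.1 k) hx
    simpa [expRidge_apply] using this

lemma approxC_of_mem_span {φ : C(K, ℝ)} (hK : IsCompact K)
    (hφ : φ ∈ Submodule.span ℝ (Set.range (expRidge K))) : ApproxC K φ := by
  induction hφ using Submodule.span_induction with
  | mem f hf => obtain ⟨w, rfl⟩ := hf; exact approxC_expRidge hK w
  | zero => exact approxC_zero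
  | add f g _ _ hf hg => exact approxC_add hf hg
  | smul r f _ hf => exact approxC_smul r hf

/-- Every continuous function on K is uniformly approximable by nets. -/
lemma approxC_all (hK : IsCompact K) (φ : C(K, ℝ)) : ApproxC K φ := by
  haveI : CompactSpace K := isCompact_iff_compactSpace.mp hK
  intro ε hε
  set A := Algebra.adjoin ℝ (Set.range (expRidge K) : Set C(K, ℝ)) with hA
  have htop : A.topologicalClosure = ⊤ :=
    ContinuousMap.subalgebra_topologicalClosure_eq_top_of_separatesPoints A separates
  have hmem : φ ∈ closure (A : Set C(K, ℝ)) := by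
    have : φ ∈ A.topologicalClosure := by rw [htop]; trivial
    exact this
  obtain ⟨ψ, hψA, hψd⟩ := Metric.mem_closure_iff.1 hmem (ε/2) (by linarith)
  have hspan : ψ ∈ Submodule.span ℝ (Set.range (expRidge K)) := by
    have h3 : ψ ∈ Subalgebra.toSubmodule A := hψA
    rw [hA, Algebra.adjoin_eq_span] at h3
    have h4 : Submonoid.closure (Set.range (expRidge K)) = expSubmonoid K :=
      Submonoid.closure_eq (expSubmonoid K)
    rw [h4] at h3
    exact h3
  obtain ⟨F, hFnet, hFa⟩ := approxC_of_mem_span hK hspan (ε/2) (by linarith)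
  refine ⟨F, hFnet, ?_⟩
  intro x
  have h1 := hFa x
  have h2 : |ψ x - φ x| ≤ ε/2 := by
    have := ContinuousMap.dist_apply_le_dist (f := ψ) (g := φ) x
    rw [Real.dist_eq] at this
    have hd : dist ψ φ ≤ ε/2 := by rw [dist_comm]; linarith
    linarith
  calc |F x - φ x| = |(F x - ψ x) + (ψ x - φ x)| := by ring_nf
    _ ≤ |F x - ψ x| + |ψ x - φ x| := abs_add_le _ _
    _ ≤ ε/2 + ε/2 := add_le_add h1 h2
    _ = ε := by ring

/-- componentwise approximation of a continuous vector-valued function. -/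
lemma approx_component {N : ℕ} (hK : IsCompact K)
    (g : (Fin m → ℝ) → Fin N → ℝ) (hg : ContinuousOn g K) (i : Fin N)
    (ε : ℝ) (hε : 0 < ε) :
    ∃ F : (Fin m → ℝ) → ℝ, IsNet K F ∧ ∀ x ∈ K, |F x - g x i| ≤ ε := by
  have hcont : Continuous (fun x : K => g x.1 i) :=
    (continuous_apply i).comp hg.restrict
  obtain ⟨F, hFnet, hFa⟩ := approxC_all hK ⟨fun x : K => g x.1 i, hcont⟩ ε hε
  exact ⟨F, hFnet, fun x hx => hFa ⟨x, hx⟩⟩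

end Stmt17Aux

open Stmt17Aux in
/-- Universal approximation: let `K ⊂ ℝ^m` be compact and `g : K → ℝ^N` continuous. Then for
every `ε > 0` there exist `n ∈ ℕ`, `W¹ ∈ ℝ^{n×m}`, `b¹ ∈ ℝ^n`, `W² ∈ ℝ^{N×n}`, `b² ∈ ℝ^N`
with `sup_{x ∈ K} |W² σ(W¹x + b¹) + b² − g(x)|₂ < ε`, where `σ` is the componentwise ReLU;
i.e. two-layer ReLU networks are dense in `C(K; ℝ^N)` for the uniform norm. -/
theorem stmt17 {m N : ℕ} (K : Set (Fin m → ℝ)) (hK : IsCompact K)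
    (g : (Fin m → ℝ) → Fin N → ℝ) (hg : ContinuousOn g K) :
    ∀ ε : ℝ, 0 < ε →
      ∃ (n : ℕ) (W1 : Matrix (Fin n) (Fin m) ℝ) (b1 : Fin n → ℝ)
        (W2 : Matrix (Fin N) (Fin n) ℝ) (b2 : Fin N → ℝ),
        ∀ x ∈ K,
          euclNorm (W2.mulVec (fun j => max (W1.mulVec x j + b1 j) 0) + b2 - g x) < ε := by
  intro ε hε
  set ε' : ℝ := ε / (2 * (N + 1)) with hε'
  have hε'pos : 0 < ε' := by positivity
  have hch : ∀ i : Fin N, ∃ F : (Fin m → ℝ) → ℝ, IsNet K F ∧ ∀ x ∈ K, |F x - g x i| ≤ ε' :=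
    fun i => approx_component hK g hg i ε' hε'pos
  choose F hFnet hFa using hch
  choose ι inst w a c d hrep using hFnet
  haveI hFin : ∀ i, Fintype (ι i) := inst
  set n : ℕ := Fintype.card ((i : Fin N) × ι i) with hn
  set e : Fin n ≃ ((i : Fin N) × ι i) := (Fintype.equivFin ((i : Fin N) × ι i)).symm with he
  refine ⟨n, fun j k => w (e j).1 (e j).2 k, fun j => a (e j).1 (e j).2,
    fun i j => if (e j).1 = i then c (e j).1 (e j).2 else 0, fun i => d i, ?_⟩
  intro x hx
  set W1 : Matrix (Fin n) (Fin m) ℝ := fun j k => w (e j).1 (e j).2 k with hW1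
  set b1 : Fin n → ℝ := fun j => a (e j).1 (e j).2 with hb1
  set W2 : Matrix (Fin N) (Fin n) ℝ :=
    fun i j => if (e j).1 = i then c (e j).1 (e j).2 else 0 with hW2
  set b2 : Fin N → ℝ := fun i => d i with hb2
  set ν : Fin n → ℝ := fun j => max (W1.mulVec x j + b1 j) 0 with hν
  have hcomp : ∀ i : Fin N, (W2.mulVec ν + b2 - g x) i = F i x - g x i := by
    intro i
    have hmv : W2.mulVec ν i
        = ∑ j : Fin n, (if (e j).1 = i then c (e j).1 (e j).2 else 0)
            * max ((∑ k, w (e j).1 (e j).2 k * x k) + a (e j).1 (e j).2) 0 := by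
      simp only [Matrix.mulVec, dotProduct, hW2, hν, hW1, hb1]
    have hms : (∑ j : Fin n, (if (e j).1 = i then c (e j).1 (e j).2 else 0)
            * max ((∑ k, w (e j).1 (e j).2 k * x k) + a (e j).1 (e j).2) 0)
        = ∑ s : (i : Fin N) × ι i,
            (if s.1 = i then c s.1 s.2 else 0)
              * max ((∑ k, w s.1 s.2 k * x k) + a s.1 s.2) 0 :=
      Equiv.sum_comp e (fun s : (i : Fin N) × ι i =>
          (if s.1 = i then c s.1 s.2 else 0)
            * max ((∑ k, w s.1 s.2 k * x k) + a s.1 s.2) 0)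
    rw [hms] at hmv
    have hsig : (∑ s : (i : Fin N) × ι i,
            (if s.1 = i then c s.1 s.2 else 0)
              * max ((∑ k, w s.1 s.2 k * x k) + a s.1 s.2) 0)
        = ∑ u : ι i, c i u * max ((∑ k, w i u k * x k) + a i u) 0 := by
      rw [← Finset.univ_sigma_univ, Finset.sum_sigma]
      rw [Finset.sum_eq_single_of_mem i (Finset.mem_univ i)]
      · simp
      · intro b _ hb
        apply Finset.sum_eq_zero
        intro u _
        simp [hb]
    have hrepi := hrep i x hx
    simp only [Pi.add_apply, Pi.sub_apply, hmv, hsig, hb2]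
    rw [← sub_eq_iff_eq_add] at hrepi
    rw [show hFin i = inst i from Subsingleton.elim _ _]
    rw [← hrepi]
    ring
  have habs : ∀ i : Fin N, |(W2.mulVec ν + b2 - g x) i| ≤ ε' := by
    intro i; rw [hcomp i]; exact hFa i x hx
  -- Euclidean norm bound
  have h1 : euclNorm (W2.mulVec ν + b2 - g x) ≤ ∑ i, |(W2.mulVec ν + b2 - g x) i| := by
    unfold euclNorm
    have hsq : ∑ i, (W2.mulVec ν + b2 - g x) i ^ 2
        = ∑ i, |(W2.mulVec ν + b2 - g x) i| ^ 2 := by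
      apply Finset.sum_congr rfl; intro i _; rw [sq_abs]
    rw [hsq]
    calc Real.sqrt (∑ i, |(W2.mulVec ν + b2 - g x) i| ^ 2)
        ≤ Real.sqrt ((∑ i, |(W2.mulVec ν + b2 - g x) i|) ^ 2) := by
          apply Real.sqrt_le_sqrt
          exact Finset.sum_sq_le_sq_sum_of_nonneg (fun i _ => abs_nonneg _)
      _ = ∑ i, |(W2.mulVec ν + b2 - g x) i| := by
          apply Real.sqrt_sq
          exact Finset.sum_nonneg fun i _ => abs_nonneg _
  have h2 : (∑ i, |(W2.mulVec ν + b2 - g x) i|) ≤ (N : ℝ) * ε' := by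
    calc (∑ i, |(W2.mulVec ν + b2 - g x) i|) ≤ ∑ _i : Fin N, ε' :=
          Finset.sum_le_sum fun i _ => habs i
      _ = (N : ℝ) * ε' := by simp [Finset.sum_const, Finset.card_univ, mul_comm]
  have h3 : (N : ℝ) * ε' < ε := by
    have hq : ε' * (2 * ((N : ℝ) + 1)) = ε := by
      rw [hε']; field_simp
    have hN0 : (0 : ℝ) ≤ N := Nat.cast_nonneg N
    nlinarith
  calc euclNorm (W2.mulVec ν + b2 - g x) ≤ ∑ i, |(W2.mulVec ν + b2 - g x) i| := h1
    _ ≤ (N : ℝ) * ε' := h2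
    _ < ε := h3
end
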